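/- arXiv:1603.04140 — 6 statements merged into one kernel-verified Lean document; each statement's English description precedes it below -/
import Mathlib

section
/- (Proposition 2.) Condition C1 alone does not guarantee identifiability: there exist integers J and K, a Q-matrix Q satisfying condition C1, and two parameter pairs (Θ, p) and (Θ̄, p̄), each satisfying the model restrictions (R1) and (R2) with respect to Q, such that (Θ, p) ≠ (Θ̄, p̄) but P(R = r | Q, Θ, p) = P(R = r | Q, Θ̄, p̄) for every r ∈ {0,1}^J. -/
open Finset

/-- `u ⪰ v`: componentwise domination of binary vectors. -/
def dominates {n : ℕ} (u v : Fin n → Bool) : Prop := ∀ i, v i = true → u i = true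

instance {n : ℕ} (u v : Fin n → Bool) : Decidable (dominates u v) :=
  inferInstanceAs (Decidable (∀ i, v i = true → u i = true))

/-- The all-zeros attribute profile. -/
def allZero (K : ℕ) : Fin K → Bool := fun _ => false

/-- The all-ones attribute profile. -/
def allOne (K : ℕ) : Fin K → Bool := fun _ => true

/-- The `k`-th standard basis attribute profile `e_k`. -/
def basis {K : ℕ} (k : Fin K) : Fin K → Bool := fun i => decide (i = k)

/-- `P(R = r | Q, Θ, p) = Σ_α p_α ∏_j θ_{j,α}^{r_j} (1-θ_{j,α})^{1-r_j}`. -/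
def respProb {J K : ℕ} (θ : Fin J → (Fin K → Bool) → ℝ) (p : (Fin K → Bool) → ℝ)
    (r : Fin J → Bool) : ℝ :=
  ∑ α : Fin K → Bool, p α * ∏ j, (if r j then θ j α else 1 - θ j α)

/-- The `(r, α)` entry of the T-matrix: `t_{r,α}(Θ) = ∏_{j : r_j = 1} θ_{j,α}`. -/
def tEntry {J K : ℕ} (θ : Fin J → (Fin K → Bool) → ℝ) (r : Fin J → Bool)
    (α : Fin K → Bool) : ℝ :=
  ∏ j, (if r j then θ j α else 1)

/-- The `r`-entry of the vector `T(Q,Θ) p`. -/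
def Tp {J K : ℕ} (θ : Fin J → (Fin K → Bool) → ℝ) (p : (Fin K → Bool) → ℝ)
    (r : Fin J → Bool) : ℝ :=
  ∑ α : Fin K → Bool, tEntry θ r α * p α

/-- All item parameters lie in the open unit interval. -/
def ThetaValid {J K : ℕ} (θ : Fin J → (Fin K → Bool) → ℝ) : Prop :=
  ∀ j α, θ j α ∈ Set.Ioo (0 : ℝ) 1

/-- A valid class distribution: every `p_α ∈ (0,1)` and `Σ_α p_α = 1`. -/
def PValid {K : ℕ} (p : (Fin K → Bool) → ℝ) : Prop :=
  (∀ α, p α ∈ Set.Ioo (0 : ℝ) 1) ∧ ∑ α : Fin K → Bool, p α = 1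

/-- Model restriction (R1) with respect to the Q-matrix `Q`. -/
def R1 {J K : ℕ} (Q : Fin J → Fin K → Bool) (θ : Fin J → (Fin K → Bool) → ℝ) : Prop :=
  ∀ j : Fin J,
    (∀ α α' : Fin K → Bool, dominates α (Q j) → dominates α' (Q j) → θ j α = θ j α') ∧
    (∀ αs α' : Fin K → Bool, dominates αs (Q j) → θ j α' ≤ θ j αs) ∧
    (∀ α' : Fin K → Bool, θ j (allZero K) ≤ θ j α')

/-- Model restriction (R2) with respect to the Q-matrix `Q`. -/
def R2 {J K : ℕ} (Q : Fin J → Fin K → Bool) (θ : Fin J → (Fin K → Bool) → ℝ) : Prop :=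
  ∀ (k : Fin K) (j : Fin J), Q j = basis k →
    ∀ α : Fin K → Bool, α k = false → θ j α < θ j (allOne K)

/-- Condition (C1): the first `2K` rows of `Q` form two copies of the identity. -/
def C1 {J K : ℕ} (Q : Fin J → Fin K → Bool) : Prop :=
  ∀ (k : Fin K) (h1 : (k : ℕ) < J) (h2 : K + (k : ℕ) < J),
    Q ⟨k, h1⟩ = basis k ∧ Q ⟨K + (k : ℕ), h2⟩ = basis k

/-- Condition (C2): for every `k`, `(θ_{j,e_k})_{j > 2K} ≠ (θ_{j,0})_{j > 2K}`. -/
def C2 {J K : ℕ} (θ : Fin J → (Fin K → Bool) → ℝ) : Prop :=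
  ∀ k : Fin K, ∃ j : Fin J, 2 * K ≤ (j : ℕ) ∧ θ j (basis k) ≠ θ j (allZero K)

lemma sum_pi1 (f : (Fin 1 → Bool) → ℝ) :
    ∑ α : Fin 1 → Bool, f α = f (fun _ => false) + f (fun _ => true) := by
  rw [← (Equiv.funUnique (Fin 1) Bool).symm.sum_comp f]
  rw [Fintype.sum_bool, add_comm]
  congr 1

/-- **Proposition 2.** Condition (C1) alone does not guarantee identifiability: there
exist a Q-matrix satisfying (C1) and two distinct restricted parameter pairs giving
the same response distribution. -/
theorem C1_not_sufficient_for_identifiability :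
    ∃ (J K : ℕ) (Q : Fin J → Fin K → Bool)
      (θ θb : Fin J → (Fin K → Bool) → ℝ) (p pb : (Fin K → Bool) → ℝ),
      2 * K ≤ J ∧ C1 Q ∧
      ThetaValid θ ∧ ThetaValid θb ∧ PValid p ∧ PValid pb ∧
      R1 Q θ ∧ R1 Q θb ∧ R2 Q θ ∧ R2 Q θb ∧
      ¬(θ = θb ∧ p = pb) ∧
      (∀ r : Fin J → Bool, respProb θ p r = respProb θb pb r)  := by
  refine ⟨2, 1, fun _ => basis 0,
    (fun _ α => if α 0 then (0.6:ℝ) else 0.4),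
    (fun _ α => if α 0 then (0.7:ℝ) else 0.45),
    (fun _ => (1/2:ℝ)),
    (fun α => if α 0 then (0.2:ℝ) else 0.8),
    by norm_num, ?_, ?_, ?_, ?_, ?_, ?_, ?_, ?_, ?_, ?_, ?_⟩
  · intro k h1 h2
    have hk : k = 0 := Subsingleton.elim _ _
    subst hk; exact ⟨rfl, rfl⟩
  · intro j α; cases h : α 0 <;> simp [h] <;> norm_num
  · intro j α; cases h : α 0 <;> simp [h] <;> norm_num
  · constructor
    · intro α; norm_num
    · rw [sum_pi1]; norm_num
  · constructor
    · intro α; cases h : α 0 <;> simp [h] <;> norm_num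
    · rw [sum_pi1]; norm_num
  · intro j
    refine ⟨?_, ?_, ?_⟩
    · intro α α' hα hα'
      have h1 : α 0 = true := hα 0 (by simp [basis])
      have h2 : α' 0 = true := hα' 0 (by simp [basis])
      simp [h1, h2]
    · intro αs α' hs
      have h1 : αs 0 = true := hs 0 (by simp [basis])
      cases h : α' 0 <;> simp [h1, h] <;> norm_num
    · intro α'
      cases h : α' 0 <;> simp [allZero, h] <;> norm_num
  · intro j
    refine ⟨?_, ?_, ?_⟩
    · intro α α' hα hα'
      have h1 : α 0 = true := hα 0 (by simp [basis])
      have h2 : α' 0 = true := hα' 0 (by simp [basis])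
      simp [h1, h2]
    · intro αs α' hs
      have h1 : αs 0 = true := hs 0 (by simp [basis])
      cases h : α' 0 <;> simp [h1, h] <;> norm_num
    · intro α'
      cases h : α' 0 <;> simp [allZero, h] <;> norm_num
  · intro k j _ α hα
    have hk : k = 0 := Subsingleton.elim _ _
    subst hk
    simp [allOne, hα]; norm_num
  · intro k j _ α hα
    have hk : k = 0 := Subsingleton.elim _ _
    subst hk
    simp [allOne, hα]; norm_num
  · rintro ⟨h, -⟩
    have := congrFun (congrFun h 0) (allOne 1)
    simp [allOne] at this
    norm_num at this
  · intro r
    unfold respProb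
    rw [sum_pi1, sum_pi1]
    simp only [Fin.prod_univ_two]
    cases h0 : r 0 <;> cases h1 : r 1 <;> simp [h0, h1] <;> ring
end

section
/- (Proposition 3.) For every θ* ∈ ℝ^J there exists a 2^J × 2^J real matrix D(θ*), depending only on θ*, such that: (i) the (r, r') entry of D(θ*) is 0 whenever r' ⋠ r and equals 1 when r' = r (so D(θ*) is lower triangular with respect to the partial order ⪯ on {0,1}^J, has unit diagonal, and is invertible); and (ii) for every J × 2^K real matrix Θ, T(Θ − θ* 1ᵀ) = D(θ*) T(Θ), where Θ − θ* 1ᵀ is the matrix obtained from Θ by subtracting θ*_j from every entry of row j. -/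
open Finset

/-- Per-entry factor of the transform matrix. -/
def dEnt (s : ℝ) (x y : Bool) : ℝ :=
  if x then (if y then 1 else -s) else (if y then 0 else 1)

/-- The transform matrix `D(s)`. -/
def Dmat {J : ℕ} (s : Fin J → ℝ) : Matrix (Fin J → Bool) (Fin J → Bool) ℝ :=
  fun r r' => ∏ j, dEnt (s j) (r j) (r' j)

lemma sum_prod_bool {J : ℕ} (f : Fin J → Bool → ℝ) :
    ∑ g : Fin J → Bool, ∏ j, f j (g j) = ∏ j, (f j false + f j true) := by
  have h : ∀ j, f j false + f j true = ∑ b : Bool, f j b := by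
    intro j; simp [Fintype.sum_bool, add_comm]
  simp only [h]
  rw [Finset.prod_univ_sum]
  rfl

lemma myProdIteEq {J : ℕ} (r r'' : Fin J → Bool) :
    (∏ j, (if r j = r'' j then (1 : ℝ) else 0)) = if r = r'' then 1 else 0 := by
  by_cases h : r = r''
  · simp [h]
  · obtain ⟨j, hj⟩ := Function.ne_iff.mp h
    rw [if_neg h]
    exact Finset.prod_eq_zero (Finset.mem_univ j) (by simp [hj])

lemma Dmat_mul_Dmat {J : ℕ} (s : Fin J → ℝ) :
    Dmat s * Dmat (-s) = 1 := by
  ext r r''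
  rw [Matrix.mul_apply]
  have step : ∑ r' : Fin J → Bool, Dmat s r r' * Dmat (-s) r' r'' =
      ∏ j, ((fun j b => dEnt (s j) (r j) b * dEnt (-(s j)) b (r'' j)) j false +
            (fun j b => dEnt (s j) (r j) b * dEnt (-(s j)) b (r'' j)) j true) := by
    rw [Finset.sum_congr rfl (fun r' _ => by
      simp only [Dmat, ← Finset.prod_mul_distrib, Pi.neg_apply]
      rfl)]
    exact sum_prod_bool (fun j b => dEnt (s j) (r j) b * dEnt (-(s j)) b (r'' j))
  rw [step]
  simp only []
  have h : ∀ j : Fin J,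
      dEnt (s j) (r j) false * dEnt (-(s j)) false (r'' j) +
        dEnt (s j) (r j) true * dEnt (-(s j)) true (r'' j) =
      if r j = r'' j then 1 else 0 := by
    intro j
    cases hr : r j <;> cases hr'' : r'' j <;> simp [dEnt] <;> ring
  simp only [h]
  rw [myProdIteEq]
  simp [Matrix.one_apply]

/-- **Proposition 3.** For every `θ* ∈ ℝ^J` there is an invertible matrix `D(θ*)`,
depending only on `θ*`, lower triangular with respect to `⪯` with unit diagonal, such
that `T(Θ - θ* 1ᵀ) = D(θ*) T(Θ)` for every `J × 2^K` matrix `Θ`. -/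
theorem exists_transform_matrix {J : ℕ} (θs : Fin J → ℝ) :
    ∃ D : Matrix (Fin J → Bool) (Fin J → Bool) ℝ,
      (∀ r r' : Fin J → Bool, ¬ dominates r r' → D r r' = 0) ∧
      (∀ r : Fin J → Bool, D r r = 1) ∧
      IsUnit D ∧
      (∀ (K : ℕ) (θ : Fin J → (Fin K → Bool) → ℝ) (r : Fin J → Bool)
          (α : Fin K → Bool),
        tEntry (fun j β => θ j β - θs j) r α =
          ∑ r' : Fin J → Bool, D r r' * tEntry θ r' α) := by
  refine ⟨Dmat θs, ?_, ?_, ?_, ?_⟩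
  · intro r r' h
    rw [dominates] at h
    push_neg at h
    obtain ⟨j, hj, hrj⟩ := h
    exact Finset.prod_eq_zero (Finset.mem_univ j)
      (by simp [dEnt, hj, Bool.eq_false_iff.mpr hrj])
  · intro r
    apply Finset.prod_eq_one
    intro j _
    cases h : r j <;> simp [dEnt]
  · exact (Matrix.isUnit_iff_isUnit_det _).mpr (Matrix.isUnit_det_of_right_inverse (Dmat_mul_Dmat θs))
  · intro K θ r α
    have step : ∑ r' : Fin J → Bool, Dmat θs r r' * tEntry θ r' α =
        ∏ j, ((fun j b => dEnt (θs j) (r j) b * (if b then θ j α else 1)) j false +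
              (fun j b => dEnt (θs j) (r j) b * (if b then θ j α else 1)) j true) := by
      rw [Finset.sum_congr rfl (fun r' _ => by
        simp only [Dmat, tEntry, ← Finset.prod_mul_distrib]
        rfl)]
      exact sum_prod_bool (fun j b => dEnt (θs j) (r j) b * (if b then θ j α else 1))
    rw [step, tEntry]
    simp only []
    apply Finset.prod_congr rfl
    intro j _
    cases h : r j <;> simp [dEnt] <;> ring
end

section
/- (Lemma 1.) Under the standing hypotheses, for every k ∈ {1, …, K} and every profile α* with α* ⪰ e_k (i.e., α*_k = 1), the following four inequalities hold: θ_{k,0} ≠ θ̄_{k,α*}, θ_{k,α*} ≠ θ̄_{k,0}, θ_{K+k,0} ≠ θ̄_{K+k,α*}, and θ_{K+k,α*} ≠ θ̄_{K+k,0}. -/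
open Finset

private lemma star_lemma {J K : ℕ} (θ θb : Fin J → (Fin K → Bool) → ℝ)
    (p pb : (Fin K → Bool) → ℝ)
    (hp1 : ∑ α : Fin K → Bool, p α = 1) (hpb1 : ∑ α : Fin K → Bool, pb α = 1)
    (hT : ∀ r : Fin J → Bool, Tp θ p r = Tp θb pb r) (j : Fin J) (lam : ℝ) :
    ∑ α : Fin K → Bool, (θ j α - lam) * p α
      = ∑ α : Fin K → Bool, (θb j α - lam) * pb α := by
  have h1 := hT (fun j' => decide (j' = j))
  simp only [Tp, tEntry, decide_eq_true_eq, Finset.prod_ite_eq', Finset.mem_univ,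
    if_true] at h1
  simp only [sub_mul, Finset.sum_sub_distrib, ← Finset.mul_sum, hp1, hpb1, h1]

private lemma key_lemma {J K : ℕ} (Q : Fin J → Fin K → Bool)
    (θ θb : Fin J → (Fin K → Bool) → ℝ) (p pb : (Fin K → Bool) → ℝ)
    (hp : PValid p) (hpb : PValid pb)
    (hR1 : R1 Q θ) (hR1b : R1 Q θb) (hR2 : R2 Q θ) (hR2b : R2 Q θb)
    (hT : ∀ r : Fin J → Bool, Tp θ p r = Tp θb pb r)
    (k : Fin K) (j : Fin J) (hQ : Q j = basis k)
    (αs : Fin K → Bool) (hαs : dominates αs (basis k)) :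
    θ j (allZero K) ≠ θb j αs ∧ θ j αs ≠ θb j (allZero K) := by
  have hone : dominates (allOne K) (basis k) := fun i _ => rfl
  have hzk : (allZero K) k = false := rfl
  -- θ j αs = θ j (allOne K), θb j αs = θb j (allOne K)
  have hconst : θ j αs = θ j (allOne K) := by
    have := (hR1 j).1 αs (allOne K) (hQ ▸ hαs) (hQ ▸ hone); exact this
  have hconstb : θb j αs = θb j (allOne K) := by
    have := (hR1b j).1 αs (allOne K) (hQ ▸ hαs) (hQ ▸ hone); exact this
  constructor
  · intro heq
    have hstar := star_lemma θ θb p pb hp.2 hpb.2 hT j (θ j (allZero K))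
    have hL : 0 < ∑ α : Fin K → Bool, (θ j α - θ j (allZero K)) * p α := by
      apply Finset.sum_pos'
      · intro α _
        have h1 := (hR1 j).2.2 α
        have h2 := (hp.1 α).1
        nlinarith
      · refine ⟨allOne K, Finset.mem_univ _, ?_⟩
        have h1 := hR2 k j hQ (allZero K) hzk
        have h2 := (hp.1 (allOne K)).1
        nlinarith
    have hR : ∑ α : Fin K → Bool, (θb j α - θ j (allZero K)) * pb α ≤ 0 := by
      apply Finset.sum_nonpos
      intro α _
      have h1 : θb j α ≤ θb j αs := (hR1b j).2.1 αs α (hQ ▸ hαs)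
      have h2 := (hpb.1 α).1
      nlinarith [heq ▸ h1]
    linarith [hstar ▸ hL]
  · intro heq
    have hstar := star_lemma θ θb p pb hp.2 hpb.2 hT j (θ j αs)
    have hL : ∑ α : Fin K → Bool, (θ j α - θ j αs) * p α < 0 := by
      have h0 : ∀ α ∈ (Finset.univ : Finset (Fin K → Bool)),
          (θ j α - θ j αs) * p α ≤ 0 := by
        intro α _
        have h1 : θ j α ≤ θ j αs := (hR1 j).2.1 αs α (hQ ▸ hαs)
        have h2 := (hp.1 α).1
        nlinarith
      have h1 : θ j (allZero K) < θ j αs := hconst ▸ hR2 k j hQ (allZero K) hzk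
      have h2 := (hp.1 (allZero K)).1
      have hpos : 0 < ∑ α : Fin K → Bool, -((θ j α - θ j αs) * p α) := by
        apply Finset.sum_pos'
        · intro α hα; linarith [h0 α hα]
        · exact ⟨allZero K, Finset.mem_univ _, by nlinarith⟩
      have : ∑ α : Fin K → Bool, -((θ j α - θ j αs) * p α)
          = -(∑ α : Fin K → Bool, (θ j α - θ j αs) * p α) := by
        rw [Finset.sum_neg_distrib]
      linarith [this ▸ hpos]
    have hR : 0 ≤ ∑ α : Fin K → Bool, (θb j α - θ j αs) * pb α := by
      apply Finset.sum_nonneg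
      intro α _
      have h1 : θb j (allZero K) ≤ θb j α := (hR1b j).2.2 α
      have h2 := (hpb.1 α).1
      nlinarith [heq ▸ h1]
    linarith [hstar ▸ hL]

/-- **Lemma 1.** Under the standing hypotheses, for every `k` and every `α* ⪰ e_k`,
the four stated inequalities hold for items `k` and `K + k`. -/
theorem lemma1_inequalities
    {J K : ℕ} (hJ : 2 * K ≤ J) (Q : Fin J → Fin K → Bool)
    (θ θb : Fin J → (Fin K → Bool) → ℝ) (p pb : (Fin K → Bool) → ℝ)
    (hθ : ThetaValid θ) (hθb : ThetaValid θb) (hp : PValid p) (hpb : PValid pb)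
    (hR1 : R1 Q θ) (hR1b : R1 Q θb) (hR2 : R2 Q θ) (hR2b : R2 Q θb)
    (hC1 : C1 Q) (hC2 : C2 θ)
    (hT : ∀ r : Fin J → Bool, Tp θ p r = Tp θb pb r) :
    ∀ (k : Fin K) (h1 : (k : ℕ) < J) (h2 : K + (k : ℕ) < J)
      (αs : Fin K → Bool), dominates αs (basis k) →
      θ ⟨(k : ℕ), h1⟩ (allZero K) ≠ θb ⟨(k : ℕ), h1⟩ αs ∧
      θ ⟨(k : ℕ), h1⟩ αs ≠ θb ⟨(k : ℕ), h1⟩ (allZero K) ∧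
      θ ⟨K + (k : ℕ), h2⟩ (allZero K) ≠ θb ⟨K + (k : ℕ), h2⟩ αs ∧
      θ ⟨K + (k : ℕ), h2⟩ αs ≠ θb ⟨K + (k : ℕ), h2⟩ (allZero K) := by
  intro k h1 h2 αs hαs
  obtain ⟨hQ1, hQ2⟩ := hC1 k h1 h2
  obtain ⟨a1, a2⟩ := key_lemma Q θ θb p pb hp hpb hR1 hR1b hR2 hR2b hT k ⟨(k : ℕ), h1⟩ hQ1 αs hαs
  obtain ⟨b1, b2⟩ := key_lemma Q θ θb p pb hp hpb hR1 hR1b hR2 hR2b hT k ⟨K + (k : ℕ), h2⟩ hQ2 αs hαs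
  exact ⟨a1, a2, b1, b2⟩
end

section
/- (Lemma 2.) Under the standing hypotheses, for all k, h ∈ {1, …, K} with k ≠ h, the following four inequalities hold: θ_{k,e_h} ≠ θ̄_{k,1}, θ_{k,1} ≠ θ̄_{k,e_h}, θ_{K+k,e_h} ≠ θ̄_{K+k,1}, and θ_{K+k,1} ≠ θ̄_{K+k,e_h}. -/
open Finset

namespace Lemma2Aux

variable {J K : ℕ}

/-- first-block item of coordinate `j` -/
def it1 (hJ : 2 * K ≤ J) (j : Fin K) : Fin J := ⟨j, by have := j.isLt; omega⟩
/-- second-block item of coordinate `j` -/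
def it2 (hJ : 2 * K ≤ J) (j : Fin K) : Fin J := ⟨K + j, by have := j.isLt; omega⟩

@[simp] lemma it1_val (hJ : 2 * K ≤ J) (j : Fin K) : (it1 hJ j : ℕ) = j := rfl
@[simp] lemma it2_val (hJ : 2 * K ≤ J) (j : Fin K) : (it2 hJ j : ℕ) = K + j := rfl

lemma it1_inj (hJ : 2 * K ≤ J) : Function.Injective (it1 hJ) := by
  intro a b hab
  have : (a : ℕ) = b := congrArg (fun x : Fin J => (x : ℕ)) hab
  exact Fin.ext this

lemma it2_inj (hJ : 2 * K ≤ J) : Function.Injective (it2 hJ) := by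
  intro a b hab
  have : K + (a : ℕ) = K + b := congrArg (fun x : Fin J => (x : ℕ)) hab
  exact Fin.ext (by omega)

lemma it1_ne_it2 (hJ : 2 * K ≤ J) (a b : Fin K) : it1 hJ a ≠ it2 hJ b := by
  intro hab
  have : (a : ℕ) = K + b := congrArg (fun x : Fin J => (x : ℕ)) hab
  have := a.isLt; omega

@[simp] lemma basis_self (m : Fin K) : basis m m = true := by simp [basis]
lemma basis_ne {j m : Fin K} (h : j ≠ m) : basis m j = false := by simp [basis, h]
@[simp] lemma allZero_app (j : Fin K) : allZero K j = false := rfl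
@[simp] lemma allOne_app (j : Fin K) : allOne K j = true := rfl

lemma dominates_allOne (v : Fin K → Bool) : dominates (allOne K) v := fun _ _ => rfl

lemma dominates_basis {α : Fin K → Bool} {m : Fin K} (h : α m = true) :
    dominates α (basis m) := by
  intro i hi
  have : i = m := by simpa [basis] using hi
  rwa [this]

section Values

variable {Q : Fin J → Fin K → Bool} {θ : Fin J → (Fin K → Bool) → ℝ}

lemma maxEq (hR1 : R1 Q θ) {i : Fin J} {m : Fin K} (hQ : Q i = basis m)
    {α : Fin K → Bool} (hα : α m = true) : θ i α = θ i (allOne K) := by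
  refine (hR1 i).1 α (allOne K) ?_ ?_
  · rw [hQ]; exact dominates_basis hα
  · rw [hQ]; exact dominates_allOne _
lemma leMax (hR1 : R1 Q θ) (i : Fin J) (α : Fin K → Bool) :
    θ i α ≤ θ i (allOne K) :=
  (hR1 i).2.1 (allOne K) α (dominates_allOne _)

lemma geZero (hR1 : R1 Q θ) (i : Fin J) (α : Fin K → Bool) :
    θ i (allZero K) ≤ θ i α := (hR1 i).2.2 α

lemma ltMax (hR2 : R2 Q θ) {i : Fin J} {m : Fin K} (hQ : Q i = basis m)
    {α : Fin K → Bool} (hα : α m = false) : θ i α < θ i (allOne K) :=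
  hR2 m i hQ α hα

end Values

/-- split a sum over all profiles into two special profiles, when the rest vanish -/
lemma sum_eq_pair {f : (Fin K → Bool) → ℝ} {a b : Fin K → Bool} (hab : a ≠ b)
    (h : ∀ x, x ≠ a → x ≠ b → f x = 0) :
    ∑ x : Fin K → Bool, f x = f a + f b := by
  classical
  have h1 : ∑ x : Fin K → Bool, f x = ∑ x ∈ ({a, b} : Finset (Fin K → Bool)), f x := by
    refine (Finset.sum_subset (Finset.subset_univ _) ?_).symm
    intro x _ hx
    simp only [Finset.mem_insert, Finset.mem_singleton, not_or] at hx
    exact h x hx.1 hx.2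
  rw [h1, Finset.sum_pair hab]

lemma allZero_ne_basis (m : Fin K) : allZero K ≠ basis m := by
  intro h
  have := congrFun h m
  simp [allZero, basis] at this

/-- The master identity: row operations on the T-matrix. -/
lemma MI {θ θb : Fin J → (Fin K → Bool) → ℝ} {p pb : (Fin K → Bool) → ℝ}
    (hT : ∀ r : Fin J → Bool, Tp θ p r = Tp θb pb r)
    (S : Finset (Fin J)) (c : Fin J → ℝ) :
    ∑ α : Fin K → Bool, (∏ i ∈ S, (θ i α - c i)) * p α
      = ∑ α : Fin K → Bool, (∏ i ∈ S, (θb i α - c i)) * pb α := by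
  classical
  have expand : ∀ (θ' : Fin J → (Fin K → Bool) → ℝ) (p' : (Fin K → Bool) → ℝ),
      ∑ α : Fin K → Bool, (∏ i ∈ S, (θ' i α - c i)) * p' α
        = ∑ t ∈ S.powerset, Tp θ' p' (fun j => decide (j ∈ t)) * ∏ i ∈ S \ t, (-c i) := by
    intro θ' p'
    calc ∑ α : Fin K → Bool, (∏ i ∈ S, (θ' i α - c i)) * p' α
        = ∑ α : Fin K → Bool, ∑ t ∈ S.powerset,
            ((∏ i ∈ t, θ' i α) * p' α) * ∏ i ∈ S \ t, (-c i) := by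
          refine Finset.sum_congr rfl fun α _ => ?_
          have : ∏ i ∈ S, (θ' i α - c i) = ∏ i ∈ S, (θ' i α + (-c i)) := by
            refine Finset.prod_congr rfl fun i _ => by ring
          rw [this, Finset.prod_add, Finset.sum_mul]
          refine Finset.sum_congr rfl fun t _ => by ring
      _ = ∑ t ∈ S.powerset, ∑ α : Fin K → Bool,
            ((∏ i ∈ t, θ' i α) * p' α) * ∏ i ∈ S \ t, (-c i) := Finset.sum_comm
      _ = ∑ t ∈ S.powerset, Tp θ' p' (fun j => decide (j ∈ t)) * ∏ i ∈ S \ t, (-c i) := by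
          refine Finset.sum_congr rfl fun t _ => ?_
          rw [← Finset.sum_mul]
          congr 1
          unfold Tp
          refine Finset.sum_congr rfl fun α _ => ?_
          congr 1
          unfold tEntry
          simp only [decide_eq_true_eq]
          rw [Fintype.prod_ite_mem]
  rw [expand θ p, expand θb pb]
  exact Finset.sum_congr rfl fun t _ => by rw [hT]

/-- covariance trick: a two-atom signed measure matching a single atom on
multilinear moments in two coordinates has vanishing "covariance". -/
lemma alg_cov {A G B x1 y1 z1 x2 y2 z2 : ℝ} (h0 : A + G = B)
    (h1 : A*x1+G*y1 = B*z1) (h2 : A*x2+G*y2 = B*z2)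
    (h3 : A*x1*x2+G*y1*y2 = B*z1*z2) : A*G*(x1-y1)*(x2-y2) = 0 := by
  linear_combination (A+G)*h3 + z1*z2*B*h0 - (A*x2+G*y2)*h1 - B*z1*h2

lemma single_row {θ : Fin J → (Fin K → Bool) → ℝ} {p : (Fin K → Bool) → ℝ} (i : Fin J) :
    Tp θ p (fun j => decide (j = i)) = ∑ α : Fin K → Bool, θ i α * p α := by
  unfold Tp tEntry
  refine Finset.sum_congr rfl fun α _ => ?_
  congr 1
  simp only [decide_eq_true_eq]
  simp [Finset.prod_ite_eq' Finset.univ i (fun j _ => θ j α)]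

/-- Lemma 1: `θ_{i,0} < θb_{i,1}` for any item whose q-row is a basis vector. -/
lemma L1 {Q : Fin J → Fin K → Bool} {θ θb : Fin J → (Fin K → Bool) → ℝ}
    {p pb : (Fin K → Bool) → ℝ}
    (hp : PValid p) (hpb : PValid pb)
    (hR1 : R1 Q θ) (hR1b : R1 Q θb) (hR2 : R2 Q θ)
    (hT : ∀ r : Fin J → Bool, Tp θ p r = Tp θb pb r)
    {i : Fin J} {m : Fin K} (hQ : Q i = basis m) :
    θ i (allZero K) < θb i (allOne K) := by
  have key : ∑ α : Fin K → Bool, θ i α * p α = ∑ α : Fin K → Bool, θb i α * pb α := by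
    have := hT (fun j => decide (j = i))
    rwa [single_row, single_row] at this
  by_contra hcon
  push_neg at hcon
  have h1 : θ i (allZero K) < ∑ α : Fin K → Bool, θ i α * p α := by
    have e1 : θ i (allZero K) = ∑ α : Fin K → Bool, θ i (allZero K) * p α := by
      rw [← Finset.mul_sum, hp.2, mul_one]
    rw [e1]
    refine Finset.sum_lt_sum (fun α _ => ?_) ⟨allOne K, Finset.mem_univ _, ?_⟩
    · exact mul_le_mul_of_nonneg_right (geZero hR1 i α) (le_of_lt (hp.1 α).1)
    · exact mul_lt_mul_of_pos_right (ltMax hR2 hQ (by simp)) (hp.1 _).1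
  have h2 : ∑ α : Fin K → Bool, θb i α * pb α ≤ θb i (allOne K) := by
    have e2 : θb i (allOne K) = ∑ α : Fin K → Bool, θb i (allOne K) * pb α := by
      rw [← Finset.mul_sum, hpb.2, mul_one]
    rw [e2]
    exact Finset.sum_le_sum fun α _ =>
      mul_le_mul_of_nonneg_right (leMax hR1b i α) (le_of_lt ((hpb.1 α).1))
  linarith

lemma exists_true_coord {α : Fin K → Bool} {m : Fin K}
    (h0 : α ≠ allZero K) (h1 : α ≠ basis m) : ∃ j, j ≠ m ∧ α j = true := by
  by_contra hcon
  push_neg at hcon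
  cases hm : α m with
  | false =>
      apply h0; funext j
      by_cases hj : j = m
      · rw [hj]; exact hm
      · simpa using hcon j hj
  | true =>
      apply h1; funext j
      by_cases hj : j = m
      · rw [hj, basis_self]; exact hm
      · rw [basis_ne hj]; simpa using hcon j hj

/-- package two per-coordinate constant functions into one global one -/
noncomputable def mkc (hJ : 2 * K ≤ J) (c1 c2 : Fin K → ℝ) : Fin J → ℝ :=
  fun i => if h1 : (i : ℕ) < K then c1 ⟨i, h1⟩
    else if h2 : (i : ℕ) - K < K then c2 ⟨(i : ℕ) - K, h2⟩ else 0

lemma mkc_it1 (hJ : 2 * K ≤ J) (c1 c2 : Fin K → ℝ) (j : Fin K) :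
    mkc hJ c1 c2 (it1 hJ j) = c1 j := by
  unfold mkc
  rw [dif_pos (show ((it1 hJ j : Fin J) : ℕ) < K from j.isLt)]
  exact congrArg c1 (Fin.ext rfl)

lemma mkc_it2 (hJ : 2 * K ≤ J) (c1 c2 : Fin K → ℝ) (j : Fin K) :
    mkc hJ c1 c2 (it2 hJ j) = c2 j := by
  unfold mkc
  have h1 : ¬ ((it2 hJ j : Fin J) : ℕ) < K := by simp
  rw [dif_neg h1]
  have h2 : ((it2 hJ j : Fin J) : ℕ) - K < K := by
    have := j.isLt; simp only [it2_val]; omega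
  rw [dif_pos h2]
  exact congrArg c2 (Fin.ext (by simp))

section Slices

variable {Q : Fin J → Fin K → Bool} {θ θb : Fin J → (Fin K → Bool) → ℝ}
  {p pb : (Fin K → Bool) → ℝ}

/-- Kernel: split the θ-side of a slice into the two surviving atoms. -/
lemma KLsplitL (hJ : 2 * K ≤ J)
    (hT : ∀ r : Fin J → Bool, Tp θ p r = Tp θb pb r)
    (W : Fin K → Finset (Fin J)) (hW : ∀ j, W j ⊆ {it1 hJ j, it2 hJ j})
    (c cV : Fin J → ℝ) (m : Fin K)
    (hk : ∀ α : Fin K → Bool, α ≠ allZero K → α ≠ basis m →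
        ∃ j, ∃ i ∈ W j, θ i α - c i = 0)
    (V : Finset (Fin J)) (hV : ∀ i ∈ V, ∀ j, i ∉ W j) :
    (∏ j, ∏ i ∈ W j, (θ i (allZero K) - c i)) *
        ((∏ i ∈ V, (θ i (allZero K) - cV i)) * p (allZero K))
      + (∏ j, ∏ i ∈ W j, (θ i (basis m) - c i)) *
        ((∏ i ∈ V, (θ i (basis m) - cV i)) * p (basis m))
      = ∑ α : Fin K → Bool,
          (∏ j, ∏ i ∈ W j, (θb i α - c i)) * ((∏ i ∈ V, (θb i α - cV i)) * pb α) := by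
  classical
  set S : Finset (Fin J) := (Finset.univ.biUnion W) ∪ V with hS
  set c' : Fin J → ℝ := fun i => if i ∈ V then cV i else c i with hc'
  have hdisjWV : Disjoint (Finset.univ.biUnion W) V := by
    rw [Finset.disjoint_right]
    intro i hiV hiB
    obtain ⟨j, _, hij⟩ := Finset.mem_biUnion.mp hiB
    exact hV i hiV j hij
  have hpd : Set.PairwiseDisjoint (↑(Finset.univ : Finset (Fin K))) W := by
    intro a _ b _ hab
    show Disjoint (W a) (W b)
    rw [Finset.disjoint_left]
    intro i hia hib
    have h1 := hW a hia
    have h2 := hW b hib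
    simp only [Finset.mem_insert, Finset.mem_singleton] at h1 h2
    rcases h1 with h1 | h1 <;> rcases h2 with h2 | h2 <;> rw [h1] at h2
    · exact hab (it1_inj hJ h2)
    · exact (it1_ne_it2 hJ a b h2).elim
    · exact (it1_ne_it2 hJ b a h2.symm).elim
    · exact hab (it2_inj hJ h2)
  have hprod : ∀ (θ' : Fin J → (Fin K → Bool) → ℝ) (α : Fin K → Bool),
      ∏ i ∈ S, (θ' i α - c' i)
        = (∏ j, ∏ i ∈ W j, (θ' i α - c i)) * (∏ i ∈ V, (θ' i α - cV i)) := by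
    intro θ' α
    rw [hS, Finset.prod_union hdisjWV, Finset.prod_biUnion hpd]
    congr 1
    · refine Finset.prod_congr rfl fun j _ => Finset.prod_congr rfl fun i hi => ?_
      have : i ∉ V := by
        intro hiV; exact hV i hiV j hi
      simp [hc', this]
    · refine Finset.prod_congr rfl fun i hi => by simp [hc', hi]
  have hMI := MI hT S c'
  have hL : ∑ α : Fin K → Bool, (∏ i ∈ S, (θ i α - c' i)) * p α
      = (∏ j, ∏ i ∈ W j, (θ i (allZero K) - c i)) *
          ((∏ i ∈ V, (θ i (allZero K) - cV i)) * p (allZero K))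
        + (∏ j, ∏ i ∈ W j, (θ i (basis m) - c i)) *
          ((∏ i ∈ V, (θ i (basis m) - cV i)) * p (basis m)) := by
    rw [sum_eq_pair (allZero_ne_basis m) (f := fun α => (∏ i ∈ S, (θ i α - c' i)) * p α)]
    · rw [hprod θ (allZero K), hprod θ (basis m)]; ring
    · intro α hα0 hα1
      obtain ⟨j, i, hiW, hfac⟩ := hk α hα0 hα1
      have : ∏ i ∈ S, (θ i α - c' i) = 0 := by
        rw [hprod θ α]
        have : ∏ i ∈ W j, (θ i α - c i) = 0 := Finset.prod_eq_zero hiW hfac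
        rw [Finset.prod_eq_zero (Finset.mem_univ j) this, zero_mul]
      rw [this, zero_mul]
  have hR : ∑ α : Fin K → Bool, (∏ i ∈ S, (θb i α - c' i)) * pb α
      = ∑ α : Fin K → Bool,
          (∏ j, ∏ i ∈ W j, (θb i α - c i)) * ((∏ i ∈ V, (θb i α - cV i)) * pb α) := by
    refine Finset.sum_congr rfl fun α _ => ?_
    rw [hprod θb α]; ring
  rw [← hL, ← hR]
  exact hMI

/-- Kernel: both sides split into two atoms. -/
lemma KLsplit (hJ : 2 * K ≤ J)
    (hT : ∀ r : Fin J → Bool, Tp θ p r = Tp θb pb r)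
    (W : Fin K → Finset (Fin J)) (hW : ∀ j, W j ⊆ {it1 hJ j, it2 hJ j})
    (c cV : Fin J → ℝ) (m : Fin K)
    (hk : ∀ α : Fin K → Bool, α ≠ allZero K → α ≠ basis m →
        ∃ j, ∃ i ∈ W j, θ i α - c i = 0)
    (hkb : ∀ α : Fin K → Bool, α ≠ allZero K → α ≠ basis m →
        ∃ j, ∃ i ∈ W j, θb i α - c i = 0)
    (V : Finset (Fin J)) (hV : ∀ i ∈ V, ∀ j, i ∉ W j) :
    (∏ j, ∏ i ∈ W j, (θ i (allZero K) - c i)) *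
        ((∏ i ∈ V, (θ i (allZero K) - cV i)) * p (allZero K))
      + (∏ j, ∏ i ∈ W j, (θ i (basis m) - c i)) *
        ((∏ i ∈ V, (θ i (basis m) - cV i)) * p (basis m))
      = (∏ j, ∏ i ∈ W j, (θb i (allZero K) - c i)) *
          ((∏ i ∈ V, (θb i (allZero K) - cV i)) * pb (allZero K))
        + (∏ j, ∏ i ∈ W j, (θb i (basis m) - c i)) *
          ((∏ i ∈ V, (θb i (basis m) - cV i)) * pb (basis m)) := by
  rw [KLsplitL hJ hT W hW c cV m hk V hV]
  refine sum_eq_pair (allZero_ne_basis m) ?_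
  intro α hα0 hα1
  obtain ⟨j, i, hiW, hfac⟩ := hkb α hα0 hα1
  have : ∏ i ∈ W j, (θb i α - c i) = 0 := Finset.prod_eq_zero hiW hfac
  rw [Finset.prod_eq_zero (Finset.mem_univ j) this, zero_mul]

end Slices


section Main

variable {Q : Fin J → Fin K → Bool} {θ θb : Fin J → (Fin K → Bool) → ℝ}
  {p pb : (Fin K → Bool) → ℝ}

lemma qit1 (hJ : 2 * K ≤ J) (hC1 : C1 Q) (j : Fin K) : Q (it1 hJ j) = basis j :=
  (hC1 j (by have := j.isLt; omega) (by have := j.isLt; omega)).1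

lemma qit2 (hJ : 2 * K ≤ J) (hC1 : C1 Q) (j : Fin K) : Q (it2 hJ j) = basis j :=
  (hC1 j (by have := j.isLt; omega) (by have := j.isLt; omega)).2

/-- SL2 : if coordinate `m` has a "blocker", then `θ` and `θb` agree at profile 0
on every item beyond the first two blocks. -/
lemma SL2 (hJ : 2 * K ≤ J)
    (hp : PValid p) (hpb : PValid pb)
    (hR1 : R1 Q θ) (hR1b : R1 Q θb) (hR2 : R2 Q θ) (hR2b : R2 Q θb)
    (hC1 : C1 Q)
    (hT : ∀ r : Fin J → Bool, Tp θ p r = Tp θb pb r)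
    (m j0 : Fin K) (hj0 : j0 ≠ m)
    (hblk : θ (it1 hJ j0) (basis m) = θb (it1 hJ j0) (allOne K))
    (ii : Fin J) (hii : 2 * K ≤ (ii : ℕ)) :
    θ ii (allZero K) = θb ii (allZero K) := by
  classical
  have hT' : ∀ r, Tp θb pb r = Tp θ p r := fun r => (hT r).symm
  obtain ⟨W, hWm, hWne, hW⟩ : ∃ W : Fin K → Finset (Fin J), W m = ∅ ∧
      (∀ j, j ≠ m → W j = {it1 hJ j, it2 hJ j}) ∧ (∀ j, W j ⊆ {it1 hJ j, it2 hJ j}) :=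
    ⟨fun j => if j = m then ∅ else {it1 hJ j, it2 hJ j}, by simp,
      fun j hj => by simp [hj], fun j => by by_cases hj : j = m <;> simp [hj]⟩
  obtain ⟨c, hc1, hc2⟩ : ∃ c : Fin J → ℝ,
      (∀ j, c (it1 hJ j) = θb (it1 hJ j) (allOne K)) ∧
      (∀ j, c (it2 hJ j) = θ (it2 hJ j) (allOne K)) :=
    ⟨mkc hJ (fun j => θb (it1 hJ j) (allOne K)) (fun j => θ (it2 hJ j) (allOne K)),
      fun j => mkc_it1 hJ _ _ j, fun j => mkc_it2 hJ _ _ j⟩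
  have hk : ∀ α : Fin K → Bool, α ≠ allZero K → α ≠ basis m →
      ∃ j, ∃ i' ∈ W j, θ i' α - c i' = 0 := by
    intro α h0 h1
    obtain ⟨j, hjm, hjt⟩ := exists_true_coord h0 h1
    refine ⟨j, it2 hJ j, by rw [hWne j hjm]; simp, ?_⟩
    rw [hc2 j, sub_eq_zero]
    exact maxEq hR1 (qit2 hJ hC1 j) hjt
  have hkb : ∀ α : Fin K → Bool, α ≠ allZero K → α ≠ basis m →
      ∃ j, ∃ i' ∈ W j, θb i' α - c i' = 0 := by
    intro α h0 h1
    obtain ⟨j, hjm, hjt⟩ := exists_true_coord h0 h1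
    refine ⟨j, it1 hJ j, by rw [hWne j hjm]; simp, ?_⟩
    rw [hc1 j, sub_eq_zero]
    exact maxEq hR1b (qit1 hJ hC1 j) hjt
  have hnotW : ∀ (x : Fin J), ((x : ℕ) = (m : ℕ) ∨ (x : ℕ) = K + (m : ℕ) ∨ 2*K ≤ (x : ℕ)) →
      ∀ j, x ∉ W j := by
    intro x hx j hxW
    have hjm : j ≠ m := by
      intro hj; rw [hj, hWm] at hxW; exact absurd hxW (Finset.notMem_empty x)
    rw [hWne j hjm] at hxW
    have hjK := j.isLt
    have hmK := m.isLt
    rcases Finset.mem_insert.mp hxW with h | h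
    · have hv : (x : ℕ) = (j : ℕ) := by rw [h]; rfl
      have : (j : ℕ) ≠ (m : ℕ) := fun he => hjm (Fin.ext he)
      omega
    · have hv : (x : ℕ) = K + (j : ℕ) := by rw [Finset.mem_singleton.mp h]; rfl
      have : (j : ℕ) ≠ (m : ℕ) := fun he => hjm (Fin.ext he)
      omega
  set i1 : Fin J := it1 hJ m with hi1
  set i2 : Fin J := it2 hJ m with hi2
  have hmK := m.isLt
  have hv1 : (i1 : ℕ) = (m : ℕ) := rfl
  have hv2 : (i2 : ℕ) = K + (m : ℕ) := rfl
  have h12 : i1 ≠ i2 := it1_ne_it2 hJ m m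
  have h1i : i1 ≠ ii := fun h => by rw [h] at hv1; omega
  have h2i : i2 ≠ ii := fun h => by rw [h] at hv2; omega
  -- the five needed moment equations
  have hI := fun (V : Finset (Fin J)) hV => KLsplit hJ hT W hW c (fun _ => 0) m hk hkb V hV
  have E0 := hI ∅ (by simp)
  have E1 := hI {i1} (by intro x hx j; rw [Finset.mem_singleton.mp hx]; exact hnotW i1 (Or.inl hv1) j)
  have E2 := hI {i2} (by intro x hx j; rw [Finset.mem_singleton.mp hx]; exact hnotW i2 (Or.inr (Or.inl hv2)) j)
  have Ei := hI {ii} (by intro x hx j; rw [Finset.mem_singleton.mp hx]; exact hnotW ii (Or.inr (Or.inr hii)) j)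
  have E12 := hI {i1, i2} (by
    intro x hx j
    rcases Finset.mem_insert.mp hx with h | h
    · rw [h]; exact hnotW i1 (Or.inl hv1) j
    · rw [Finset.mem_singleton.mp h]; exact hnotW i2 (Or.inr (Or.inl hv2)) j)
  simp only [Finset.prod_empty, Finset.prod_singleton, Finset.prod_pair h12, sub_zero] at E0 E1 E2 Ei E12
  -- the θ-side `basis m` atom vanishes thanks to the blocker
  have hPm0 : (∏ j, ∏ i' ∈ W j, (θ i' (basis m) - c i')) = 0 := by
    refine Finset.prod_eq_zero (Finset.mem_univ j0) ?_
    refine Finset.prod_eq_zero (show it1 hJ j0 ∈ W j0 by rw [hWne j0 hj0]; simp) ?_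
    rw [hc1 j0, sub_eq_zero]
    exact hblk
  rw [hPm0, zero_mul, add_zero] at E0 E1 E2 Ei E12
  -- abbreviations
  set A : ℝ := (∏ j, ∏ i' ∈ W j, (θb i' (allZero K) - c i')) * pb (allZero K) with hA
  set G : ℝ := (∏ j, ∏ i' ∈ W j, (θb i' (basis m) - c i')) * pb (basis m) with hG
  set Bv : ℝ := (∏ j, ∏ i' ∈ W j, (θ i' (allZero K) - c i')) * p (allZero K) with hBv
  have hAne : A ≠ 0 := by
    rw [hA]
    refine mul_ne_zero ?_ (ne_of_gt (hpb.1 _).1)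
    rw [Finset.prod_ne_zero_iff]
    intro j _
    by_cases hj : j = m
    · rw [hj, hWm]; simp
    · rw [hWne j hj, Finset.prod_pair (it1_ne_it2 hJ j j)]
      refine mul_ne_zero ?_ ?_
      · rw [hc1 j]
        exact sub_ne_zero_of_ne (ne_of_lt (ltMax hR2b (qit1 hJ hC1 j) (allZero_app j)))
      · rw [hc2 j]
        exact sub_ne_zero_of_ne (ne_of_lt (L1 hpb hp hR1b hR1 hR2b hT' (qit2 hJ hC1 j)))
  have e0 : A + G = Bv := by rw [hA, hG, hBv]; linear_combination -E0
  have e1 : A * (θb i1 (allZero K)) + G * (θb i1 (basis m)) = Bv * (θ i1 (allZero K)) := by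
    rw [hA, hG, hBv]; linear_combination -E1
  have e2 : A * (θb i2 (allZero K)) + G * (θb i2 (basis m)) = Bv * (θ i2 (allZero K)) := by
    rw [hA, hG, hBv]; linear_combination -E2
  have e12 : A * θb i1 (allZero K) * θb i2 (allZero K)
      + G * θb i1 (basis m) * θb i2 (basis m)
      = Bv * (θ i1 (allZero K)) * θ i2 (allZero K) := by
    rw [hA, hG, hBv]; linear_combination -E12
  have cov := alg_cov e0 e1 e2 e12
  have hne1 : θb i1 (allZero K) - θb i1 (basis m) ≠ 0 := by
    refine sub_ne_zero_of_ne (ne_of_lt ?_)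
    rw [maxEq hR1b (qit1 hJ hC1 m) (basis_self m)]
    exact ltMax hR2b (qit1 hJ hC1 m) (allZero_app m)
  have hne2 : θb i2 (allZero K) - θb i2 (basis m) ≠ 0 := by
    refine sub_ne_zero_of_ne (ne_of_lt ?_)
    rw [maxEq hR1b (qit2 hJ hC1 m) (basis_self m)]
    exact ltMax hR2b (qit2 hJ hC1 m) (allZero_app m)
  have hGzero : G = 0 := by
    by_contra hGne
    exact (mul_ne_zero (mul_ne_zero (mul_ne_zero hAne hGne) hne1) hne2) cov
  have ei : A * (θb ii (allZero K)) + G * (θb ii (basis m)) = Bv * (θ ii (allZero K)) := by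
    rw [hA, hG, hBv]; linear_combination -Ei
  have : A * (θb ii (allZero K) - θ ii (allZero K)) = 0 := by
    linear_combination ei - (θ ii (allZero K)) * e0
      + (θ ii (allZero K) - θb ii (basis m)) * hGzero
  have := (mul_eq_zero.mp this).resolve_left hAne
  exact (sub_eq_zero.mp this).symm

/-- SL1: if coordinate `m` has no blockers, the two max item parameters agree. -/
lemma SL1 (hJ : 2 * K ≤ J)
    (hp : PValid p) (hpb : PValid pb)
    (hR1 : R1 Q θ) (hR1b : R1 Q θb) (hR2 : R2 Q θ) (hR2b : R2 Q θb)
    (hC1 : C1 Q) (hC2 : C2 θ)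
    (hT : ∀ r : Fin J → Bool, Tp θ p r = Tp θb pb r)
    (m : Fin K)
    (hnb : ∀ j : Fin K, j ≠ m →
      ¬(θ (it1 hJ j) (basis m) = θb (it1 hJ j) (allOne K) ∧
        θ (it2 hJ j) (basis m) = θb (it2 hJ j) (allOne K))) :
    θ (it1 hJ m) (allOne K) = θb (it1 hJ m) (allOne K) ∧
    θ (it2 hJ m) (allOne K) = θb (it2 hJ m) (allOne K) := by
  classical
  have hT' : ∀ r, Tp θb pb r = Tp θ p r := fun r => (hT r).symm
  obtain ⟨jst, hjst2K, hjstC2⟩ := hC2 m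
  -- choose, per coordinate, which item plays the θb-kill role
  have hchoice : ∀ j : Fin K, ∃ bch : Bool,
      j ≠ m → (if bch then θ (it1 hJ j) (basis m) ≠ θb (it1 hJ j) (allOne K)
               else θ (it2 hJ j) (basis m) ≠ θb (it2 hJ j) (allOne K)) := by
    intro j
    by_cases hj : j = m
    · exact ⟨true, fun h => absurd hj h⟩
    · by_cases h1 : θ (it1 hJ j) (basis m) = θb (it1 hJ j) (allOne K)
      · refine ⟨false, fun _ => ?_⟩
        intro h2
        exact hnb j hj ⟨h1, h2⟩
      · exact ⟨true, fun _ => h1⟩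
  choose ch hch using hchoice
  obtain ⟨W, hWm, hWne, hW⟩ : ∃ W : Fin K → Finset (Fin J), W m = ∅ ∧
      (∀ j, j ≠ m → W j = {it1 hJ j, it2 hJ j}) ∧ (∀ j, W j ⊆ {it1 hJ j, it2 hJ j}) :=
    ⟨fun j => if j = m then ∅ else {it1 hJ j, it2 hJ j}, by simp,
      fun j hj => by simp [hj], fun j => by by_cases hj : j = m <;> simp [hj]⟩
  obtain ⟨c, hc1, hc2⟩ : ∃ c : Fin J → ℝ,
      (∀ j, c (it1 hJ j) = if ch j then θb (it1 hJ j) (allOne K) else θ (it1 hJ j) (allOne K)) ∧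
      (∀ j, c (it2 hJ j) = if ch j then θ (it2 hJ j) (allOne K) else θb (it2 hJ j) (allOne K)) :=
    ⟨mkc hJ _ _, fun j => mkc_it1 hJ _ _ j, fun j => mkc_it2 hJ _ _ j⟩
  have hk : ∀ α : Fin K → Bool, α ≠ allZero K → α ≠ basis m →
      ∃ j, ∃ i' ∈ W j, θ i' α - c i' = 0 := by
    intro α h0 h1
    obtain ⟨j, hjm, hjt⟩ := exists_true_coord h0 h1
    refine ⟨j, ?_⟩
    cases hcj : ch j with
    | true =>
        refine ⟨it2 hJ j, by rw [hWne j hjm]; simp, ?_⟩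
        rw [hc2 j, hcj, if_pos rfl, sub_eq_zero]
        exact maxEq hR1 (qit2 hJ hC1 j) hjt
    | false =>
        refine ⟨it1 hJ j, by rw [hWne j hjm]; simp, ?_⟩
        rw [hc1 j, hcj, if_neg Bool.false_ne_true, sub_eq_zero]
        exact maxEq hR1 (qit1 hJ hC1 j) hjt
  have hkb : ∀ α : Fin K → Bool, α ≠ allZero K → α ≠ basis m →
      ∃ j, ∃ i' ∈ W j, θb i' α - c i' = 0 := by
    intro α h0 h1
    obtain ⟨j, hjm, hjt⟩ := exists_true_coord h0 h1
    refine ⟨j, ?_⟩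
    cases hcj : ch j with
    | true =>
        refine ⟨it1 hJ j, by rw [hWne j hjm]; simp, ?_⟩
        rw [hc1 j, hcj, if_pos rfl, sub_eq_zero]
        exact maxEq hR1b (qit1 hJ hC1 j) hjt
    | false =>
        refine ⟨it2 hJ j, by rw [hWne j hjm]; simp, ?_⟩
        rw [hc2 j, hcj, if_neg Bool.false_ne_true, sub_eq_zero]
        exact maxEq hR1b (qit2 hJ hC1 j) hjt
  have hnotW : ∀ (x : Fin J), ((x : ℕ) = (m : ℕ) ∨ (x : ℕ) = K + (m : ℕ) ∨ 2*K ≤ (x : ℕ)) →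
      ∀ j, x ∉ W j := by
    intro x hx j hxW
    have hjm : j ≠ m := by
      intro hj; rw [hj, hWm] at hxW; exact absurd hxW (Finset.notMem_empty x)
    rw [hWne j hjm] at hxW
    have hjK := j.isLt
    have hmK := m.isLt
    rcases Finset.mem_insert.mp hxW with h | h
    · have hv : (x : ℕ) = (j : ℕ) := by rw [h]; rfl
      have : (j : ℕ) ≠ (m : ℕ) := fun he => hjm (Fin.ext he)
      omega
    · have hv : (x : ℕ) = K + (j : ℕ) := by rw [Finset.mem_singleton.mp h]; rfl
      have : (j : ℕ) ≠ (m : ℕ) := fun he => hjm (Fin.ext he)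
      omega
  set i1 : Fin J := it1 hJ m with hi1
  set i2 : Fin J := it2 hJ m with hi2
  have hmK := m.isLt
  have hv1 : (i1 : ℕ) = (m : ℕ) := rfl
  have hv2 : (i2 : ℕ) = K + (m : ℕ) := rfl
  have h12 : i1 ≠ i2 := it1_ne_it2 hJ m m
  have h1s : i1 ≠ jst := fun h => by rw [h] at hv1; omega
  have h2s : i2 ≠ jst := fun h => by rw [h] at hv2; omega
  have hm1 : ∀ j, i1 ∉ W j := hnotW i1 (Or.inl hv1)
  have hm2 : ∀ j, i2 ∉ W j := hnotW i2 (Or.inr (Or.inl hv2))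
  have hms : ∀ j, jst ∉ W j := hnotW jst (Or.inr (Or.inr hjst2K))
  have hI := fun (V : Finset (Fin J)) hV => KLsplit hJ hT W hW c (fun _ => 0) m hk hkb V hV
  have E0 := hI ∅ (by simp)
  have E1 := hI {i1} (by intro x hx j; rw [Finset.mem_singleton.mp hx]; exact hm1 j)
  have E2 := hI {i2} (by intro x hx j; rw [Finset.mem_singleton.mp hx]; exact hm2 j)
  have E3 := hI {jst} (by intro x hx j; rw [Finset.mem_singleton.mp hx]; exact hms j)
  have E12 := hI {i1, i2} (by
    intro x hx j
    rcases Finset.mem_insert.mp hx with h | h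
    · rw [h]; exact hm1 j
    · rw [Finset.mem_singleton.mp h]; exact hm2 j)
  have E13 := hI {i1, jst} (by
    intro x hx j
    rcases Finset.mem_insert.mp hx with h | h
    · rw [h]; exact hm1 j
    · rw [Finset.mem_singleton.mp h]; exact hms j)
  have E23 := hI {i2, jst} (by
    intro x hx j
    rcases Finset.mem_insert.mp hx with h | h
    · rw [h]; exact hm2 j
    · rw [Finset.mem_singleton.mp h]; exact hms j)
  have E123 := hI {i1, i2, jst} (by
    intro x hx j
    rcases Finset.mem_insert.mp hx with h | h
    · rw [h]; exact hm1 j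
    rcases Finset.mem_insert.mp h with h | h
    · rw [h]; exact hm2 j
    · rw [Finset.mem_singleton.mp h]; exact hms j)
  have h123 : i1 ∉ ({i2, jst} : Finset (Fin J)) := by simp [h12, h1s]
  simp only [Finset.prod_empty, Finset.prod_singleton, Finset.prod_pair h12,
    Finset.prod_pair h1s, Finset.prod_pair h2s, Finset.prod_insert h123,
    sub_zero] at E0 E1 E2 E3 E12 E13 E23 E123
  set Pa : ℝ := (∏ j, ∏ i' ∈ W j, (θ i' (allZero K) - c i')) * p (allZero K) with hPa
  set Pg : ℝ := (∏ j, ∏ i' ∈ W j, (θ i' (basis m) - c i')) * p (basis m) with hPg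
  set Pb : ℝ := (∏ j, ∏ i' ∈ W j, (θb i' (allZero K) - c i')) * pb (allZero K) with hPb
  set Pd : ℝ := (∏ j, ∏ i' ∈ W j, (θb i' (basis m) - c i')) * pb (basis m) with hPd
  -- nonvanishing of the three needed coefficients
  have hPane : Pa ≠ 0 := by
    rw [hPa]
    refine mul_ne_zero ?_ (ne_of_gt (hp.1 _).1)
    rw [Finset.prod_ne_zero_iff]
    intro j _
    by_cases hj : j = m
    · rw [hj, hWm]; simp
    · rw [hWne j hj, Finset.prod_pair (it1_ne_it2 hJ j j)]
      refine mul_ne_zero ?_ ?_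
      · rw [hc1 j]
        cases hcj : ch j with
        | true =>
            rw [if_pos rfl]
            exact sub_ne_zero_of_ne (ne_of_lt (L1 hp hpb hR1 hR1b hR2 hT (qit1 hJ hC1 j)))
        | false =>
            rw [if_neg Bool.false_ne_true]
            exact sub_ne_zero_of_ne (ne_of_lt (ltMax hR2 (qit1 hJ hC1 j) (allZero_app j)))
      · rw [hc2 j]
        cases hcj : ch j with
        | true =>
            rw [if_pos rfl]
            exact sub_ne_zero_of_ne (ne_of_lt (ltMax hR2 (qit2 hJ hC1 j) (allZero_app j)))
        | false =>
            rw [if_neg Bool.false_ne_true]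
            exact sub_ne_zero_of_ne (ne_of_lt (L1 hp hpb hR1 hR1b hR2 hT (qit2 hJ hC1 j)))
  have hPgne : Pg ≠ 0 := by
    rw [hPg]
    refine mul_ne_zero ?_ (ne_of_gt (hp.1 _).1)
    rw [Finset.prod_ne_zero_iff]
    intro j _
    by_cases hj : j = m
    · rw [hj, hWm]; simp
    · rw [hWne j hj, Finset.prod_pair (it1_ne_it2 hJ j j)]
      have hchj := hch j hj
      refine mul_ne_zero ?_ ?_
      · rw [hc1 j]
        cases hcj : ch j with
        | true =>
            rw [if_pos rfl]
            rw [hcj, if_pos rfl] at hchj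
            exact sub_ne_zero_of_ne hchj
        | false =>
            rw [if_neg Bool.false_ne_true]
            exact sub_ne_zero_of_ne (ne_of_lt (ltMax hR2 (qit1 hJ hC1 j) (basis_ne hj)))
      · rw [hc2 j]
        cases hcj : ch j with
        | true =>
            rw [if_pos rfl]
            exact sub_ne_zero_of_ne (ne_of_lt (ltMax hR2 (qit2 hJ hC1 j) (basis_ne hj)))
        | false =>
            rw [if_neg Bool.false_ne_true]
            rw [hcj, if_neg Bool.false_ne_true] at hchj
            exact sub_ne_zero_of_ne hchj
  have hPbne : Pb ≠ 0 := by
    rw [hPb]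
    refine mul_ne_zero ?_ (ne_of_gt (hpb.1 _).1)
    rw [Finset.prod_ne_zero_iff]
    intro j _
    by_cases hj : j = m
    · rw [hj, hWm]; simp
    · rw [hWne j hj, Finset.prod_pair (it1_ne_it2 hJ j j)]
      refine mul_ne_zero ?_ ?_
      · rw [hc1 j]
        cases hcj : ch j with
        | true =>
            rw [if_pos rfl]
            exact sub_ne_zero_of_ne (ne_of_lt (ltMax hR2b (qit1 hJ hC1 j) (allZero_app j)))
        | false =>
            rw [if_neg Bool.false_ne_true]
            exact sub_ne_zero_of_ne (ne_of_lt (L1 hpb hp hR1b hR1 hR2b hT' (qit1 hJ hC1 j)))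
      · rw [hc2 j]
        cases hcj : ch j with
        | true =>
            rw [if_pos rfl]
            exact sub_ne_zero_of_ne (ne_of_lt (L1 hpb hp hR1b hR1 hR2b hT' (qit2 hJ hC1 j)))
        | false =>
            rw [if_neg Bool.false_ne_true]
            exact sub_ne_zero_of_ne (ne_of_lt (ltMax hR2b (qit2 hJ hC1 j) (allZero_app j)))
  -- canonical moment equations
  have e0 : Pa + Pg = Pb + Pd := by rw [hPa, hPg, hPb, hPd]; linear_combination E0
  have e1 : Pa * θ i1 (allZero K) + Pg * θ i1 (basis m)
      = Pb * θb i1 (allZero K) + Pd * θb i1 (basis m) := by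
    rw [hPa, hPg, hPb, hPd]; linear_combination E1
  have e2 : Pa * θ i2 (allZero K) + Pg * θ i2 (basis m)
      = Pb * θb i2 (allZero K) + Pd * θb i2 (basis m) := by
    rw [hPa, hPg, hPb, hPd]; linear_combination E2
  have e3 : Pa * θ jst (allZero K) + Pg * θ jst (basis m)
      = Pb * θb jst (allZero K) + Pd * θb jst (basis m) := by
    rw [hPa, hPg, hPb, hPd]; linear_combination E3
  have e12 : Pa * θ i1 (allZero K) * θ i2 (allZero K) + Pg * θ i1 (basis m) * θ i2 (basis m)
      = Pb * θb i1 (allZero K) * θb i2 (allZero K) + Pd * θb i1 (basis m) * θb i2 (basis m) := by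
    rw [hPa, hPg, hPb, hPd]; linear_combination E12
  have e13 : Pa * θ i1 (allZero K) * θ jst (allZero K) + Pg * θ i1 (basis m) * θ jst (basis m)
      = Pb * θb i1 (allZero K) * θb jst (allZero K) + Pd * θb i1 (basis m) * θb jst (basis m) := by
    rw [hPa, hPg, hPb, hPd]; linear_combination E13
  have e23 : Pa * θ i2 (allZero K) * θ jst (allZero K) + Pg * θ i2 (basis m) * θ jst (basis m)
      = Pb * θb i2 (allZero K) * θb jst (allZero K) + Pd * θb i2 (basis m) * θb jst (basis m) := by
    rw [hPa, hPg, hPb, hPd]; linear_combination E23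
  have e123 : Pa * (θ i1 (allZero K) * θ i2 (allZero K) * θ jst (allZero K))
      + Pg * (θ i1 (basis m) * θ i2 (basis m) * θ jst (basis m))
      = Pb * (θb i1 (allZero K) * θb i2 (allZero K) * θb jst (allZero K))
      + Pd * (θb i1 (basis m) * θb i2 (basis m) * θb jst (basis m)) := by
    rw [hPa, hPg, hPb, hPd]; linear_combination E123
  -- basic value facts
  have hy1 : θ i1 (basis m) = θ i1 (allOne K) := maxEq hR1 (qit1 hJ hC1 m) (basis_self m)
  have hy2 : θ i2 (basis m) = θ i2 (allOne K) := maxEq hR1 (qit2 hJ hC1 m) (basis_self m)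
  have hw1 : θb i1 (basis m) = θb i1 (allOne K) := maxEq hR1b (qit1 hJ hC1 m) (basis_self m)
  have hw2 : θb i2 (basis m) = θb i2 (allOne K) := maxEq hR1b (qit2 hJ hC1 m) (basis_self m)
  have hx1y1 : θ i1 (allZero K) - θ i1 (basis m) ≠ 0 := by
    refine sub_ne_zero_of_ne (ne_of_lt ?_)
    rw [hy1]; exact ltMax hR2 (qit1 hJ hC1 m) (allZero_app m)
  have hx2y2 : θ i2 (allZero K) - θ i2 (basis m) ≠ 0 := by
    refine sub_ne_zero_of_ne (ne_of_lt ?_)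
    rw [hy2]; exact ltMax hR2 (qit2 hJ hC1 m) (allZero_app m)
  have hx3y3 : θ jst (allZero K) - θ jst (basis m) ≠ 0 :=
    sub_ne_zero_of_ne (fun h => hjstC2 h.symm)
  have hx1w1 : θ i1 (allZero K) - θb i1 (basis m) ≠ 0 := by
    refine sub_ne_zero_of_ne (ne_of_lt ?_)
    rw [hw1]; exact L1 hp hpb hR1 hR1b hR2 hT (qit1 hJ hC1 m)
  have hx2w2 : θ i2 (allZero K) - θb i2 (basis m) ≠ 0 := by
    refine sub_ne_zero_of_ne (ne_of_lt ?_)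
    rw [hw2]; exact L1 hp hpb hR1 hR1b hR2 hT (qit2 hJ hC1 m)
  -- first conclusion: subtract the θb-max at item i1
  have k0 : Pa * (θ i1 (allZero K) - θb i1 (basis m))
      + Pg * (θ i1 (basis m) - θb i1 (basis m))
      = Pb * (θb i1 (allZero K) - θb i1 (basis m)) := by
    linear_combination e1 - θb i1 (basis m) * e0
  have k1 : Pa * (θ i1 (allZero K) - θb i1 (basis m)) * θ i2 (allZero K)
      + Pg * (θ i1 (basis m) - θb i1 (basis m)) * θ i2 (basis m)
      = Pb * (θb i1 (allZero K) - θb i1 (basis m)) * θb i2 (allZero K) := by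
    linear_combination e12 - θb i1 (basis m) * e2
  have k2 : Pa * (θ i1 (allZero K) - θb i1 (basis m)) * θ jst (allZero K)
      + Pg * (θ i1 (basis m) - θb i1 (basis m)) * θ jst (basis m)
      = Pb * (θb i1 (allZero K) - θb i1 (basis m)) * θb jst (allZero K) := by
    linear_combination e13 - θb i1 (basis m) * e3
  have k3 : Pa * (θ i1 (allZero K) - θb i1 (basis m)) * θ i2 (allZero K) * θ jst (allZero K)
      + Pg * (θ i1 (basis m) - θb i1 (basis m)) * θ i2 (basis m) * θ jst (basis m)
      = Pb * (θb i1 (allZero K) - θb i1 (basis m)) * θb i2 (allZero K) * θb jst (allZero K) := by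
    linear_combination e123 - θb i1 (basis m) * e23
  have cov1 := alg_cov k0 k1 k2 k3
  have hcon1 : θ i1 (basis m) = θb i1 (basis m) := by
    by_contra hne
    exact (mul_ne_zero (mul_ne_zero (mul_ne_zero
      (mul_ne_zero hPane hx1w1) (mul_ne_zero hPgne (sub_ne_zero_of_ne hne)))
      hx2y2) hx3y3) cov1
  -- second conclusion: subtract the θb-max at item i2
  have l0 : Pa * (θ i2 (allZero K) - θb i2 (basis m))
      + Pg * (θ i2 (basis m) - θb i2 (basis m))
      = Pb * (θb i2 (allZero K) - θb i2 (basis m)) := by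
    linear_combination e2 - θb i2 (basis m) * e0
  have l1 : Pa * (θ i2 (allZero K) - θb i2 (basis m)) * θ i1 (allZero K)
      + Pg * (θ i2 (basis m) - θb i2 (basis m)) * θ i1 (basis m)
      = Pb * (θb i2 (allZero K) - θb i2 (basis m)) * θb i1 (allZero K) := by
    linear_combination e12 - θb i2 (basis m) * e1
  have l2 : Pa * (θ i2 (allZero K) - θb i2 (basis m)) * θ jst (allZero K)
      + Pg * (θ i2 (basis m) - θb i2 (basis m)) * θ jst (basis m)
      = Pb * (θb i2 (allZero K) - θb i2 (basis m)) * θb jst (allZero K) := by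
    linear_combination e23 - θb i2 (basis m) * e3
  have l3 : Pa * (θ i2 (allZero K) - θb i2 (basis m)) * θ i1 (allZero K) * θ jst (allZero K)
      + Pg * (θ i2 (basis m) - θb i2 (basis m)) * θ i1 (basis m) * θ jst (basis m)
      = Pb * (θb i2 (allZero K) - θb i2 (basis m)) * θb i1 (allZero K) * θb jst (allZero K) := by
    linear_combination e123 - θb i2 (basis m) * e13
  have cov2 := alg_cov l0 l1 l2 l3
  have hcon2 : θ i2 (basis m) = θb i2 (basis m) := by
    by_contra hne
    exact (mul_ne_zero (mul_ne_zero (mul_ne_zero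
      (mul_ne_zero hPane hx2w2) (mul_ne_zero hPgne (sub_ne_zero_of_ne hne)))
      hx1y1) hx3y3) cov2
  constructor
  · rw [← hy1, ← hw1]; exact hcon1
  · rw [← hy2, ← hw2]; exact hcon2

/-- SL3: a coordinate `m` with blockers, whose two max parameters strictly dominate
the θb ones, is impossible. -/
lemma SL3 (hJ : 2 * K ≤ J)
    (hp : PValid p) (hpb : PValid pb)
    (hR1 : R1 Q θ) (hR1b : R1 Q θb) (hR2 : R2 Q θ) (hR2b : R2 Q θb)
    (hC1 : C1 Q)
    (hT : ∀ r : Fin J → Bool, Tp θ p r = Tp θb pb r)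
    (m : Fin K) (B : Finset (Fin K)) (hmB : m ∉ B)
    (hBdef : ∀ j ∈ B, θ (it1 hJ j) (basis m) = θb (it1 hJ j) (allOne K))
    (hBfull : ∀ j : Fin K, j ≠ m → j ∉ B →
        ¬(θ (it1 hJ j) (basis m) = θb (it1 hJ j) (allOne K) ∧
          θ (it2 hJ j) (basis m) = θb (it2 hJ j) (allOne K)))
    (hA1 : θb (it1 hJ m) (allOne K) < θ (it1 hJ m) (allOne K))
    (hA2 : θb (it2 hJ m) (allOne K) < θ (it2 hJ m) (allOne K))
    (jst : Fin J) (hjst2K : 2 * K ≤ (jst : ℕ))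
    (hjstC2 : θ jst (basis m) ≠ θ jst (allZero K))
    (hz : θ jst (allZero K) = θb jst (allZero K)) : False := by
  classical
  have hT' : ∀ r, Tp θb pb r = Tp θ p r := fun r => (hT r).symm
  have hmK := m.isLt
  -- choice of θb-kill item for unblocked coordinates
  have hchoice : ∀ j : Fin K, ∃ bch : Bool,
      j ≠ m → j ∉ B → (if bch then θ (it1 hJ j) (basis m) ≠ θb (it1 hJ j) (allOne K)
               else θ (it2 hJ j) (basis m) ≠ θb (it2 hJ j) (allOne K)) := by
    intro j
    by_cases hj : j = m
    · exact ⟨true, fun h => absurd hj h⟩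
    · by_cases hjB : j ∈ B
      · exact ⟨true, fun _ h => absurd hjB h⟩
      · by_cases h1 : θ (it1 hJ j) (basis m) = θb (it1 hJ j) (allOne K)
        · refine ⟨false, fun _ _ h2 => hBfull j hj hjB ⟨h1, h2⟩⟩
        · exact ⟨true, fun _ _ => h1⟩
  choose ch hch using hchoice
  obtain ⟨W, hWm, hWB, hWe, hW⟩ : ∃ W : Fin K → Finset (Fin J),
      W m = {it2 hJ m} ∧
      (∀ j, j ≠ m → j ∈ B → W j = {it2 hJ j}) ∧
      (∀ j, j ≠ m → j ∉ B → W j = {it1 hJ j, it2 hJ j}) ∧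
      (∀ j, W j ⊆ {it1 hJ j, it2 hJ j}) := by
    refine ⟨fun j => if j = m then {it2 hJ j} else if j ∈ B then {it2 hJ j}
        else {it1 hJ j, it2 hJ j}, by simp, fun j hj hjB => by simp [hj, hjB],
      fun j hj hjB => by simp [hj, hjB], fun j => ?_⟩
    by_cases hj : j = m
    · simp [hj]
    · by_cases hjB : j ∈ B <;> simp [hj, hjB]
  obtain ⟨c, hc1, hc2m, hc2B, hc2e⟩ : ∃ c : Fin J → ℝ,
      (∀ j, c (it1 hJ j) = if ch j then θb (it1 hJ j) (allOne K) else θ (it1 hJ j) (allOne K)) ∧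
      (c (it2 hJ m) = θb (it2 hJ m) (allOne K)) ∧
      (∀ j, j ≠ m → j ∈ B → c (it2 hJ j) = θ (it2 hJ j) (allOne K)) ∧
      (∀ j, j ≠ m → j ∉ B → c (it2 hJ j) =
        if ch j then θ (it2 hJ j) (allOne K) else θb (it2 hJ j) (allOne K)) := by
    refine ⟨mkc hJ
      (fun j => if ch j then θb (it1 hJ j) (allOne K) else θ (it1 hJ j) (allOne K))
      (fun j => if j = m then θb (it2 hJ j) (allOne K) else if j ∈ B
        then θ (it2 hJ j) (allOne K)
        else (if ch j then θ (it2 hJ j) (allOne K) else θb (it2 hJ j) (allOne K))),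
      fun j => mkc_it1 hJ _ _ j, ?_, fun j hj hjB => ?_, fun j hj hjB => ?_⟩
    · rw [mkc_it2 hJ _ _ m]; simp
    · rw [mkc_it2 hJ _ _ j]; simp [hj, hjB]
    · rw [mkc_it2 hJ _ _ j]; simp [hj, hjB]
  have hk : ∀ α : Fin K → Bool, α ≠ allZero K → α ≠ basis m →
      ∃ j, ∃ i' ∈ W j, θ i' α - c i' = 0 := by
    intro α h0 h1
    obtain ⟨j, hjm, hjt⟩ := exists_true_coord h0 h1
    refine ⟨j, ?_⟩
    by_cases hjB : j ∈ B
    · refine ⟨it2 hJ j, by rw [hWB j hjm hjB]; simp, ?_⟩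
      rw [hc2B j hjm hjB, sub_eq_zero]
      exact maxEq hR1 (qit2 hJ hC1 j) hjt
    · cases hcj : ch j with
      | true =>
          refine ⟨it2 hJ j, by rw [hWe j hjm hjB]; simp, ?_⟩
          rw [hc2e j hjm hjB, hcj, if_pos rfl, sub_eq_zero]
          exact maxEq hR1 (qit2 hJ hC1 j) hjt
      | false =>
          refine ⟨it1 hJ j, by rw [hWe j hjm hjB]; simp, ?_⟩
          rw [hc1 j, hcj, if_neg Bool.false_ne_true, sub_eq_zero]
          exact maxEq hR1 (qit1 hJ hC1 j) hjt
  -- θb-side vanishing off profiles supported in B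
  have hQvan : ∀ α : Fin K → Bool, (∃ j, α j = true ∧ j ∉ B) →
      (∏ j, ∏ i' ∈ W j, (θb i' α - c i')) = 0 := by
    intro α ⟨j, hjt, hjB⟩
    refine Finset.prod_eq_zero (Finset.mem_univ j) ?_
    by_cases hjm : j = m
    · subst hjm
      refine Finset.prod_eq_zero (show it2 hJ j ∈ W j by rw [hWm]; simp) ?_
      rw [hc2m, sub_eq_zero]
      exact maxEq hR1b (qit2 hJ hC1 j) hjt
    · cases hcj : ch j with
      | true =>
          refine Finset.prod_eq_zero (show it1 hJ j ∈ W j by rw [hWe j hjm hjB]; simp) ?_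
          rw [hc1 j, hcj, if_pos rfl, sub_eq_zero]
          exact maxEq hR1b (qit1 hJ hC1 j) hjt
      | false =>
          refine Finset.prod_eq_zero (show it2 hJ j ∈ W j by rw [hWe j hjm hjB]; simp) ?_
          rw [hc2e j hjm hjB, hcj, if_neg Bool.false_ne_true, sub_eq_zero]
          exact maxEq hR1b (qit2 hJ hC1 j) hjt
  -- the members of W
  have hWmem : ∀ (j : Fin K) (x : Fin J), x ∈ W j →
      x = it2 hJ j ∨ (j ≠ m ∧ j ∉ B ∧ x = it1 hJ j) := by
    intro j x hx
    by_cases hjm : j = m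
    · subst hjm; rw [hWm] at hx; exact Or.inl (Finset.mem_singleton.mp hx)
    · by_cases hjB : j ∈ B
      · rw [hWB j hjm hjB] at hx; exact Or.inl (Finset.mem_singleton.mp hx)
      · rw [hWe j hjm hjB] at hx
        rcases Finset.mem_insert.mp hx with h | h
        · exact Or.inr ⟨hjm, hjB, h⟩
        · exact Or.inl (Finset.mem_singleton.mp h)
  have hjst_notW : ∀ j, jst ∉ W j := by
    intro j hjW
    rcases hWmem j jst hjW with h | ⟨_, _, h⟩
    · have : (jst : ℕ) = K + (j : ℕ) := by rw [h]; rfl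
      have := j.isLt; omega
    · have : (jst : ℕ) = (j : ℕ) := by rw [h]; rfl
      have := j.isLt; omega
  have hit1m_notW : ∀ j, it1 hJ m ∉ W j := by
    intro j hjW
    rcases hWmem j _ hjW with h | ⟨hjm, _, h⟩
    · have hv : (m : ℕ) = K + (j : ℕ) := congrArg (fun t : Fin J => (t : ℕ)) h
      omega
    · exact hjm ((it1_inj hJ h).symm)
  have hit1B_notW : ∀ x : Fin K, x ∈ B → ∀ j, it1 hJ x ∉ W j := by
    intro x hxB j hjW
    rcases hWmem j _ hjW with h | ⟨hjm, hjB, h⟩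
    · have hv : (x : ℕ) = K + (j : ℕ) := congrArg (fun t : Fin J => (t : ℕ)) h
      have := x.isLt; omega
    · exact hjB ((it1_inj hJ h) ▸ hxB)
  -- nonvanishing of the θ-side `basis m` coefficient
  have hPm : (∏ j, ∏ i' ∈ W j, (θ i' (basis m) - c i')) ≠ 0 := by
    rw [Finset.prod_ne_zero_iff]
    intro j _
    by_cases hjm : j = m
    · subst hjm
      rw [hWm, Finset.prod_singleton, hc2m,
        maxEq hR1 (qit2 hJ hC1 j) (basis_self j)]
      exact sub_ne_zero_of_ne (ne_of_gt hA2)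
    · by_cases hjB : j ∈ B
      · rw [hWB j hjm hjB, Finset.prod_singleton, hc2B j hjm hjB]
        exact sub_ne_zero_of_ne (ne_of_lt (ltMax hR2 (qit2 hJ hC1 j) (basis_ne hjm)))
      · rw [hWe j hjm hjB, Finset.prod_pair (it1_ne_it2 hJ j j)]
        have hchj := hch j hjm hjB
        refine mul_ne_zero ?_ ?_
        · rw [hc1 j]
          cases hcj : ch j with
          | true =>
              rw [if_pos rfl]
              rw [hcj, if_pos rfl] at hchj
              exact sub_ne_zero_of_ne hchj
          | false =>
              rw [if_neg Bool.false_ne_true]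
              exact sub_ne_zero_of_ne (ne_of_lt (ltMax hR2 (qit1 hJ hC1 j) (basis_ne hjm)))
        · rw [hc2e j hjm hjB]
          cases hcj : ch j with
          | true =>
              rw [if_pos rfl]
              exact sub_ne_zero_of_ne (ne_of_lt (ltMax hR2 (qit2 hJ hC1 j) (basis_ne hjm)))
          | false =>
              rw [if_neg Bool.false_ne_true]
              rw [hcj, if_neg Bool.false_ne_true] at hchj
              exact sub_ne_zero_of_ne hchj
  -- the extra-constants function
  have him_jst : it1 hJ m ≠ jst := by
    intro h
    have hv : (m : ℕ) = (jst : ℕ) := congrArg (fun t : Fin J => (t : ℕ)) h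
    omega
  obtain ⟨cV, hcVjst, hcVim, hcVB⟩ : ∃ cV : Fin J → ℝ,
      cV jst = θ jst (allZero K) ∧
      cV (it1 hJ m) = θ (it1 hJ m) (allOne K) ∧
      (∀ x : Fin K, x ≠ m → cV (it1 hJ x) = θb (it1 hJ x) (allOne K)) := by
    refine ⟨fun i => if i = jst then θ jst (allZero K)
      else if i = it1 hJ m then θ (it1 hJ m) (allOne K) else θb i (allOne K),
      by simp, ?_, ?_⟩
    · beta_reduce
      rw [if_neg him_jst, if_pos rfl]
    · intro x hxm
      have h1 : it1 hJ x ≠ jst := by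
        intro h
        have hv : (x : ℕ) = (jst : ℕ) := congrArg (fun t : Fin J => (t : ℕ)) h
        have := x.isLt; omega
      have h2 : it1 hJ x ≠ it1 hJ m := fun h => hxm (it1_inj hJ h)
      beta_reduce
      rw [if_neg h1, if_neg h2]
  -- support determines a profile
  have suppinj : ∀ β γ : Fin K → Bool,
      Finset.univ.filter (fun x => β x = true) = Finset.univ.filter (fun x => γ x = true) →
      β = γ := by
    intro β γ h
    funext x
    have hx := Finset.ext_iff.mp h x
    simp only [Finset.mem_filter, Finset.mem_univ, true_and] at hx
    cases hb : β x <;> cases hg : γ x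
    · rfl
    · rw [hb, hg] at hx; simpa using hx.mpr rfl
    · rw [hb, hg] at hx; simpa using hx.mp rfl
    · rfl
  have hzero_of_card : ∀ β : Fin K → Bool,
      (Finset.univ.filter (fun x => β x = true)).card = 0 → β = allZero K := by
    intro β hc
    have he := Finset.card_eq_zero.mp hc
    funext x
    cases hb : β x
    · rfl
    · exfalso
      have hmem : x ∈ Finset.univ.filter (fun x => β x = true) := by simp [hb]
      rw [he] at hmem
      exact absurd hmem (Finset.notMem_empty x)
  -- the triangular induction
  have key : ∀ n : ℕ, ∀ α : Fin K → Bool,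
      (Finset.univ.filter (fun x => α x = true)).card ≤ n →
      (∏ j, ∏ i' ∈ W j, (θb i' α - c i')) * ((θb jst α - θ jst (allZero K)) * pb α) = 0 := by
    intro n
    induction n with
    | zero =>
        intro α hcard
        have hα := hzero_of_card α (Nat.le_zero.mp hcard)
        subst hα
        rw [← hz, sub_self, zero_mul, mul_zero]
    | succ n ih =>
        intro α hcard
        by_cases hα0 : α = allZero K
        · subst hα0
          rw [← hz, sub_self, zero_mul, mul_zero]
        by_cases hsupp : ∀ x, α x = true → x ∈ B
        swap
        · push_neg at hsupp
          obtain ⟨x, hxt, hxB⟩ := hsupp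
          rw [hQvan α ⟨x, hxt, hxB⟩, zero_mul]
        -- the main case
        set Bf := B.filter (fun x => α x = false) with hBf
        set Vα : Finset (Fin J) :=
          insert jst (insert (it1 hJ m) (Bf.image (fun x => it1 hJ x))) with hVαdef
        have hjst_ni : jst ∉ insert (it1 hJ m) (Bf.image (fun x => it1 hJ x)) := by
          intro hmem
          rcases Finset.mem_insert.mp hmem with h | h
          · exact him_jst h.symm
          · obtain ⟨x, _, hx⟩ := Finset.mem_image.mp h
            have hv : (x : ℕ) = (jst : ℕ) := congrArg (fun t : Fin J => (t : ℕ)) hx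
            have := x.isLt; omega
        have him_ni : it1 hJ m ∉ Bf.image (fun x => it1 hJ x) := by
          intro hmem
          obtain ⟨x, hx, hxe⟩ := Finset.mem_image.mp hmem
          have : x = m := it1_inj hJ hxe
          rw [this] at hx
          exact hmB (Finset.mem_filter.mp hx).1
        have hVsub : ∀ i' ∈ Vα, ∀ j, i' ∉ W j := by
          intro i' hi' j
          rcases Finset.mem_insert.mp hi' with h | h
          · rw [h]; exact hjst_notW j
          rcases Finset.mem_insert.mp h with h | h
          · rw [h]; exact hit1m_notW j
          · obtain ⟨x, hx, rfl⟩ := Finset.mem_image.mp h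
            exact hit1B_notW x (Finset.mem_filter.mp hx).1 j
        have hVexp : ∀ (g : Fin J → (Fin K → Bool) → ℝ) (β : Fin K → Bool),
            ∏ i' ∈ Vα, (g i' β - cV i') = (g jst β - θ jst (allZero K)) *
              ((g (it1 hJ m) β - θ (it1 hJ m) (allOne K)) *
               ∏ x ∈ Bf, (g (it1 hJ x) β - θb (it1 hJ x) (allOne K))) := by
          intro g β
          rw [hVαdef, Finset.prod_insert hjst_ni, Finset.prod_insert him_ni,
            Finset.prod_image (fun x _ y _ h => it1_inj hJ h), hcVjst, hcVim]
          congr 2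
          refine Finset.prod_congr rfl fun x hx => ?_
          have hxm : x ≠ m := by
            intro he
            rw [he] at hx
            exact hmB (Finset.mem_filter.mp hx).1
          rw [hcVB x hxm]
        have hEα := KLsplitL hJ hT W hW c cV m hk Vα hVsub
        have hL0 : ∏ i' ∈ Vα, (θ i' (allZero K) - cV i') = 0 := by
          rw [hVexp θ (allZero K), sub_self, zero_mul]
        have hLm : ∏ i' ∈ Vα, (θ i' (basis m) - cV i') = 0 := by
          rw [hVexp θ (basis m), maxEq hR1 (qit1 hJ hC1 m) (basis_self m), sub_self]
          ring
        rw [hL0, hLm, zero_mul, mul_zero, zero_mul, mul_zero, add_zero] at hEα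
        have hterm : ∀ β ∈ (Finset.univ : Finset (Fin K → Bool)), β ≠ α →
            (∏ j, ∏ i' ∈ W j, (θb i' β - c i')) *
              ((∏ i' ∈ Vα, (θb i' β - cV i')) * pb β) = 0 := by
          intro β _ hβα
          by_cases hsuppβ : ∀ x, β x = true → x ∈ B
          · by_cases hcross : ∃ x ∈ Bf, β x = true
            · obtain ⟨x, hxBf, hxt⟩ := hcross
              have hxm : x ≠ m := by
                intro he; rw [he] at hxBf
                exact hmB (Finset.mem_filter.mp hxBf).1
              have hfac : θb (it1 hJ x) β - cV (it1 hJ x) = 0 := by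
                rw [hcVB x hxm, sub_eq_zero]
                exact maxEq hR1b (qit1 hJ hC1 x) hxt
              have hmemV : it1 hJ x ∈ Vα := by
                rw [hVαdef]
                exact Finset.mem_insert_of_mem (Finset.mem_insert_of_mem
                  (Finset.mem_image.mpr ⟨x, hxBf, rfl⟩))
              rw [Finset.prod_eq_zero hmemV hfac, zero_mul, mul_zero]
            · push_neg at hcross
              have hsub : Finset.univ.filter (fun x => β x = true) ⊆
                  Finset.univ.filter (fun x => α x = true) := by
                intro x hx
                simp only [Finset.mem_filter, Finset.mem_univ, true_and] at hx ⊢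
                by_contra hax
                have haxf : α x = false := by
                  cases hxx : α x
                  · rfl
                  · exact absurd hxx hax
                have hxB : x ∈ B := hsuppβ x hx
                have hxBf : x ∈ Bf := by
                  rw [hBf]; exact Finset.mem_filter.mpr ⟨hxB, haxf⟩
                exact (hcross x hxBf) hx
              have hss : Finset.univ.filter (fun x => β x = true) ⊂
                  Finset.univ.filter (fun x => α x = true) :=
                Finset.ssubset_iff_subset_ne.mpr ⟨hsub, fun he => hβα (suppinj β α he)⟩
              have hcd := Finset.card_lt_card hss
              have hIH := ih β (by omega)
              rw [hVexp θb β]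
              linear_combination ((θb (it1 hJ m) β - θ (it1 hJ m) (allOne K)) *
                ∏ x ∈ Bf, (θb (it1 hJ x) β - θb (it1 hJ x) (allOne K))) * hIH
          · push_neg at hsuppβ
            obtain ⟨x, hxt, hxB⟩ := hsuppβ
            rw [hQvan β ⟨x, hxt, hxB⟩, zero_mul]
        rw [Finset.sum_eq_single_of_mem α (Finset.mem_univ α) hterm] at hEα
        rw [hVexp θb α] at hEα
        have hfac1 : θb (it1 hJ m) α - θ (it1 hJ m) (allOne K) ≠ 0 :=
          sub_ne_zero_of_ne (ne_of_lt (lt_of_le_of_lt (leMax hR1b _ _) hA1))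
        have hfac2 : (∏ x ∈ Bf, (θb (it1 hJ x) α - θb (it1 hJ x) (allOne K))) ≠ 0 := by
          rw [Finset.prod_ne_zero_iff]
          intro x hx
          exact sub_ne_zero_of_ne (ne_of_lt (ltMax hR2b (qit1 hJ hC1 x)
            (Finset.mem_filter.mp hx).2))
        have hzero : (∏ j, ∏ i' ∈ W j, (θb i' α - c i')) *
            ((θb jst α - θ jst (allZero K)) * pb α) *
            ((θb (it1 hJ m) α - θ (it1 hJ m) (allOne K)) *
             ∏ x ∈ Bf, (θb (it1 hJ x) α - θb (it1 hJ x) (allOne K))) = 0 := by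
          linear_combination -hEα
        rcases mul_eq_zero.mp hzero with h | h
        · exact h
        · exact absurd h (mul_ne_zero hfac1 hfac2)
  -- the final contradiction
  have hV1 : ∀ i' ∈ ({jst} : Finset (Fin J)), ∀ j, i' ∉ W j := by
    intro x hx j
    rw [Finset.mem_singleton.mp hx]
    exact hjst_notW j
  have hE' := KLsplitL hJ hT W hW c cV m hk {jst} hV1
  simp only [Finset.prod_singleton, hcVjst, sub_self, zero_mul, mul_zero, zero_add] at hE'
  have hsum0 : ∑ β : Fin K → Bool,
      (∏ j, ∏ i' ∈ W j, (θb i' β - c i')) * ((θb jst β - θ jst (allZero K)) * pb β) = 0 :=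
    Finset.sum_eq_zero fun β _ =>
      key (Finset.univ.filter (fun x => β x = true)).card β le_rfl
  rw [hsum0] at hE'
  have hne : (∏ j, ∏ i' ∈ W j, (θ i' (basis m) - c i')) *
      ((θ jst (basis m) - θ jst (allZero K)) * p (basis m)) ≠ 0 :=
    mul_ne_zero hPm (mul_ne_zero (sub_ne_zero_of_ne hjstC2) (ne_of_gt (hp.1 _).1))
  exact hne hE'

lemma noBlocked (hJ : 2 * K ≤ J)
    (hp : PValid p) (hpb : PValid pb)
    (hR1 : R1 Q θ) (hR1b : R1 Q θb) (hR2 : R2 Q θ) (hR2b : R2 Q θb)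
    (hC1 : C1 Q) (hC2 : C2 θ)
    (hT : ∀ r : Fin J → Bool, Tp θ p r = Tp θb pb r) :
    ∀ (j m : Fin K), j ≠ m →
      ¬(θ (it1 hJ j) (basis m) = θb (it1 hJ j) (allOne K) ∧
        θ (it2 hJ j) (basis m) = θb (it2 hJ j) (allOne K)) := by
  classical
  intro j m hjm hbl
  have hA1 : θb (it1 hJ j) (allOne K) < θ (it1 hJ j) (allOne K) := by
    rw [← hbl.1]
    exact ltMax hR2 (qit1 hJ hC1 j) (basis_ne hjm)
  have hA2 : θb (it2 hJ j) (allOne K) < θ (it2 hJ j) (allOne K) := by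
    rw [← hbl.2]
    exact ltMax hR2 (qit2 hJ hC1 j) (basis_ne hjm)
  set B : Finset (Fin K) := Finset.univ.filter (fun x => x ≠ j ∧
      θ (it1 hJ x) (basis j) = θb (it1 hJ x) (allOne K) ∧
      θ (it2 hJ x) (basis j) = θb (it2 hJ x) (allOne K)) with hBdef2
  by_cases hBe : B = ∅
  · have hnb : ∀ x : Fin K, x ≠ j →
        ¬(θ (it1 hJ x) (basis j) = θb (it1 hJ x) (allOne K) ∧
          θ (it2 hJ x) (basis j) = θb (it2 hJ x) (allOne K)) := by
      intro x hxj hc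
      have hmem : x ∈ B := by
        rw [hBdef2]
        exact Finset.mem_filter.mpr ⟨Finset.mem_univ x, hxj, hc.1, hc.2⟩
      rw [hBe] at hmem
      exact absurd hmem (Finset.notMem_empty x)
    have := (SL1 hJ hp hpb hR1 hR1b hR2 hR2b hC1 hC2 hT j hnb).1
    exact absurd this (ne_of_gt hA1)
  · obtain ⟨j0, hj0⟩ := Finset.nonempty_iff_ne_empty.mpr hBe
    have hj0p := Finset.mem_filter.mp hj0
    obtain ⟨jst, hjst2K, hjstC2⟩ := hC2 j
    have hz := SL2 hJ hp hpb hR1 hR1b hR2 hR2b hC1 hT j j0 hj0p.2.1 hj0p.2.2.1 jst hjst2K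
    have hmB : j ∉ B := by
      rw [hBdef2]
      intro hmem
      exact (Finset.mem_filter.mp hmem).2.1 rfl
    refine SL3 hJ hp hpb hR1 hR1b hR2 hR2b hC1 hT j B hmB ?_ ?_ hA1 hA2 jst hjst2K hjstC2 hz
    · intro x hx
      exact (Finset.mem_filter.mp hx).2.2.1
    · intro x hxj hxB hc
      exact hxB (by
        rw [hBdef2]
        exact Finset.mem_filter.mpr ⟨Finset.mem_univ x, hxj, hc.1, hc.2⟩)

lemma Em (hJ : 2 * K ≤ J)
    (hp : PValid p) (hpb : PValid pb)
    (hR1 : R1 Q θ) (hR1b : R1 Q θb) (hR2 : R2 Q θ) (hR2b : R2 Q θb)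
    (hC1 : C1 Q) (hC2 : C2 θ)
    (hT : ∀ r : Fin J → Bool, Tp θ p r = Tp θb pb r) (m : Fin K) :
    θ (it1 hJ m) (allOne K) = θb (it1 hJ m) (allOne K) ∧
    θ (it2 hJ m) (allOne K) = θb (it2 hJ m) (allOne K) :=
  SL1 hJ hp hpb hR1 hR1b hR2 hR2b hC1 hC2 hT m
    (fun j hj => noBlocked hJ hp hpb hR1 hR1b hR2 hR2b hC1 hC2 hT j m hj)

end Main

end Lemma2Aux

/-- **Lemma 2.** Under the standing hypotheses, for all `k ≠ h`, the four stated
inequalities hold for items `k` and `K + k`. -/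
theorem lemma2_inequalities
    {J K : ℕ} (hJ : 2 * K ≤ J) (Q : Fin J → Fin K → Bool)
    (θ θb : Fin J → (Fin K → Bool) → ℝ) (p pb : (Fin K → Bool) → ℝ)
    (hθ : ThetaValid θ) (hθb : ThetaValid θb) (hp : PValid p) (hpb : PValid pb)
    (hR1 : R1 Q θ) (hR1b : R1 Q θb) (hR2 : R2 Q θ) (hR2b : R2 Q θb)
    (hC1 : C1 Q) (hC2 : C2 θ)
    (hT : ∀ r : Fin J → Bool, Tp θ p r = Tp θb pb r) :
    ∀ (k h : Fin K), k ≠ h →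
      ∀ (h1 : (k : ℕ) < J) (h2 : K + (k : ℕ) < J),
      θ ⟨(k : ℕ), h1⟩ (basis h) ≠ θb ⟨(k : ℕ), h1⟩ (allOne K) ∧
      θ ⟨(k : ℕ), h1⟩ (allOne K) ≠ θb ⟨(k : ℕ), h1⟩ (basis h) ∧
      θ ⟨K + (k : ℕ), h2⟩ (basis h) ≠ θb ⟨K + (k : ℕ), h2⟩ (allOne K) ∧
      θ ⟨K + (k : ℕ), h2⟩ (allOne K) ≠ θb ⟨K + (k : ℕ), h2⟩ (basis h) := by
  intro k h hkh h1 h2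
  have hit1 : (⟨(k : ℕ), h1⟩ : Fin J) = Lemma2Aux.it1 hJ k := rfl
  have hit2 : (⟨K + (k : ℕ), h2⟩ : Fin J) = Lemma2Aux.it2 hJ k := rfl
  obtain ⟨hE1, hE2⟩ := Lemma2Aux.Em hJ hp hpb hR1 hR1b hR2 hR2b hC1 hC2 hT k
  rw [hit1, hit2]
  have hlt1 : θ (Lemma2Aux.it1 hJ k) (basis h) < θ (Lemma2Aux.it1 hJ k) (allOne K) :=
    Lemma2Aux.ltMax hR2 (Lemma2Aux.qit1 hJ hC1 k) (Lemma2Aux.basis_ne hkh)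
  have hlt1b : θb (Lemma2Aux.it1 hJ k) (basis h) < θb (Lemma2Aux.it1 hJ k) (allOne K) :=
    Lemma2Aux.ltMax hR2b (Lemma2Aux.qit1 hJ hC1 k) (Lemma2Aux.basis_ne hkh)
  have hlt2 : θ (Lemma2Aux.it2 hJ k) (basis h) < θ (Lemma2Aux.it2 hJ k) (allOne K) :=
    Lemma2Aux.ltMax hR2 (Lemma2Aux.qit2 hJ hC1 k) (Lemma2Aux.basis_ne hkh)
  have hlt2b : θb (Lemma2Aux.it2 hJ k) (basis h) < θb (Lemma2Aux.it2 hJ k) (allOne K) :=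
    Lemma2Aux.ltMax hR2b (Lemma2Aux.qit2 hJ hC1 k) (Lemma2Aux.basis_ne hkh)
  refine ⟨fun hcon => ?_, fun hcon => ?_, fun hcon => ?_, fun hcon => ?_⟩
  · linarith
  · linarith
  · linarith
  · linarith
end

section
/- (Step 1 of the proof of Theorem 1.) Under the standing hypotheses, θ_{j,0} = θ̄_{j,0} for every item j with j > 2K, where 0 is the all-zeros attribute profile. -/
open Finset

lemma my_tEntry_update {J K : ℕ} (θ : Fin J → (Fin K → Bool) → ℝ)
    (r : Fin J → Bool) (a : Fin J) (ha : r a = false) (α : Fin K → Bool) :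
    tEntry θ (Function.update r a true) α = θ a α * tEntry θ r α := by
  unfold tEntry
  rw [← Finset.mul_prod_erase Finset.univ
      (fun j => if Function.update r a true j then θ j α else 1) (Finset.mem_univ a),
    ← Finset.mul_prod_erase Finset.univ
      (fun j => if r j then θ j α else 1) (Finset.mem_univ a)]
  rw [Function.update_self, ha, if_pos rfl, if_neg (by simp), one_mul]
  congr 1
  refine Finset.prod_congr rfl fun j hj => ?_
  rw [Function.update_of_ne (Finset.ne_of_mem_erase hj)]

lemma my_combo {J K : ℕ} (θ θb : Fin J → (Fin K → Bool) → ℝ)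
    (p pb : (Fin K → Bool) → ℝ)
    (hT : ∀ r : Fin J → Bool, Tp θ p r = Tp θb pb r) (S : Finset (Fin J)) :
    ∀ (c : Fin J → ℝ) (r : Fin J → Bool), (∀ j ∈ S, r j = false) →
      ∑ α : Fin K → Bool, (∏ j ∈ S, (θ j α - c j)) * tEntry θ r α * p α
        = ∑ α : Fin K → Bool, (∏ j ∈ S, (θb j α - c j)) * tEntry θb r α * pb α := by
  classical
  induction S using Finset.induction_on with
  | empty =>
    intro c r _
    simpa [Tp] using hT r
  | @insert a S ha ih =>
    intro c r hr
    have hra : r a = false := hr a (Finset.mem_insert_self a S)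
    have key : ∀ (θ' : Fin J → (Fin K → Bool) → ℝ) (p' : (Fin K → Bool) → ℝ),
        (∑ α : Fin K → Bool, (∏ j ∈ insert a S, (θ' j α - c j)) * tEntry θ' r α * p' α)
          = (∑ α : Fin K → Bool, (∏ j ∈ S, (θ' j α - c j)) *
              tEntry θ' (Function.update r a true) α * p' α)
            - c a * ∑ α : Fin K → Bool, (∏ j ∈ S, (θ' j α - c j)) * tEntry θ' r α * p' α := by
      intro θ' p'
      rw [Finset.mul_sum, ← Finset.sum_sub_distrib]
      refine Finset.sum_congr rfl fun α _ => ?_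
      rw [Finset.prod_insert ha, my_tEntry_update θ' r a hra α]
      ring
    rw [key θ p, key θb pb]
    rw [ih c (Function.update r a true) (fun j hj => by
        rw [Function.update_of_ne (fun h : j = a => ha (h ▸ hj))]
        exact hr j (Finset.mem_insert_of_mem hj)),
      ih c r (fun j hj => hr j (Finset.mem_insert_of_mem hj))]

/-- **Step 1.** Under the standing hypotheses, `θ_{j,0} = θ̄_{j,0}` for every item
`j > 2K`. -/
theorem step1_theta_zero_eq
    {J K : ℕ} (hJ : 2 * K ≤ J) (Q : Fin J → Fin K → Bool)
    (θ θb : Fin J → (Fin K → Bool) → ℝ) (p pb : (Fin K → Bool) → ℝ)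
    (hθ : ThetaValid θ) (hθb : ThetaValid θb) (hp : PValid p) (hpb : PValid pb)
    (hR1 : R1 Q θ) (hR1b : R1 Q θb) (hR2 : R2 Q θ) (hR2b : R2 Q θb)
    (hC1 : C1 Q) (hC2 : C2 θ)
    (hT : ∀ r : Fin J → Bool, Tp θ p r = Tp θb pb r) :
    ∀ j : Fin J, 2 * K ≤ (j : ℕ) → θ j (allZero K) = θb j (allZero K) := by
  classical
  intro j hj
  have hi1lt : ∀ k : Fin K, (k : ℕ) < J := fun k => by have := k.isLt; omega
  have hi2lt : ∀ k : Fin K, K + (k : ℕ) < J := fun k => by have := k.isLt; omega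
  set i1 : Fin K → Fin J := fun k => ⟨k, hi1lt k⟩ with i1def
  set i2 : Fin K → Fin J := fun k => ⟨K + k, hi2lt k⟩ with i2def
  have hQ1 : ∀ k, Q (i1 k) = basis k := fun k => (hC1 k (hi1lt k) (hi2lt k)).1
  have hQ2 : ∀ k, Q (i2 k) = basis k := fun k => (hC1 k (hi1lt k) (hi2lt k)).2
  have hv1 : ∀ k : Fin K, ((i1 k : Fin J) : ℕ) = (k : ℕ) := fun k => rfl
  have hv2 : ∀ k : Fin K, ((i2 k : Fin J) : ℕ) = K + (k : ℕ) := fun k => rfl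
  have hne12 : ∀ k, i1 k ≠ i2 k := by
    intro k h
    have h2 := congrArg Fin.val h
    rw [hv1, hv2] at h2
    have := k.isLt; omega
  have dom_basis : ∀ (k : Fin K) (α : Fin K → Bool), α k = true → dominates α (basis k) := by
    intro k α h i hi
    have hik : i = k := by simpa [basis] using hi
    subst hik; exact h
  have dom_one : ∀ (v : Fin K → Bool), dominates (allOne K) v := fun v i _ => rfl
  have eq_one : ∀ (θ' : Fin J → (Fin K → Bool) → ℝ), R1 Q θ' → ∀ (k : Fin K) (jj : Fin J),
      Q jj = basis k → ∀ α, α k = true → θ' jj α = θ' jj (allOne K) := by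
    intro θ' h k jj hQ α hα
    exact (h jj).1 α (allOne K) (by rw [hQ]; exact dom_basis k α hα) (by rw [hQ]; exact dom_one _)
  have ge_zero : ∀ (θ' : Fin J → (Fin K → Bool) → ℝ), R1 Q θ' → ∀ (jj : Fin J) (α : Fin K → Bool),
      θ' jj (allZero K) ≤ θ' jj α := fun θ' h jj α => (h jj).2.2 α
  have le_one : ∀ (θ' : Fin J → (Fin K → Bool) → ℝ), R1 Q θ' → ∀ (k : Fin K) (jj : Fin J),
      Q jj = basis k → ∀ α, θ' jj α ≤ θ' jj (allOne K) := by
    intro θ' h k jj hQ α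
    exact (h jj).2.1 (allOne K) α (by rw [hQ]; exact dom_basis k _ rfl)
  have ht1 : ∀ (θ' : Fin J → (Fin K → Bool) → ℝ) (α : Fin K → Bool),
      tEntry θ' (fun _ : Fin J => false) α = 1 := by intro θ' α; simp [tEntry]
  -- Step A
  have stepA : ∀ k : Fin K, θ (i1 k) (allZero K) = θb (i1 k) (allOne K) →
      θ (i2 k) (allZero K) ≠ θb (i2 k) (allOne K) := by
    intro k e1 e2
    set c : Fin J → ℝ := fun i => if i = i1 k then θ (i1 k) (allZero K) else θ (i2 k) (allOne K)
      with cdef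
    have hcomb := my_combo θ θb p pb hT {i1 k, i2 k} c (fun _ => false) (fun _ _ => rfl)
    have hpp : ∀ (θ' : Fin J → (Fin K → Bool) → ℝ) (α : Fin K → Bool),
        (∏ i ∈ ({i1 k, i2 k} : Finset (Fin J)), (θ' i α - c i))
          = (θ' (i1 k) α - θ (i1 k) (allZero K)) * (θ' (i2 k) α - θ (i2 k) (allOne K)) := by
      intro θ' α
      rw [Finset.prod_pair (hne12 k)]
      have e1' : c (i1 k) = θ (i1 k) (allZero K) := if_pos rfl
      have e2' : c (i2 k) = θ (i2 k) (allOne K) := if_neg (Ne.symm (hne12 k))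
      rw [e1', e2']
    have hL : (∑ α : Fin K → Bool,
        (∏ i ∈ ({i1 k, i2 k} : Finset (Fin J)), (θ i α - c i)) *
          tEntry θ (fun _ : Fin J => false) α * p α) ≤ 0 := by
      apply Finset.sum_nonpos
      intro α _
      rw [hpp θ α, ht1 θ α, mul_one]
      cases h : α k with
      | false =>
        have h1 : 0 ≤ θ (i1 k) α - θ (i1 k) (allZero K) := sub_nonneg.mpr (ge_zero θ hR1 _ α)
        have h2 : θ (i2 k) α - θ (i2 k) (allOne K) < 0 :=
          sub_neg.mpr (hR2 k (i2 k) (hQ2 k) α h)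
        have hpα := (hp.1 α).1
        have hAB : (θ (i1 k) α - θ (i1 k) (allZero K)) * (θ (i2 k) α - θ (i2 k) (allOne K)) ≤ 0 :=
          mul_nonpos_iff.mpr (Or.inl ⟨h1, h2.le⟩)
        exact mul_nonpos_iff.mpr (Or.inr ⟨hAB, hpα.le⟩)
      | true =>
        rw [eq_one θ hR1 k (i2 k) (hQ2 k) α h, sub_self, mul_zero, zero_mul]
    have hR : 0 < (∑ α : Fin K → Bool,
        (∏ i ∈ ({i1 k, i2 k} : Finset (Fin J)), (θb i α - c i)) *
          tEntry θb (fun _ : Fin J => false) α * pb α) := by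
      apply Finset.sum_pos'
      · intro α _
        rw [hpp θb α, ht1 θb α, mul_one]
        cases h : α k with
        | false =>
          have h1 : θb (i1 k) α - θ (i1 k) (allZero K) < 0 := by
            rw [e1]; exact sub_neg.mpr (hR2b k (i1 k) (hQ1 k) α h)
          have h2 : θb (i2 k) α - θ (i2 k) (allOne K) < 0 := by
            have ha1 : θb (i2 k) α ≤ θb (i2 k) (allOne K) := le_one θb hR1b k (i2 k) (hQ2 k) α
            have ha2 : θ (i2 k) (allZero K) < θ (i2 k) (allOne K) :=
              hR2 k (i2 k) (hQ2 k) (allZero K) rfl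
            rw [← e2] at ha1
            linarith
          exact le_of_lt (mul_pos (mul_pos_of_neg_of_neg h1 h2) (hpb.1 α).1)
        | true =>
          rw [eq_one θb hR1b k (i1 k) (hQ1 k) α h, ← e1, sub_self, zero_mul, zero_mul]
      · refine ⟨allZero K, Finset.mem_univ _, ?_⟩
        rw [hpp θb (allZero K), ht1 θb (allZero K), mul_one]
        have h1 : θb (i1 k) (allZero K) - θ (i1 k) (allZero K) < 0 := by
          rw [e1]; exact sub_neg.mpr (hR2b k (i1 k) (hQ1 k) (allZero K) rfl)
        have h2 : θb (i2 k) (allZero K) - θ (i2 k) (allOne K) < 0 := by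
          have ha1 : θb (i2 k) (allZero K) ≤ θb (i2 k) (allOne K) :=
            le_one θb hR1b k (i2 k) (hQ2 k) (allZero K)
          have ha2 : θ (i2 k) (allZero K) < θ (i2 k) (allOne K) :=
            hR2 k (i2 k) (hQ2 k) (allZero K) rfl
          rw [← e2] at ha1
          linarith
        exact mul_pos (mul_pos_of_neg_of_neg h1 h2) (hpb.1 _).1
    linarith
  -- choices of constants
  set c1 : Fin K → ℝ := fun k =>
    if θ (i1 k) (allZero K) = θb (i1 k) (allOne K) then θ (i1 k) (allOne K)
    else θb (i1 k) (allOne K) with c1def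
  set c2 : Fin K → ℝ := fun k =>
    if θ (i1 k) (allZero K) = θb (i1 k) (allOne K) then θb (i2 k) (allOne K)
    else θ (i2 k) (allOne K) with c2def
  set c : Fin J → ℝ := fun i =>
    if h : (i : ℕ) < K then c1 ⟨i, h⟩
    else if h2 : (i : ℕ) - K < K then c2 ⟨(i : ℕ) - K, h2⟩ else 0 with cdef
  have hc1 : ∀ k, c (i1 k) = c1 k := by
    intro k
    show (if h : ((i1 k : Fin J) : ℕ) < K then c1 ⟨((i1 k : Fin J) : ℕ), h⟩
      else if h2 : ((i1 k : Fin J) : ℕ) - K < K then c2 ⟨((i1 k : Fin J) : ℕ) - K, h2⟩ else 0)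
      = c1 k
    rw [dif_pos (show ((i1 k : Fin J) : ℕ) < K from k.isLt)]
  have hc2 : ∀ k, c (i2 k) = c2 k := by
    intro k
    show (if h : ((i2 k : Fin J) : ℕ) < K then c1 ⟨((i2 k : Fin J) : ℕ), h⟩
      else if h2 : ((i2 k : Fin J) : ℕ) - K < K then c2 ⟨((i2 k : Fin J) : ℕ) - K, h2⟩ else 0)
      = c2 k
    rw [dif_neg (show ¬((i2 k : Fin J) : ℕ) < K by have := hv2 k; omega),
      dif_pos (show ((i2 k : Fin J) : ℕ) - K < K by have := hv2 k; have := k.isLt; omega)]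
    exact congrArg c2 (Fin.ext (show ((i2 k : Fin J) : ℕ) - K = (k : ℕ) by have := hv2 k; omega))
  -- zero / nonzero properties
  have hz : ∀ (k : Fin K) (α : Fin K → Bool), α k = true →
      (θ (i1 k) α - c1 k) * (θ (i2 k) α - c2 k) = 0 := by
    intro k α h
    by_cases he : θ (i1 k) (allZero K) = θb (i1 k) (allOne K)
    · rw [c1def]; simp only [if_pos he]
      rw [eq_one θ hR1 k (i1 k) (hQ1 k) α h, sub_self, zero_mul]
    · rw [c2def]; simp only [if_neg he]
      rw [eq_one θ hR1 k (i2 k) (hQ2 k) α h, sub_self, mul_zero]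
  have hzb : ∀ (k : Fin K) (α : Fin K → Bool), α k = true →
      (θb (i1 k) α - c1 k) * (θb (i2 k) α - c2 k) = 0 := by
    intro k α h
    by_cases he : θ (i1 k) (allZero K) = θb (i1 k) (allOne K)
    · rw [c2def]; simp only [if_pos he]
      rw [eq_one θb hR1b k (i2 k) (hQ2 k) α h, sub_self, mul_zero]
    · rw [c1def]; simp only [if_neg he]
      rw [eq_one θb hR1b k (i1 k) (hQ1 k) α h, sub_self, zero_mul]
  have hnz : ∀ k : Fin K,
      (θ (i1 k) (allZero K) - c1 k) * (θ (i2 k) (allZero K) - c2 k) ≠ 0 := by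
    intro k
    by_cases he : θ (i1 k) (allZero K) = θb (i1 k) (allOne K)
    · rw [c1def, c2def]; simp only [if_pos he]
      exact mul_ne_zero
        (sub_ne_zero.mpr (ne_of_lt (hR2 k (i1 k) (hQ1 k) (allZero K) rfl)))
        (sub_ne_zero.mpr (stepA k he))
    · rw [c1def, c2def]; simp only [if_neg he]
      exact mul_ne_zero (sub_ne_zero.mpr he)
        (sub_ne_zero.mpr (ne_of_lt (hR2 k (i2 k) (hQ2 k) (allZero K) rfl)))
  -- the index set
  set S : Finset (Fin J) := Finset.univ.image i1 ∪ Finset.univ.image i2 with Sdef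
  have hinj1 : ∀ a ∈ Finset.univ, ∀ b ∈ Finset.univ, i1 a = i1 b → a = b := by
    intro a _ b _ h
    have h2 := congrArg Fin.val h
    rw [hv1, hv1] at h2
    exact Fin.ext h2
  have hinj2 : ∀ a ∈ Finset.univ, ∀ b ∈ Finset.univ, i2 a = i2 b → a = b := by
    intro a _ b _ h
    have h2 := congrArg Fin.val h
    rw [hv2, hv2] at h2
    exact Fin.ext (by omega)
  have hdisj : Disjoint (Finset.univ.image i1) (Finset.univ.image i2) := by
    rw [Finset.disjoint_left]
    intro x hx1 hx2
    obtain ⟨a, _, ha⟩ := Finset.mem_image.mp hx1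
    obtain ⟨b, _, hb⟩ := Finset.mem_image.mp hx2
    have h1 := congrArg Fin.val ha
    have h2 := congrArg Fin.val hb
    rw [hv1] at h1
    rw [hv2] at h2
    have := a.isLt; omega
  have hGS : ∀ (θ' : Fin J → (Fin K → Bool) → ℝ) (α : Fin K → Bool),
      (∏ i ∈ S, (θ' i α - c i))
        = ∏ k : Fin K, ((θ' (i1 k) α - c1 k) * (θ' (i2 k) α - c2 k)) := by
    intro θ' α
    rw [Sdef, Finset.prod_union hdisj, Finset.prod_image hinj1, Finset.prod_image hinj2,
      ← Finset.prod_mul_distrib]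
    exact Finset.prod_congr rfl fun k _ => by rw [hc1 k, hc2 k]
  have hSlt : ∀ i ∈ S, (i : ℕ) < 2 * K := by
    intro i hi
    rcases Finset.mem_union.mp hi with h | h
    · obtain ⟨a, _, ha⟩ := Finset.mem_image.mp h
      have h1 := congrArg Fin.val ha
      rw [hv1] at h1
      have := a.isLt; omega
    · obtain ⟨a, _, ha⟩ := Finset.mem_image.mp h
      have h1 := congrArg Fin.val ha
      rw [hv2] at h1
      have := a.isLt; omega
  -- concentration lemma
  have conc : ∀ (θ' : Fin J → (Fin K → Bool) → ℝ),
      (∀ (k : Fin K) (α : Fin K → Bool), α k = true →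
        (θ' (i1 k) α - c1 k) * (θ' (i2 k) α - c2 k) = 0) →
      ∀ (w : (Fin K → Bool) → ℝ),
      (∑ α : Fin K → Bool, (∏ i ∈ S, (θ' i α - c i)) * w α)
        = (∏ i ∈ S, (θ' i (allZero K) - c i)) * w (allZero K) := by
    intro θ' hz' w
    apply Finset.sum_eq_single
    · intro α _ hα
      have hex : ∃ k, α k = true := by
        by_contra hno
        push_neg at hno
        exact hα (funext fun k => by simpa [allZero] using hno k)
      obtain ⟨k, hk⟩ := hex
      rw [hGS θ' α, Finset.prod_eq_zero (Finset.mem_univ k) (hz' k α hk), zero_mul]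
    · intro h; exact absurd (Finset.mem_univ _) h
  -- the two evaluations
  have hrjS : ∀ i ∈ S, (fun i : Fin J => decide (i = j)) i = false := by
    intro i hi
    have := hSlt i hi
    exact decide_eq_false (fun h : i = j => by rw [h] at this; omega)
  have htj : ∀ (θ' : Fin J → (Fin K → Bool) → ℝ) (α : Fin K → Bool),
      tEntry θ' (fun i : Fin J => decide (i = j)) α = θ' j α := by
    intro θ' α
    simp only [tEntry, decide_eq_true_eq]
    rw [Finset.prod_ite_eq' Finset.univ j (fun i => θ' i α)]
    simp
  have E0 := my_combo θ θb p pb hT S c (fun _ => false) (fun _ _ => rfl)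
  have E1 := my_combo θ θb p pb hT S c (fun i : Fin J => decide (i = j)) hrjS
  simp only [mul_assoc] at E0 E1
  rw [conc θ hz (fun α => tEntry θ (fun _ : Fin J => false) α * p α),
    conc θb hzb (fun α => tEntry θb (fun _ : Fin J => false) α * pb α)] at E0
  rw [conc θ hz (fun α => tEntry θ (fun i : Fin J => decide (i = j)) α * p α),
    conc θb hzb (fun α => tEntry θb (fun i : Fin J => decide (i = j)) α * pb α)] at E1
  rw [ht1 θ, ht1 θb, one_mul, one_mul] at E0
  rw [htj θ, htj θb] at E1
  have hG0 : (∏ i ∈ S, (θ i (allZero K) - c i)) ≠ 0 := by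
    rw [hGS θ]
    exact Finset.prod_ne_zero_iff.mpr (fun k _ => hnz k)
  have hA : (∏ i ∈ S, (θ i (allZero K) - c i)) * p (allZero K) ≠ 0 :=
    mul_ne_zero hG0 (ne_of_gt (hp.1 _).1)
  have key : θ j (allZero K) * ((∏ i ∈ S, (θ i (allZero K) - c i)) * p (allZero K))
      = θb j (allZero K) * ((∏ i ∈ S, (θb i (allZero K) - c i)) * pb (allZero K)) := by
    linear_combination E1
  rw [← E0] at key
  exact mul_right_cancel₀ hA (by linarith [key])
end

section
/- (Step 2 of the proof of Theorem 1.) Under the standing hypotheses, θ_{j,e_k} = θ̄_{j,e_k} for every item j with j > 2K and every k ∈ {1, …, K}. -/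
open Finset

namespace Step2

open Classical

noncomputable section

variable {J K : ℕ}

/-- Bundle of the standing hypotheses. -/
structure Ctx (J K : ℕ) where
  hJ : 2 * K ≤ J
  Q : Fin J → Fin K → Bool
  th : Fin J → (Fin K → Bool) → ℝ
  thb : Fin J → (Fin K → Bool) → ℝ
  p : (Fin K → Bool) → ℝ
  pb : (Fin K → Bool) → ℝ
  hth : ThetaValid th
  hthb : ThetaValid thb
  hp : PValid p
  hpb : PValid pb
  hR1 : R1 Q th
  hR1b : R1 Q thb
  hR2 : R2 Q th
  hR2b : R2 Q thb
  hC1 : C1 Q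
  hC2 : C2 th
  hT : ∀ r : Fin J → Bool, Tp th p r = Tp thb pb r

variable (C : Ctx J K)

/-- first copy of attribute `k`'s identity item -/
def Ctx.itA (C : Ctx J K) (k : Fin K) : Fin J :=
  ⟨(k : ℕ), by have := k.isLt; have := C.hJ; omega⟩

/-- second copy -/
def Ctx.itB (C : Ctx J K) (k : Fin K) : Fin J :=
  ⟨K + (k : ℕ), by have := k.isLt; have := C.hJ; omega⟩

lemma itA_val (k : Fin K) : ((C.itA k : Fin J) : ℕ) = (k : ℕ) := rfl
lemma itB_val (k : Fin K) : ((C.itB k : Fin J) : ℕ) = K + (k : ℕ) := rfl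

lemma Ctx.QA (k : Fin K) : C.Q (C.itA k) = basis k :=
  (C.hC1 k (by have := k.isLt; have := C.hJ; omega)
    (by have := k.isLt; have := C.hJ; omega)).1
lemma Ctx.QB (k : Fin K) : C.Q (C.itB k) = basis k :=
  (C.hC1 k (by have := k.isLt; have := C.hJ; omega)
    (by have := k.isLt; have := C.hJ; omega)).2

lemma dominates_basis_iff (α : Fin K → Bool) (k : Fin K) :
    dominates α (basis k) ↔ α k = true := by
  constructor
  · intro h; exact h k (by simp [basis])
  · intro h i hi
    have : i = k := by simpa [basis] using hi
    subst this; exact h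

/-- value at a profile with `α k = true` equals the top value, for an item with row `e_k`. -/
lemma Ctx.top_eq {θ' : Fin J → (Fin K → Bool) → ℝ} (hR : R1 C.Q θ') {i : Fin J} {k : Fin K}
    (hQ : C.Q i = basis k) {α : Fin K → Bool} (h : α k = true) :
    θ' i α = θ' i (allOne K) := by
  refine (hR i).1 α (allOne K) ?_ ?_
  · rw [hQ]; exact (dominates_basis_iff α k).2 h
  · rw [hQ]; intro j _; rfl

lemma Ctx.le_top {θ' : Fin J → (Fin K → Bool) → ℝ} (hR : R1 C.Q θ') (i : Fin J)
    (α : Fin K → Bool) : θ' i α ≤ θ' i (allOne K) := by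
  refine (hR i).2.1 (allOne K) α ?_
  intro j _; rfl

lemma Ctx.ge_bot {θ' : Fin J → (Fin K → Bool) → ℝ} (hR : R1 C.Q θ') (i : Fin J)
    (α : Fin K → Bool) : θ' i (allZero K) ≤ θ' i α := (hR i).2.2 α

lemma Ctx.lt_top {θ' : Fin J → (Fin K → Bool) → ℝ} (hR : R2 C.Q θ') {i : Fin J} {k : Fin K}
    (hQ : C.Q i = basis k) {α : Fin K → Bool} (h : α k = false) :
    θ' i α < θ' i (allOne K) := hR k i hQ α h

/-- Fundamental shifted-moment identity (Lemma L). -/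
theorem Ctx.sumProd (t : Finset (Fin J)) (c : Fin J → ℝ) :
    ∑ α : Fin K → Bool, C.p α * ∏ j ∈ t, (C.th j α - c j)
      = ∑ α : Fin K → Bool, C.pb α * ∏ j ∈ t, (C.thb j α - c j) := by
  have key : ∀ (θ' : Fin J → (Fin K → Bool) → ℝ) (p' : (Fin K → Bool) → ℝ),
      (∑ α : Fin K → Bool, p' α * ∏ j ∈ t, (θ' j α - c j))
        = ∑ E ∈ t.powerset, (∏ j ∈ t \ E, (-(c j))) * Tp θ' p' (fun j => decide (j ∈ E)) := by
    intro θ' p'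
    have hexp : ∀ α : Fin K → Bool, (∏ j ∈ t, (θ' j α - c j))
        = ∑ E ∈ t.powerset, (∏ j ∈ E, θ' j α) * ∏ j ∈ t \ E, (-(c j)) := by
      intro α
      have : ∀ j ∈ t, θ' j α - c j = θ' j α + (-(c j)) := by intro j _; ring
      rw [Finset.prod_congr rfl this, Finset.prod_add]
    have hTent : ∀ (E : Finset (Fin J)) (α : Fin K → Bool),
        tEntry θ' (fun j => decide (j ∈ E)) α = ∏ j ∈ E, θ' j α := by
      intro E α
      unfold tEntry
      have : ∀ j : Fin J, (if decide (j ∈ E) then θ' j α else 1)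
          = (if j ∈ E then θ' j α else 1) := by intro j; simp
      rw [Finset.prod_congr rfl (fun j _ => this j), Finset.prod_ite_mem, Finset.univ_inter]
    calc ∑ α : Fin K → Bool, p' α * ∏ j ∈ t, (θ' j α - c j)
        = ∑ α : Fin K → Bool, ∑ E ∈ t.powerset,
            (∏ j ∈ t \ E, (-(c j))) * ((∏ j ∈ E, θ' j α) * p' α) := by
          refine Finset.sum_congr rfl fun α _ => ?_
          rw [hexp α, Finset.mul_sum]
          refine Finset.sum_congr rfl fun E _ => by ring
      _ = ∑ E ∈ t.powerset, (∏ j ∈ t \ E, (-(c j)))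
            * ∑ α : Fin K → Bool, (∏ j ∈ E, θ' j α) * p' α := by
          rw [Finset.sum_comm]
          refine Finset.sum_congr rfl fun E _ => ?_
          rw [Finset.mul_sum]
      _ = ∑ E ∈ t.powerset, (∏ j ∈ t \ E, (-(c j))) * Tp θ' p' (fun j => decide (j ∈ E)) := by
          refine Finset.sum_congr rfl fun E _ => ?_
          simp only [Tp, hTent]
  rw [key C.th C.p, key C.thb C.pb]
  exact Finset.sum_congr rfl fun E _ => by rw [C.hT]

/-- a factor specification: `none` = item unused, `some c` = factor `θ i α - c`. -/
def fac (θ' : Fin J → (Fin K → Bool) → ℝ) (cs : Fin J → Option ℝ) (α : Fin K → Bool)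
    (i : Fin J) : ℝ :=
  (cs i).elim 1 (fun c => θ' i α - c)

def Fs (θ' : Fin J → (Fin K → Bool) → ℝ) (cs : Fin J → Option ℝ) (α : Fin K → Bool) : ℝ :=
  ∏ i, fac θ' cs α i

lemma fac_none {θ' : Fin J → (Fin K → Bool) → ℝ} {cs : Fin J → Option ℝ}
    {α : Fin K → Bool} {i : Fin J} (h : cs i = none) :
    fac θ' cs α i = 1 := by simp [fac, h]

lemma fac_some {θ' : Fin J → (Fin K → Bool) → ℝ} {cs : Fin J → Option ℝ}
    {α : Fin K → Bool} {i : Fin J} {c : ℝ} (h : cs i = some c) :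
    fac θ' cs α i = θ' i α - c := by simp [fac, h]

/-- the master identity in factor-spec form -/
theorem Ctx.sumFs (cs : Fin J → Option ℝ) :
    ∑ α : Fin K → Bool, C.p α * Fs C.th cs α = ∑ α : Fin K → Bool, C.pb α * Fs C.thb cs α := by
  have h : ∀ (θ' : Fin J → (Fin K → Bool) → ℝ) (α : Fin K → Bool),
      Fs θ' cs α = ∏ i ∈ Finset.univ.filter (fun i => (cs i).isSome),
        (θ' i α - (cs i).getD 0) := by
    intro θ' α
    rw [Finset.prod_filter]
    refine Finset.prod_congr rfl fun i _ => ?_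
    cases h : cs i with
    | none => simp [fac, h]
    | some c => simp [fac, h]
  simp only [h]
  exact C.sumProd _ _

/-- merge two factor specs with disjoint domains -/
def mg (c1 c2 : Fin J → Option ℝ) : Fin J → Option ℝ := fun i =>
  match c1 i with
  | some c => some c
  | none => c2 i

lemma Fs_mg (θ' : Fin J → (Fin K → Bool) → ℝ) (c1 c2 : Fin J → Option ℝ) (h : ∀ i, c1 i = none ∨ c2 i = none)
    (α : Fin K → Bool) : Fs θ' (mg c1 c2) α = Fs θ' c1 α * Fs θ' c2 α := by
  unfold Fs
  rw [← Finset.prod_mul_distrib]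
  refine Finset.prod_congr rfl fun i _ => ?_
  rcases h i with h1 | h2
  · cases h2 : c2 i with
    | none => simp [fac, mg, h1, h2]
    | some c => simp [fac, mg, h1, h2]
  · cases h1 : c1 i with
    | none => simp [fac, mg, h1, h2]
    | some c => simp [fac, mg, h1, h2]

lemma Fs_ne_zero {θ' : Fin J → (Fin K → Bool) → ℝ} {cs : Fin J → Option ℝ} {α : Fin K → Bool}
    (h : ∀ i, fac θ' cs α i ≠ 0) : Fs θ' cs α ≠ 0 :=
  Finset.prod_ne_zero_iff.2 fun i _ => h i

lemma Fs_eq_zero {θ' : Fin J → (Fin K → Bool) → ℝ} {cs : Fin J → Option ℝ} {α : Fin K → Bool} (i : Fin J)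
    (h : fac θ' cs α i = 0) : Fs θ' cs α = 0 :=
  Finset.prod_eq_zero (Finset.mem_univ i) h

end
end Step2
namespace Step2
open Classical
noncomputable section
variable {J K : ℕ} (C : Ctx J K)

lemma Ctx.sum_p_one : ∑ α : Fin K → Bool, C.p α = 1 := C.hp.2
lemma Ctx.p_pos (α : Fin K → Bool) : 0 < C.p α := (C.hp.1 α).1
lemma Ctx.pb_pos (α : Fin K → Bool) : 0 < C.pb α := (C.hpb.1 α).1

/-- single-item moment equality -/
lemma Ctx.momEq (i : Fin J) :
    ∑ α : Fin K → Bool, C.p α * C.th i α = ∑ α : Fin K → Bool, C.pb α * C.thb i α := by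
  have h := C.sumProd {i} (fun _ => 0)
  simpa using h

/-- basic cross inequality: the top of one model strictly exceeds
the bottom of the other model, at identity items. -/
lemma Ctx.cross_lt {i : Fin J} {k : Fin K} (hQ : C.Q i = basis k) :
    C.th i (allZero K) < C.thb i (allOne K) ∧ C.thb i (allZero K) < C.th i (allOne K) := by
  have hm := C.momEq i
  have h1 : ∀ (θ' : Fin J → (Fin K → Bool) → ℝ) (p' : (Fin K → Bool) → ℝ),
      PValid p' → R1 C.Q θ' → R2 C.Q θ' →
      θ' i (allZero K) < ∑ α : Fin K → Bool, p' α * θ' i α := by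
    intro θ' p' hp' hR1' hR2'
    have hlt : ∑ α : Fin K → Bool, p' α * θ' i (allZero K)
        < ∑ α : Fin K → Bool, p' α * θ' i α := by
      refine Finset.sum_lt_sum (fun α _ => ?_) ⟨allOne K, Finset.mem_univ _, ?_⟩
      · exact mul_le_mul_of_nonneg_left (C.ge_bot hR1' i α) (le_of_lt (hp'.1 α).1)
      · exact mul_lt_mul_of_pos_left (C.lt_top hR2' hQ (by simp [allZero])) (hp'.1 _).1
    have : ∑ α : Fin K → Bool, p' α * θ' i (allZero K) = θ' i (allZero K) := by
      rw [← Finset.sum_mul, hp'.2, one_mul]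
    linarith
  have h2 : ∀ (θ' : Fin J → (Fin K → Bool) → ℝ) (p' : (Fin K → Bool) → ℝ),
      PValid p' → R1 C.Q θ' →
      (∑ α : Fin K → Bool, p' α * θ' i α) ≤ θ' i (allOne K) := by
    intro θ' p' hp' hR1'
    have : ∑ α : Fin K → Bool, p' α * θ' i α
        ≤ ∑ α : Fin K → Bool, p' α * θ' i (allOne K) := by
      refine Finset.sum_le_sum fun α _ => ?_
      exact mul_le_mul_of_nonneg_left (C.le_top hR1' i α) (le_of_lt (hp'.1 α).1)
    have h1' : ∑ α : Fin K → Bool, p' α * θ' i (allOne K) = θ' i (allOne K) := by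
      rw [← Finset.sum_mul, hp'.2, one_mul]
    linarith
  constructor
  · calc C.th i (allZero K) < ∑ α : Fin K → Bool, C.p α * C.th i α :=
          h1 C.th C.p C.hp C.hR1 C.hR2
      _ = ∑ α : Fin K → Bool, C.pb α * C.thb i α := hm
      _ ≤ C.thb i (allOne K) := h2 C.thb C.pb C.hpb C.hR1b
  · calc C.thb i (allZero K) < ∑ α : Fin K → Bool, C.pb α * C.thb i α :=
          h1 C.thb C.pb C.hpb C.hR1b C.hR2b
      _ = ∑ α : Fin K → Bool, C.p α * C.th i α := hm.symm
      _ ≤ C.th i (allOne K) := h2 C.th C.p C.hp C.hR1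

/-- only atoms supported on `{m}` are `0` and `e_m`. -/
lemma atom_cases {m : Fin K} {α : Fin K → Bool} (h : ∀ j : Fin K, j ≠ m → α j = false) :
    α = allZero K ∨ α = basis m := by
  cases hm : α m with
  | false =>
      left; funext j
      by_cases hj : j = m
      · subst hj; simpa [allZero] using hm
      · simpa [allZero] using h j hj
  | true =>
      right; funext j
      by_cases hj : j = m
      · subst hj; simp [basis, hm]
      · simp [basis, hj, h j hj]

lemma basis_ne_zero (m : Fin K) : basis m ≠ allZero K := by
  intro h
  have := congrFun h m
  simp [basis, allZero] at this

/-- sum over all atoms of a function vanishing off `{a, b}` -/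
lemma sum_eq_two {f : (Fin K → Bool) → ℝ} {a b : Fin K → Bool} (hab : a ≠ b)
    (h : ∀ x, x ≠ a → x ≠ b → f x = 0) :
    ∑ x : Fin K → Bool, f x = f a + f b := by
  have hz : ∀ x ∈ Finset.univ, x ∉ ({a, b} : Finset (Fin K → Bool)) → f x = 0 := by
    intro x _ hx
    simp only [Finset.mem_insert, Finset.mem_singleton] at hx
    push_neg at hx
    exact h x hx.1 hx.2
  rw [← Finset.sum_subset (Finset.subset_univ ({a, b} : Finset (Fin K → Bool))) hz,
    Finset.sum_pair hab]

/-- sum over all atoms of a function vanishing off `{a}` -/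
lemma sum_eq_one {f : (Fin K → Bool) → ℝ} {a : Fin K → Bool}
    (h : ∀ x, x ≠ a → f x = 0) :
    ∑ x : Fin K → Bool, f x = f a := by
  have hz : ∀ x ∈ Finset.univ, x ∉ ({a} : Finset (Fin K → Bool)) → f x = 0 := by
    intro x _ hx
    simp only [Finset.mem_singleton] at hx
    exact h x hx
  rw [← Finset.sum_subset (Finset.subset_univ ({a} : Finset (Fin K → Bool))) hz,
    Finset.sum_singleton]

/-- the atom with support `B` -/
def atomOf (B : Finset (Fin K)) : Fin K → Bool := fun i => decide (i ∈ B)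

lemma atomOf_mem {B : Finset (Fin K)} {i : Fin K} : atomOf B i = true ↔ i ∈ B := by
  simp [atomOf]

/-- sum over atoms of a function vanishing off subsets of `A`,
rewritten as a powerset sum. -/
lemma sum_eq_powerset {A : Finset (Fin K)} {f : (Fin K → Bool) → ℝ}
    (h : ∀ α : Fin K → Bool, (¬ ∀ j : Fin K, α j = true → j ∈ A) → f α = 0) :
    ∑ α : Fin K → Bool, f α = ∑ B ∈ A.powerset, f (atomOf B) := by
  classical
  have hsub : (Finset.univ.filter
      (fun α : Fin K → Bool => ∀ j : Fin K, α j = true → j ∈ A)) ⊆ Finset.univ :=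
    Finset.filter_subset _ _
  have h1 : ∑ α : Fin K → Bool, f α
      = ∑ α ∈ Finset.univ.filter (fun α : Fin K → Bool => ∀ j, α j = true → j ∈ A), f α := by
    refine (Finset.sum_subset hsub ?_).symm
    intro x _ hx
    simp only [Finset.mem_filter, Finset.mem_univ, true_and] at hx
    exact h x hx
  rw [h1]
  have hinv : ∀ α : Fin K → Bool, atomOf (Finset.univ.filter (fun i => α i = true)) = α := by
    intro α
    funext i
    by_cases hi : α i = true
    · simp [atomOf, hi]
    · simp only [Bool.not_eq_true] at hi
      simp [atomOf, hi]
  refine Finset.sum_nbij' (fun α => Finset.univ.filter (fun i => α i = true))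
    (fun B => atomOf B) ?_ ?_ ?_ ?_ ?_
  · intro α hα
    simp only [Finset.mem_filter, Finset.mem_univ, true_and] at hα ⊢
    rw [Finset.mem_powerset]
    intro i hi
    simp only [Finset.mem_filter, Finset.mem_univ, true_and] at hi
    exact hα i hi
  · intro B hB
    simp only [Finset.mem_powerset] at hB
    simp only [Finset.mem_filter, Finset.mem_univ, true_and]
    intro j hj
    exact hB (atomOf_mem.1 hj)
  · intro α _
    exact hinv α
  · intro B hB
    ext i
    simp [atomOf]
  · intro α _
    rw [hinv α]
end
end Step2
namespace Step2
open Classical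
open scoped Classical
noncomputable section
variable {J K : ℕ} (C : Ctx J K)

/-- combine two per-attribute specs into an item spec (first `K` items get `f`,
next `K` items get `g`, the rest get `none`). -/
def Ctx.spec2 (_C : Ctx J K) (f g : Fin K → Option ℝ) : Fin J → Option ℝ := fun i =>
  if h : (i : ℕ) < K then f ⟨(i : ℕ), h⟩
  else if h2 : (i : ℕ) < K + K then g ⟨(i : ℕ) - K, by omega⟩
  else none

lemma Ctx.spec2_itA (f g : Fin K → Option ℝ) (k : Fin K) :
    C.spec2 f g (C.itA k) = f k := by
  have hk : ((C.itA k : Fin J) : ℕ) < K := k.isLt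
  simp only [Ctx.spec2, dif_pos hk]
  congr 1

lemma Ctx.spec2_itB (f g : Fin K → Option ℝ) (k : Fin K) :
    C.spec2 f g (C.itB k) = g k := by
  have hk1 : ¬ ((C.itB k : Fin J) : ℕ) < K := by
    simp only [Ctx.itB]; omega
  have hk2 : ((C.itB k : Fin J) : ℕ) < K + K := by
    have := k.isLt; simp only [Ctx.itB]; omega
  simp only [Ctx.spec2, dif_neg hk1, dif_pos hk2]
  congr 1
  apply Fin.ext
  simp [Ctx.itB]

lemma Ctx.spec2_hi (f g : Fin K → Option ℝ) (i : Fin J) (h : 2 * K ≤ (i : ℕ)) :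
    C.spec2 f g i = none := by
  have h1 : ¬ (i : ℕ) < K := by omega
  have h2 : ¬ (i : ℕ) < K + K := by omega
  simp only [Ctx.spec2, dif_neg h1, dif_neg h2]

/-- decomposition of items into the three ranges. -/
lemma Ctx.item_cases (i : Fin J) :
    (∃ k : Fin K, i = C.itA k) ∨ (∃ k : Fin K, i = C.itB k) ∨ 2 * K ≤ (i : ℕ) := by
  by_cases h : (i : ℕ) < K
  · exact Or.inl ⟨⟨(i : ℕ), h⟩, Fin.ext rfl⟩
  by_cases h2 : (i : ℕ) < K + K
  · refine Or.inr (Or.inl ⟨⟨(i : ℕ) - K, by omega⟩, Fin.ext ?_⟩)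
    simp [Ctx.itB]; omega
  · exact Or.inr (Or.inr (by omega))

/-- the set of "down" attributes where both bar tops are strictly below θ tops -/
def Ctx.Dset : Finset (Fin K) :=
  Finset.univ.filter (fun d =>
    C.thb (C.itA d) (allOne K) < C.th (C.itA d) (allOne K) ∧
    C.thb (C.itB d) (allOne K) < C.th (C.itB d) (allOne K))

lemma Ctx.Dset_mem {d : Fin K} : d ∈ C.Dset ↔
    C.thb (C.itA d) (allOne K) < C.th (C.itA d) (allOne K) ∧
    C.thb (C.itB d) (allOne K) < C.th (C.itB d) (allOne K) := by
  simp [Ctx.Dset]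

/-- choice condition for the kill option at pair `j` w.r.t. target `m` -/
def Ctx.Ocond (m j : Fin K) : Prop :=
  C.thb (C.itB j) (allOne K) ≠ C.th (C.itB j) (basis m)

def Ctx.fK (m : Fin K) : Fin K → Option ℝ := fun j =>
  if j = m then none
  else if j ∈ C.Dset then some (C.th (C.itA j) (allOne K))
  else if C.Ocond m j then some (C.th (C.itA j) (allOne K))
  else some (C.thb (C.itA j) (allOne K))

def Ctx.gK (m : Fin K) (A : Finset (Fin K)) : Fin K → Option ℝ := fun j =>
  if j ∈ C.Dset then (if j ∈ A then none else some (C.thb (C.itB j) (allOne K)))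
  else if j = m then none
  else if C.Ocond m j then some (C.thb (C.itB j) (allOne K))
  else some (C.th (C.itB j) (allOne K))

def Ctx.killSpec (m : Fin K) (A : Finset (Fin K)) : Fin J → Option ℝ :=
  C.spec2 (C.fK m) (C.gK m A)

def Ctx.psiSpec (m : Fin K) (A : Finset (Fin K)) : Fin J → Option ℝ :=
  C.spec2 (fun _ => none)
    (fun j => if j ∈ C.Dset ∧ j ∉ A then some (C.thb (C.itB j) (allOne K)) else none)

/-- single-item monomial spec -/
def sgl (i0 : Fin J) (b : Bool) : Fin J → Option ℝ := fun i =>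
  if b ∧ i = i0 then some 0 else none

lemma Fs_sgl (θ' : Fin J → (Fin K → Bool) → ℝ) (i0 : Fin J) (b : Bool) (α : Fin K → Bool) :
    Fs θ' (sgl i0 b) α = if b then θ' i0 α else 1 := by
  cases b with
  | false =>
      simp only [if_false, Bool.false_eq_true]
      unfold Fs
      rw [Finset.prod_eq_one]
      intro i _
      simp [fac, sgl]
  | true =>
      simp only [if_true]
      unfold Fs
      have : ∀ i : Fin J, fac θ' (sgl i0 true) α i = if i = i0 then θ' i α else 1 := by
        intro i
        by_cases h : i = i0 <;> simp [fac, sgl, h]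
      rw [Finset.prod_congr rfl (fun i _ => this i)]
      simp

end
end Step2
namespace Step2
open Classical
open scoped Classical
noncomputable section
variable {J K : ℕ} (C : Ctx J K) (m : Fin K)

lemma killSpec_itA (A : Finset (Fin K)) (j : Fin K) :
    C.killSpec m A (C.itA j) = C.fK m j := C.spec2_itA _ _ j

lemma killSpec_itB (A : Finset (Fin K)) (j : Fin K) :
    C.killSpec m A (C.itB j) = C.gK m A j := C.spec2_itB _ _ j

lemma killSpec_hi (A : Finset (Fin K)) (i : Fin J) (h : 2 * K ≤ (i : ℕ)) :
    C.killSpec m A i = none := C.spec2_hi _ _ i h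

lemma psiSpec_itA (A : Finset (Fin K)) (j : Fin K) :
    C.psiSpec m A (C.itA j) = none := C.spec2_itA _ _ j

lemma psiSpec_itB (A : Finset (Fin K)) (j : Fin K) :
    C.psiSpec m A (C.itB j)
      = if j ∈ C.Dset ∧ j ∉ A then some (C.thb (C.itB j) (allOne K)) else none :=
  C.spec2_itB _ _ j

lemma psiSpec_hi (A : Finset (Fin K)) (i : Fin J) (h : 2 * K ≤ (i : ℕ)) :
    C.psiSpec m A i = none := C.spec2_hi _ _ i h

lemma basis_app_ne {j : Fin K} (h : j ≠ m) : basis m j = false := by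
  simp [basis, h]

/-- θ-side kill: any atom with a `true` coordinate other than `m` is annihilated. -/
lemma theta_kill (A : Finset (Fin K)) (α : Fin K → Bool) (j : Fin K) (hj : j ≠ m)
    (hα : α j = true) : Fs C.th (C.killSpec m A) α = 0 := by
  by_cases hD : j ∈ C.Dset
  · have hc : C.killSpec m A (C.itA j) = some (C.th (C.itA j) (allOne K)) := by
      rw [killSpec_itA]; simp [Ctx.fK, hj, hD]
    refine Fs_eq_zero (C.itA j) ?_
    rw [fac_some hc, C.top_eq C.hR1 (C.QA j) hα, sub_self]
  · by_cases hO : C.Ocond m j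
    · have hc : C.killSpec m A (C.itA j) = some (C.th (C.itA j) (allOne K)) := by
        rw [killSpec_itA]; simp [Ctx.fK, hj, hD, hO]
      refine Fs_eq_zero (C.itA j) ?_
      rw [fac_some hc, C.top_eq C.hR1 (C.QA j) hα, sub_self]
    · have hc : C.killSpec m A (C.itB j) = some (C.th (C.itB j) (allOne K)) := by
        rw [killSpec_itB]; simp [Ctx.gK, hj, hD, hO]
      refine Fs_eq_zero (C.itB j) ?_
      rw [fac_some hc, C.top_eq C.hR1 (C.QB j) hα, sub_self]

/-- bar-side kill when the target is a Dset attribute. -/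
lemma bar_kill (hm : m ∈ C.Dset) (A : Finset (Fin K)) (α : Fin K → Bool) (j : Fin K)
    (hjA : j ∉ A) (hα : α j = true) : Fs C.thb (C.killSpec m A) α = 0 := by
  by_cases hD : j ∈ C.Dset
  · have hc : C.killSpec m A (C.itB j) = some (C.thb (C.itB j) (allOne K)) := by
      rw [killSpec_itB]; simp [Ctx.gK, hD, hjA]
    refine Fs_eq_zero (C.itB j) ?_
    rw [fac_some hc, C.top_eq C.hR1b (C.QB j) hα, sub_self]
  · have hj : j ≠ m := fun h => hD (h ▸ hm)
    by_cases hO : C.Ocond m j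
    · have hc : C.killSpec m A (C.itB j) = some (C.thb (C.itB j) (allOne K)) := by
        rw [killSpec_itB]; simp [Ctx.gK, hD, hj, hO]
      refine Fs_eq_zero (C.itB j) ?_
      rw [fac_some hc, C.top_eq C.hR1b (C.QB j) hα, sub_self]
    · have hc : C.killSpec m A (C.itA j) = some (C.thb (C.itA j) (allOne K)) := by
        rw [killSpec_itA]; simp [Ctx.fK, hj, hD, hO]
      refine Fs_eq_zero (C.itA j) ?_
      rw [fac_some hc, C.top_eq C.hR1b (C.QA j) hα, sub_self]

/-- bar-side kill when `Dset` is empty. -/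
lemma bar_kill_empty (hD0 : C.Dset = ∅) (A : Finset (Fin K)) (α : Fin K → Bool) (j : Fin K)
    (hj : j ≠ m) (hα : α j = true) : Fs C.thb (C.killSpec m A) α = 0 := by
  have hD : j ∉ C.Dset := by simp [hD0]
  by_cases hO : C.Ocond m j
  · have hc : C.killSpec m A (C.itB j) = some (C.thb (C.itB j) (allOne K)) := by
      rw [killSpec_itB]; simp [Ctx.gK, hD, hj, hO]
    refine Fs_eq_zero (C.itB j) ?_
    rw [fac_some hc, C.top_eq C.hR1b (C.QB j) hα, sub_self]
  · have hc : C.killSpec m A (C.itA j) = some (C.thb (C.itA j) (allOne K)) := by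
      rw [killSpec_itA]; simp [Ctx.fK, hj, hD, hO]
    refine Fs_eq_zero (C.itA j) ?_
    rw [fac_some hc, C.top_eq C.hR1b (C.QA j) hα, sub_self]

/-- θ-side residual factors at the two surviving atoms are nonzero (full system). -/
lemma theta_res (β : Fin K → Bool) (hβ : β = allZero K ∨ β = basis m) (i : Fin J) :
    fac C.th (C.killSpec m C.Dset) β i ≠ 0 := by
  have hβm : ∀ j : Fin K, j ≠ m → β j = false := by
    intro j hj
    rcases hβ with h | h <;> subst h
    · rfl
    · exact basis_app_ne m hj
  rcases C.item_cases i with ⟨j, rfl⟩ | ⟨j, rfl⟩ | hi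
  · by_cases hj : j = m
    · have hc : C.killSpec m C.Dset (C.itA j) = none := by
        rw [killSpec_itA]; simp [Ctx.fK, hj]
      rw [fac_none hc]; norm_num
    · have hb : β j = false := hβm j hj
      by_cases hD : j ∈ C.Dset
      · have hc : C.killSpec m C.Dset (C.itA j) = some (C.th (C.itA j) (allOne K)) := by
          rw [killSpec_itA]; simp [Ctx.fK, hj, hD]
        rw [fac_some hc]
        exact sub_ne_zero.2 (ne_of_lt (C.lt_top C.hR2 (C.QA j) hb))
      · by_cases hO : C.Ocond m j
        · have hc : C.killSpec m C.Dset (C.itA j) = some (C.th (C.itA j) (allOne K)) := by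
            rw [killSpec_itA]; simp [Ctx.fK, hj, hD, hO]
          rw [fac_some hc]
          exact sub_ne_zero.2 (ne_of_lt (C.lt_top C.hR2 (C.QA j) hb))
        · have hc : C.killSpec m C.Dset (C.itA j) = some (C.thb (C.itA j) (allOne K)) := by
            rw [killSpec_itA]; simp [Ctx.fK, hj, hD, hO]
          rw [fac_some hc]
          rcases hβ with h | h
          · rw [h]
            exact sub_ne_zero.2 (ne_of_lt (C.cross_lt (C.QA j)).1)
          · rw [h]
            refine sub_ne_zero.2 ?_
            intro hEq
            apply hD
            rw [C.Dset_mem]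
            have hO' : C.thb (C.itB j) (allOne K) = C.th (C.itB j) (basis m) :=
              not_not.1 hO
            have hbm : basis m j = false := basis_app_ne m hj
            constructor
            · rw [← hEq]
              exact C.lt_top C.hR2 (C.QA j) hbm
            · rw [hO']
              exact C.lt_top C.hR2 (C.QB j) hbm
  · by_cases hD : j ∈ C.Dset
    · have hc : C.killSpec m C.Dset (C.itB j) = none := by
        rw [killSpec_itB]; simp [Ctx.gK, hD]
      rw [fac_none hc]; norm_num
    · by_cases hj : j = m
      · have hc : C.killSpec m C.Dset (C.itB j) = none := by
          rw [killSpec_itB]; simp [Ctx.gK, hD, hj]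
        rw [fac_none hc]; norm_num
      · have hb : β j = false := hβm j hj
        by_cases hO : C.Ocond m j
        · have hc : C.killSpec m C.Dset (C.itB j) = some (C.thb (C.itB j) (allOne K)) := by
            rw [killSpec_itB]; simp [Ctx.gK, hD, hj, hO]
          rw [fac_some hc]
          rcases hβ with h | h
          · rw [h]
            exact sub_ne_zero.2 (ne_of_lt (C.cross_lt (C.QB j)).1)
          · rw [h]
            exact sub_ne_zero.2 (fun hEq => hO hEq.symm)
        · have hc : C.killSpec m C.Dset (C.itB j) = some (C.th (C.itB j) (allOne K)) := by
            rw [killSpec_itB]; simp [Ctx.gK, hD, hj, hO]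
          rw [fac_some hc]
          exact sub_ne_zero.2 (ne_of_lt (C.lt_top C.hR2 (C.QB j) hb))
  · rw [fac_none (killSpec_hi C m _ i hi)]; norm_num

/-- bar-side residual factors at the zero atom are nonzero (full system). -/
lemma bar_res0 (i : Fin J) :
    fac C.thb (C.killSpec m C.Dset) (allZero K) i ≠ 0 := by
  rcases C.item_cases i with ⟨j, rfl⟩ | ⟨j, rfl⟩ | hi
  · by_cases hj : j = m
    · have hc : C.killSpec m C.Dset (C.itA j) = none := by
        rw [killSpec_itA]; simp [Ctx.fK, hj]
      rw [fac_none hc]; norm_num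
    · by_cases hD : j ∈ C.Dset
      · have hc : C.killSpec m C.Dset (C.itA j) = some (C.th (C.itA j) (allOne K)) := by
          rw [killSpec_itA]; simp [Ctx.fK, hj, hD]
        rw [fac_some hc]
        exact sub_ne_zero.2 (ne_of_lt (C.cross_lt (C.QA j)).2)
      · by_cases hO : C.Ocond m j
        · have hc : C.killSpec m C.Dset (C.itA j) = some (C.th (C.itA j) (allOne K)) := by
            rw [killSpec_itA]; simp [Ctx.fK, hj, hD, hO]
          rw [fac_some hc]
          exact sub_ne_zero.2 (ne_of_lt (C.cross_lt (C.QA j)).2)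
        · have hc : C.killSpec m C.Dset (C.itA j) = some (C.thb (C.itA j) (allOne K)) := by
            rw [killSpec_itA]; simp [Ctx.fK, hj, hD, hO]
          rw [fac_some hc]
          exact sub_ne_zero.2 (ne_of_lt (C.lt_top C.hR2b (C.QA j) rfl))
  · by_cases hD : j ∈ C.Dset
    · have hc : C.killSpec m C.Dset (C.itB j) = none := by
        rw [killSpec_itB]; simp [Ctx.gK, hD]
      rw [fac_none hc]; norm_num
    · by_cases hj : j = m
      · have hc : C.killSpec m C.Dset (C.itB j) = none := by
          rw [killSpec_itB]; simp [Ctx.gK, hD, hj]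
        rw [fac_none hc]; norm_num
      · by_cases hO : C.Ocond m j
        · have hc : C.killSpec m C.Dset (C.itB j) = some (C.thb (C.itB j) (allOne K)) := by
            rw [killSpec_itB]; simp [Ctx.gK, hD, hj, hO]
          rw [fac_some hc]
          exact sub_ne_zero.2 (ne_of_lt (C.lt_top C.hR2b (C.QB j) rfl))
        · have hc : C.killSpec m C.Dset (C.itB j) = some (C.th (C.itB j) (allOne K)) := by
            rw [killSpec_itB]; simp [Ctx.gK, hD, hj, hO]
          rw [fac_some hc]
          exact sub_ne_zero.2 (ne_of_lt (C.cross_lt (C.QB j)).2)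
  · rw [fac_none (killSpec_hi C m _ i hi)]; norm_num

/-- ψ residual factors at atoms inside `A` are nonzero. -/
lemma psi_res (A B : Finset (Fin K)) (hBA : B ⊆ A) (i : Fin J) :
    fac C.thb (C.psiSpec m A) (atomOf B) i ≠ 0 := by
  rcases C.item_cases i with ⟨j, rfl⟩ | ⟨j, rfl⟩ | hi
  · rw [fac_none (psiSpec_itA C m A j)]; norm_num
  · by_cases hc : j ∈ C.Dset ∧ j ∉ A
    · have he : C.psiSpec m A (C.itB j) = some (C.thb (C.itB j) (allOne K)) := by
        rw [psiSpec_itB]; simp [hc]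
      rw [fac_some he]
      have hb : atomOf B j = false := by
        simp only [atomOf, decide_eq_false_iff_not]
        exact fun hB => hc.2 (hBA hB)
      exact sub_ne_zero.2 (ne_of_lt (C.lt_top C.hR2b (C.QB j) hb))
    · have he : C.psiSpec m A (C.itB j) = none := by
        rw [psiSpec_itB]; simp [hc]
      rw [fac_none he]; norm_num
  · rw [fac_none (psiSpec_hi C m A i hi)]; norm_num

/-- splitting the node-`A` kill into the full kill times the ψ part. -/
lemma killSpec_split (A : Finset (Fin K)) :
    C.killSpec m A = mg (C.killSpec m C.Dset) (C.psiSpec m A) := by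
  funext i
  rcases C.item_cases i with ⟨j, rfl⟩ | ⟨j, rfl⟩ | hi
  · rw [mg]
    rw [show C.killSpec m C.Dset (C.itA j) = C.fK m j from killSpec_itA C m _ j]
    rw [show C.killSpec m A (C.itA j) = C.fK m j from killSpec_itA C m A j]
    cases h : C.fK m j with
    | some c => rfl
    | none => rw [psiSpec_itA]
  · rw [mg]
    rw [show C.killSpec m A (C.itB j) = C.gK m A j from killSpec_itB C m A j]
    rw [show C.killSpec m C.Dset (C.itB j) = C.gK m C.Dset j from killSpec_itB C m _ j]
    rw [psiSpec_itB]
    by_cases hD : j ∈ C.Dset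
    · simp only [Ctx.gK, if_pos hD, hD, true_and]
      by_cases hA : j ∈ A
      · simp [hA]
      · simp [hA]
    · have : (j ∈ C.Dset ∧ j ∉ A) = False := by simp [hD]
      simp only [Ctx.gK, if_neg hD, this, if_false]
      by_cases hj : j = m
      · simp [hj]
      · by_cases hO : C.Ocond m j <;> simp [hj, hO]
  · rw [mg, killSpec_hi C m A i hi, killSpec_hi C m _ i hi, psiSpec_hi C m A i hi]

lemma kill_psi_disj (A : Finset (Fin K)) :
    ∀ i, C.killSpec m C.Dset i = none ∨ C.psiSpec m A i = none := by
  intro i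
  rcases C.item_cases i with ⟨j, rfl⟩ | ⟨j, rfl⟩ | hi
  · right; rw [psiSpec_itA]
  · by_cases hD : j ∈ C.Dset
    · left; rw [killSpec_itB]; simp [Ctx.gK, hD]
    · right; rw [psiSpec_itB]; simp [hD]
  · right; exact psiSpec_hi C m A i hi

end
end Step2
namespace Step2
open Classical
open scoped Classical
noncomputable section
variable {J K : ℕ}

def mono3 (i1 i2 i3 : Fin J) (s1 s2 s3 : Bool) : Fin J → Option ℝ := fun i =>
  if s1 ∧ i = i1 then some 0 else if s2 ∧ i = i2 then some 0 else if s3 ∧ i = i3 then some 0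
    else none

lemma mono3_eq (i1 i2 i3 : Fin J) (s1 s2 s3 : Bool) :
    mono3 i1 i2 i3 s1 s2 s3 = mg (sgl i1 s1) (mg (sgl i2 s2) (sgl i3 s3)) := by
  funext i
  simp only [mono3, mg, sgl]
  split_ifs <;> rfl

lemma mono3_none (i1 i2 i3 : Fin J) (s1 s2 s3 : Bool) (i : Fin J)
    (h1 : i ≠ i1) (h2 : i ≠ i2) (h3 : i ≠ i3) :
    mono3 i1 i2 i3 s1 s2 s3 i = none := by
  simp [mono3, h1, h2, h3]

lemma Fs_mono3 (θ' : Fin J → (Fin K → Bool) → ℝ) (i1 i2 i3 : Fin J) (s1 s2 s3 : Bool)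
    (h12 : s1 = true → s2 = true → i1 ≠ i2) (h13 : s1 = true → s3 = true → i1 ≠ i3)
    (h23 : s2 = true → s3 = true → i2 ≠ i3) (α : Fin K → Bool) :
    Fs θ' (mono3 i1 i2 i3 s1 s2 s3) α
      = (if s1 then θ' i1 α else 1) * ((if s2 then θ' i2 α else 1)
          * (if s3 then θ' i3 α else 1)) := by
  rw [mono3_eq]
  have d23 : ∀ i, sgl i2 s2 i = none ∨ sgl i3 s3 i = none := by
    intro i
    cases hs2 : s2 with
    | false => left; simp [sgl]
    | true => cases hs3 : s3 with
      | false => right; simp [sgl]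
      | true =>
          by_cases h : i = i2
          · right; subst h; simp [sgl, h23 hs2 hs3]
          · left; simp [sgl, h]
  have d123 : ∀ i, sgl i1 s1 i = none
      ∨ mg (sgl i2 s2) (sgl i3 s3) i = none := by
    intro i
    by_cases h : s1 = true ∧ i = i1
    · right
      have e2 : sgl i2 s2 i = none := by
        cases hs2 : s2 with
        | false => simp [sgl]
        | true =>
            have hne : i ≠ i2 := fun hc => (h12 h.1 hs2) (h.2.symm.trans hc)
            simp [sgl, hne]
      have e3 : sgl i3 s3 i = none := by
        cases hs3 : s3 with
        | false => simp [sgl]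
        | true =>
            have hne : i ≠ i3 := fun hc => (h13 h.1 hs3) (h.2.symm.trans hc)
            simp [sgl, hne]
      simp [mg, e2, e3]
    · left
      simp only [sgl]
      rw [if_neg h]
  rw [Fs_mg _ _ _ d123, Fs_mg _ _ _ d23, Fs_sgl, Fs_sgl, Fs_sgl]

/-- reduce a killed θ-side sum to the two surviving atoms -/
lemma sum_reduce_two (θ' : Fin J → (Fin K → Bool) → ℝ) (p' : (Fin K → Bool) → ℝ)
    (cs csm : Fin J → Option ℝ) (a b : Fin K → Bool) (hab : a ≠ b)
    (hvan : ∀ α, α ≠ a → α ≠ b → Fs θ' cs α = 0)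
    (hdisj : ∀ i, cs i = none ∨ csm i = none) :
    ∑ α : Fin K → Bool, p' α * Fs θ' (mg cs csm) α
      = p' a * (Fs θ' cs a * Fs θ' csm a) + p' b * (Fs θ' cs b * Fs θ' csm b) := by
  have hsplit : (∑ α : Fin K → Bool, p' α * Fs θ' (mg cs csm) α)
      = ∑ α : Fin K → Bool, p' α * (Fs θ' cs α * Fs θ' csm α) :=
    Finset.sum_congr rfl fun α _ => by rw [Fs_mg _ _ _ hdisj]
  rw [hsplit]
  exact sum_eq_two hab (fun x hxa hxb => by rw [hvan x hxa hxb]; ring)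

lemma sum_reduce_one (θ' : Fin J → (Fin K → Bool) → ℝ) (p' : (Fin K → Bool) → ℝ)
    (cs csm : Fin J → Option ℝ) (a : Fin K → Bool)
    (hvan : ∀ α, α ≠ a → Fs θ' cs α = 0)
    (hdisj : ∀ i, cs i = none ∨ csm i = none) :
    ∑ α : Fin K → Bool, p' α * Fs θ' (mg cs csm) α
      = p' a * (Fs θ' cs a * Fs θ' csm a) := by
  have hsplit : (∑ α : Fin K → Bool, p' α * Fs θ' (mg cs csm) α)
      = ∑ α : Fin K → Bool, p' α * (Fs θ' cs α * Fs θ' csm α) :=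
    Finset.sum_congr rfl fun α _ => by rw [Fs_mg _ _ _ hdisj]
  rw [hsplit]
  exact sum_eq_one (a := a) (fun x hxa => by rw [hvan x hxa]; ring)

/-- reduce a killed bar-side sum to a powerset sum -/
lemma sum_reduce_powerset (θ' : Fin J → (Fin K → Bool) → ℝ) (p' : (Fin K → Bool) → ℝ)
    (cs csm : Fin J → Option ℝ) (A : Finset (Fin K))
    (hvan : ∀ α : Fin K → Bool, (¬ ∀ j : Fin K, α j = true → j ∈ A) → Fs θ' cs α = 0)
    (hdisj : ∀ i, cs i = none ∨ csm i = none) :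
    ∑ α : Fin K → Bool, p' α * Fs θ' (mg cs csm) α
      = ∑ B ∈ A.powerset,
          p' (atomOf B) * (Fs θ' cs (atomOf B) * Fs θ' csm (atomOf B)) := by
  have hsplit : (∑ α : Fin K → Bool, p' α * Fs θ' (mg cs csm) α)
      = ∑ α : Fin K → Bool, p' α * (Fs θ' cs α * Fs θ' csm α) :=
    Finset.sum_congr rfl fun α _ => by rw [Fs_mg _ _ _ hdisj]
  rw [hsplit]
  exact sum_eq_powerset (A := A) (fun x hx => by rw [hvan x hx]; ring)

end
end Step2
namespace Step2
open Classical
open scoped Classical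
noncomputable section
variable {J K : ℕ} (C : Ctx J K)

lemma exists_true_ne (m : Fin K) (α : Fin K → Bool) (h0 : α ≠ allZero K)
    (hm : α ≠ basis m) : ∃ j, j ≠ m ∧ α j = true := by
  by_contra h
  push_neg at h
  have h' : ∀ j : Fin K, j ≠ m → α j = false := by
    intro j hj
    have := h j hj
    simpa using this
  rcases atom_cases h' with h1 | h1
  · exact h0 h1
  · exact hm h1

lemma killSpec_itA_m (m : Fin K) (A : Finset (Fin K)) :
    C.killSpec m A (C.itA m) = none := by
  rw [killSpec_itA]; simp [Ctx.fK]

lemma killSpec_itB_m (m : Fin K) (A : Finset (Fin K)) (hmA : m ∈ C.Dset → m ∈ A) :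
    C.killSpec m A (C.itB m) = none := by
  rw [killSpec_itB]
  by_cases hD : m ∈ C.Dset
  · simp [Ctx.gK, hD, hmA hD]
  · simp [Ctx.gK, hD]

lemma kill_mono_disj (m : Fin K) (A : Finset (Fin K)) (i1 i2 i3 : Fin J)
    (s1 s2 s3 : Bool)
    (h1 : C.killSpec m A i1 = none) (h2 : C.killSpec m A i2 = none)
    (h3 : C.killSpec m A i3 = none) :
    ∀ i, C.killSpec m A i = none ∨ mono3 i1 i2 i3 s1 s2 s3 i = none := by
  intro i
  by_cases e1 : i = i1
  · left; rw [e1]; exact h1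
  by_cases e2 : i = i2
  · left; rw [e2]; exact h2
  by_cases e3 : i = i3
  · left; rw [e3]; exact h3
  · right; exact mono3_none i1 i2 i3 s1 s2 s3 i e1 e2 e3

/-- the master equation at an induction node `A` for target `m ∈ Dset`. -/
lemma nodeEq (m : Fin K) (hm : m ∈ C.Dset) (A : Finset (Fin K))
    (j' : Fin J) (hj' : 2 * K ≤ (j' : ℕ)) (sa sj : Bool) :
    C.p (allZero K) * (Fs C.th (C.killSpec m A) (allZero K)
        * Fs C.th (mono3 (C.itA m) j' j' sa sj false) (allZero K))
      + C.p (basis m) * (Fs C.th (C.killSpec m A) (basis m)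
        * Fs C.th (mono3 (C.itA m) j' j' sa sj false) (basis m))
    = ∑ B ∈ A.powerset, C.pb (atomOf B) * (Fs C.thb (C.killSpec m A) (atomOf B)
        * Fs C.thb (mono3 (C.itA m) j' j' sa sj false) (atomOf B)) := by
  have hdisj := kill_mono_disj C m A (C.itA m) j' j' sa sj false
    (killSpec_itA_m C m A) (killSpec_hi C m A j' hj') (killSpec_hi C m A j' hj')
  have hid := C.sumFs (mg (C.killSpec m A) (mono3 (C.itA m) j' j' sa sj false))
  rw [sum_reduce_two C.th C.p _ _ (allZero K) (basis m) (Ne.symm (basis_ne_zero m)) ?hv hdisj]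
    at hid
  case hv =>
    intro α h0 hb
    obtain ⟨j, hj, hα⟩ := exists_true_ne m α h0 hb
    exact theta_kill C m A α j hj hα
  rw [sum_reduce_powerset C.thb C.pb _ _ A ?hvb hdisj] at hid
  case hvb =>
    intro α hα
    push_neg at hα
    obtain ⟨j, hj1, hj2⟩ := hα
    exact bar_kill C m hm A α j hj2 hj1
  exact hid

/-- the endgame equation when `Dset = ∅`, target `k`, extra item `js`. -/
lemma endEq (k : Fin K) (hD0 : C.Dset = ∅) (js : Fin J) (hjs : 2 * K ≤ (js : ℕ))
    (sa sb sj : Bool) :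
    C.p (allZero K) * (Fs C.th (C.killSpec k C.Dset) (allZero K)
        * Fs C.th (mono3 (C.itA k) (C.itB k) js sa sb sj) (allZero K))
      + C.p (basis k) * (Fs C.th (C.killSpec k C.Dset) (basis k)
        * Fs C.th (mono3 (C.itA k) (C.itB k) js sa sb sj) (basis k))
    = C.pb (allZero K) * (Fs C.thb (C.killSpec k C.Dset) (allZero K)
        * Fs C.thb (mono3 (C.itA k) (C.itB k) js sa sb sj) (allZero K))
      + C.pb (basis k) * (Fs C.thb (C.killSpec k C.Dset) (basis k)
        * Fs C.thb (mono3 (C.itA k) (C.itB k) js sa sb sj) (basis k)) := by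
  have hdisj := kill_mono_disj C k C.Dset (C.itA k) (C.itB k) js sa sb sj
    (killSpec_itA_m C k _) (killSpec_itB_m C k _ (fun h => by rw [hD0] at h; simp at h))
    (killSpec_hi C k _ js hjs)
  have hid := C.sumFs (mg (C.killSpec k C.Dset) (mono3 (C.itA k) (C.itB k) js sa sb sj))
  rw [sum_reduce_two C.th C.p _ _ (allZero K) (basis k) (Ne.symm (basis_ne_zero k)) ?hv hdisj]
    at hid
  case hv =>
    intro α h0 hb
    obtain ⟨j, hj, hα⟩ := exists_true_ne k α h0 hb
    exact theta_kill C k _ α j hj hα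
  rw [sum_reduce_two C.thb C.pb _ _ (allZero K) (basis k) (Ne.symm (basis_ne_zero k)) ?hvb hdisj]
    at hid
  case hvb =>
    intro α h0 hb
    obtain ⟨j, hj, hα⟩ := exists_true_ne k α h0 hb
    exact bar_kill_empty C k hD0 _ α j hj hα
  exact hid

/-- the all-kill spec used for identifying the bottom values -/
def Ctx.zSpec : Fin J → Option ℝ :=
  C.spec2 (fun j => some (C.th (C.itA j) (allOne K)))
    (fun j => some (C.thb (C.itB j) (allOne K)))

lemma zSpec_itA (j : Fin K) :
    C.zSpec (C.itA j) = some (C.th (C.itA j) (allOne K)) := C.spec2_itA _ _ j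

lemma zSpec_itB (j : Fin K) :
    C.zSpec (C.itB j) = some (C.thb (C.itB j) (allOne K)) := C.spec2_itB _ _ j

lemma zSpec_hi (i : Fin J) (hi : 2 * K ≤ (i : ℕ)) : C.zSpec i = none := C.spec2_hi _ _ i hi

lemma zSpec_kill_th (α : Fin K → Bool) (j : Fin K) (hα : α j = true) :
    Fs C.th C.zSpec α = 0 := by
  refine Fs_eq_zero (C.itA j) ?_
  rw [fac_some (zSpec_itA C j), C.top_eq C.hR1 (C.QA j) hα, sub_self]

lemma zSpec_kill_thb (α : Fin K → Bool) (j : Fin K) (hα : α j = true) :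
    Fs C.thb C.zSpec α = 0 := by
  refine Fs_eq_zero (C.itB j) ?_
  rw [fac_some (zSpec_itB C j), C.top_eq C.hR1b (C.QB j) hα, sub_self]

lemma zSpec_res_th (i : Fin J) : fac C.th C.zSpec (allZero K) i ≠ 0 := by
  rcases C.item_cases i with ⟨j, rfl⟩ | ⟨j, rfl⟩ | hi
  · rw [fac_some (zSpec_itA C j)]
    exact sub_ne_zero.2 (ne_of_lt (C.lt_top C.hR2 (C.QA j) rfl))
  · rw [fac_some (zSpec_itB C j)]
    exact sub_ne_zero.2 (ne_of_lt (C.cross_lt (C.QB j)).1)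
  · rw [fac_none (zSpec_hi C i hi)]; norm_num

lemma zSpec_res_thb (i : Fin J) : fac C.thb C.zSpec (allZero K) i ≠ 0 := by
  rcases C.item_cases i with ⟨j, rfl⟩ | ⟨j, rfl⟩ | hi
  · rw [fac_some (zSpec_itA C j)]
    exact sub_ne_zero.2 (ne_of_lt (C.cross_lt (C.QA j)).2)
  · rw [fac_some (zSpec_itB C j)]
    exact sub_ne_zero.2 (ne_of_lt (C.lt_top C.hR2b (C.QB j) rfl))
  · rw [fac_none (zSpec_hi C i hi)]; norm_num

lemma exists_true (α : Fin K → Bool) (h0 : α ≠ allZero K) : ∃ j, α j = true := by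
  by_contra h
  push_neg at h
  exact h0 (funext fun j => by simpa [allZero] using h j)

/-- Step 0: bottom values of the high items agree across the two models. -/
lemma bottom_eq (js : Fin J) (hjs : 2 * K ≤ (js : ℕ)) :
    C.th js (allZero K) = C.thb js (allZero K) := by
  have hz : C.zSpec js = none := zSpec_hi C js hjs
  have hdisj : ∀ sj : Bool, ∀ i,
      C.zSpec i = none ∨ mono3 js js js sj false false i = none := by
    intro sj i
    by_cases e : i = js
    · left; rw [e]; exact hz
    · right; exact mono3_none js js js sj false false i e e e
  have hid : ∀ sj : Bool,
      C.p (allZero K) * (Fs C.th C.zSpec (allZero K)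
          * Fs C.th (mono3 js js js sj false false) (allZero K))
        = C.pb (allZero K) * (Fs C.thb C.zSpec (allZero K)
          * Fs C.thb (mono3 js js js sj false false) (allZero K)) := by
    intro sj
    have hid := C.sumFs (mg C.zSpec (mono3 js js js sj false false))
    rw [sum_reduce_one C.th C.p _ _ (allZero K) ?hv (hdisj sj)] at hid
    case hv =>
      intro α h0
      obtain ⟨j, hα⟩ := exists_true α h0
      exact zSpec_kill_th C α j hα
    rw [sum_reduce_one C.thb C.pb _ _ (allZero K) ?hvb (hdisj sj)] at hid
    case hvb =>
      intro α h0
      obtain ⟨j, hα⟩ := exists_true α h0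
      exact zSpec_kill_thb C α j hα
    exact hid
  have hmono : ∀ (θ' : Fin J → (Fin K → Bool) → ℝ) (sj : Bool) (α : Fin K → Bool),
      Fs θ' (mono3 js js js sj false false) α = (if sj then θ' js α else 1) := by
    intro θ' sj α
    rw [Fs_mono3 θ' js js js sj false false (by simp) (by simp) (by simp) α]
    simp
  have h0 := hid false
  have h1 := hid true
  rw [hmono, hmono] at h0 h1
  simp only [Bool.false_eq_true, if_false, if_true, mul_one] at h0 h1
  have hW : C.p (allZero K) * Fs C.th C.zSpec (allZero K) ≠ 0 :=
    mul_ne_zero (ne_of_gt (C.p_pos _)) (Fs_ne_zero (zSpec_res_th C))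
  -- from h0 : w = w'; h1 : w * th = w' * thb
  have hw : C.p (allZero K) * Fs C.th C.zSpec (allZero K)
      = C.pb (allZero K) * Fs C.thb C.zSpec (allZero K) := h0
  have : C.p (allZero K) * Fs C.th C.zSpec (allZero K) * C.th js (allZero K)
      = C.p (allZero K) * Fs C.th C.zSpec (allZero K) * C.thb js (allZero K) := by
    calc C.p (allZero K) * Fs C.th C.zSpec (allZero K) * C.th js (allZero K)
        = C.p (allZero K) * (Fs C.th C.zSpec (allZero K) * C.th js (allZero K)) := by ring
      _ = C.pb (allZero K) * (Fs C.thb C.zSpec (allZero K) * C.thb js (allZero K)) := h1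
      _ = C.pb (allZero K) * Fs C.thb C.zSpec (allZero K) * C.thb js (allZero K) := by ring
      _ = C.p (allZero K) * Fs C.th C.zSpec (allZero K) * C.thb js (allZero K) := by rw [hw]
  exact mul_left_cancel₀ hW this

end
end Step2


namespace Step2
open Classical
open scoped Classical
open Finset
noncomputable section
variable {J K : ℕ} (C : Ctx J K)

/-- the master equation at an induction node `A` for target `m ∈ Dset`,
with a general second monomial item `i2`. -/
lemma nodeEq' (m : Fin K) (hm : m ∈ C.Dset) (A : Finset (Fin K))
    (i2 : Fin J) (h2 : C.killSpec m A i2 = none) (sa sj : Bool) :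
    C.p (allZero K) * (Fs C.th (C.killSpec m A) (allZero K)
        * Fs C.th (mono3 (C.itA m) i2 i2 sa sj false) (allZero K))
      + C.p (basis m) * (Fs C.th (C.killSpec m A) (basis m)
        * Fs C.th (mono3 (C.itA m) i2 i2 sa sj false) (basis m))
    = ∑ B ∈ A.powerset, C.pb (atomOf B) * (Fs C.thb (C.killSpec m A) (atomOf B)
        * Fs C.thb (mono3 (C.itA m) i2 i2 sa sj false) (atomOf B)) := by
  have hdisj := kill_mono_disj C m A (C.itA m) i2 i2 sa sj false
    (killSpec_itA_m C m A) h2 h2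
  have hid := C.sumFs (mg (C.killSpec m A) (mono3 (C.itA m) i2 i2 sa sj false))
  rw [sum_reduce_two C.th C.p _ _ (allZero K) (basis m) (Ne.symm (basis_ne_zero m)) ?hv hdisj]
    at hid
  case hv =>
    intro α h0 hb
    obtain ⟨j, hj, hα⟩ := exists_true_ne m α h0 hb
    exact theta_kill C m A α j hj hα
  rw [sum_reduce_powerset C.thb C.pb _ _ A ?hvb hdisj] at hid
  case hvb =>
    intro α hα
    push_neg at hα
    obtain ⟨j, hj1, hj2⟩ := hα
    exact bar_kill C m hm A α j hj2 hj1
  exact hid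

lemma basis_self (m : Fin K) : basis m m = true := by simp [basis]

/-- The key structure theorem: `Dset` must be empty. -/
theorem Dset_empty : C.Dset = ∅ := by
  by_contra hne
  obtain ⟨m, hm⟩ := Finset.nonempty_of_ne_empty hne
  obtain ⟨j', hj'1, hj'2⟩ := C.hC2 m
  have hitAj' : C.itA m ≠ j' := by
    intro h
    have h2 := congrArg (fun i : Fin J => (i : ℕ)) h
    simp only [itA_val] at h2
    have := m.isLt
    omega
  have hAtop : C.th (C.itA m) (basis m) = C.th (C.itA m) (allOne K) :=
    C.top_eq C.hR1 (C.QA m) (basis_self m)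
  have hu01a : C.th (C.itA m) (allZero K) ≠ C.th (C.itA m) (basis m) := by
    rw [hAtop]
    exact ne_of_lt (C.lt_top C.hR2 (C.QA m) rfl)
  have hu01j : C.th j' (allZero K) ≠ C.th j' (basis m) := fun h => hj'2 h.symm
  have hmono : ∀ (θ' : Fin J → (Fin K → Bool) → ℝ) (sa sj : Bool) (α : Fin K → Bool),
      Fs θ' (mono3 (C.itA m) j' j' sa sj false) α
        = (if sa then θ' (C.itA m) α else 1) * (if sj then θ' j' α else 1) := by
    intro θ' sa sj α
    rw [Fs_mono3 θ' (C.itA m) j' j' sa sj false (fun _ _ => hitAj') (fun _ _ => hitAj')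
      (fun _ h => absurd h (by simp)) α]
    simp
  have hj'none : ∀ A : Finset (Fin K), C.killSpec m A j' = none :=
    fun A => killSpec_hi C m A j' hj'1
  -- the inductive typing claim
  have claim : ∀ A : Finset (Fin K), A ⊆ C.Dset →
      C.pb (atomOf A) * Fs C.thb (C.killSpec m C.Dset) (atomOf A) ≠ 0 →
      (C.thb (C.itA m) (atomOf A) = C.th (C.itA m) (allZero K)
          ∧ C.thb j' (atomOf A) = C.th j' (allZero K))
        ∨ (C.thb (C.itA m) (atomOf A) = C.th (C.itA m) (basis m)
          ∧ C.thb j' (atomOf A) = C.th j' (basis m)) := by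
    intro A
    induction A using Finset.strongInduction with
    | _ A IH =>
      intro hA hWA
      have hsplitSpec := killSpec_split C m A
      have hdisjKP := kill_psi_disj C m A
      have hcW : ∀ B : Finset (Fin K),
          C.pb (atomOf B) * Fs C.thb (C.killSpec m A) (atomOf B)
            = (C.pb (atomOf B) * Fs C.thb (C.killSpec m C.Dset) (atomOf B))
              * Fs C.thb (C.psiSpec m A) (atomOf B) := by
        intro B
        rw [hsplitSpec, Fs_mg _ _ _ hdisjKP]
        ring
      have hpsi : ∀ B : Finset (Fin K), B ⊆ A →
          Fs C.thb (C.psiSpec m A) (atomOf B) ≠ 0 :=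
        fun B hBA => Fs_ne_zero (fun i => psi_res C m A B hBA i)
      have hcA : C.pb (atomOf A) * Fs C.thb (C.killSpec m A) (atomOf A) ≠ 0 := by
        rw [hcW A]
        exact mul_ne_zero hWA (hpsi A (le_refl A))
      -- pointwise rewriting of proper subset terms
      have hpoint : ∀ sa sj : Bool, ∀ B ∈ A.powerset.erase A,
          C.pb (atomOf B) * (Fs C.thb (C.killSpec m A) (atomOf B)
            * ((if sa then C.thb (C.itA m) (atomOf B) else 1)
              * (if sj then C.thb j' (atomOf B) else 1)))
          = (if (C.thb (C.itA m) (atomOf B) = C.th (C.itA m) (allZero K)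
                ∧ C.thb j' (atomOf B) = C.th j' (allZero K))
              then C.pb (atomOf B) * Fs C.thb (C.killSpec m A) (atomOf B) else 0)
              * ((if sa then C.th (C.itA m) (allZero K) else 1)
                * (if sj then C.th j' (allZero K) else 1))
            + (C.pb (atomOf B) * Fs C.thb (C.killSpec m A) (atomOf B)
                - (if (C.thb (C.itA m) (atomOf B) = C.th (C.itA m) (allZero K)
                    ∧ C.thb j' (atomOf B) = C.th j' (allZero K))
                  then C.pb (atomOf B) * Fs C.thb (C.killSpec m A) (atomOf B) else 0))
              * ((if sa then C.th (C.itA m) (basis m) else 1)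
                * (if sj then C.th j' (basis m) else 1)) := by
        intro sa sj B hB
        rw [Finset.mem_erase, Finset.mem_powerset] at hB
        obtain ⟨hBne, hBA⟩ := hB
        by_cases h0 : (C.thb (C.itA m) (atomOf B) = C.th (C.itA m) (allZero K)
            ∧ C.thb j' (atomOf B) = C.th j' (allZero K))
        · rw [if_pos h0, ← h0.1, ← h0.2]
          ring
        · rw [if_neg h0]
          by_cases hz : C.pb (atomOf B) * Fs C.thb (C.killSpec m A) (atomOf B) = 0
          · rw [hz]
            have hz2 : C.pb (atomOf B) * (Fs C.thb (C.killSpec m A) (atomOf B)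
                * ((if sa then C.thb (C.itA m) (atomOf B) else 1)
                  * (if sj then C.thb j' (atomOf B) else 1)))
                = (C.pb (atomOf B) * Fs C.thb (C.killSpec m A) (atomOf B))
                  * ((if sa then C.thb (C.itA m) (atomOf B) else 1)
                    * (if sj then C.thb j' (atomOf B) else 1)) := by ring
            rw [hz2, hz]
            ring
          · have hWB : C.pb (atomOf B) * Fs C.thb (C.killSpec m C.Dset) (atomOf B) ≠ 0 := by
              intro hc
              apply hz
              rw [hcW B, hc]
              ring
            rcases IH B (Finset.ssubset_iff_subset_ne.2 ⟨hBA, hBne⟩)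
              (hBA.trans hA) hWB with h | h
            · exact absurd h h0
            · rw [← h.1, ← h.2]
              ring
      -- the master equations at node A
      have hEq : ∀ sa sj : Bool,
          (C.pb (atomOf A) * Fs C.thb (C.killSpec m A) (atomOf A))
            * ((if sa then C.thb (C.itA m) (atomOf A) else 1)
              * (if sj then C.thb j' (atomOf A) else 1))
          = (C.p (allZero K) * Fs C.th (C.killSpec m A) (allZero K)
              - ∑ B ∈ A.powerset.erase A,
                  (if (C.thb (C.itA m) (atomOf B) = C.th (C.itA m) (allZero K)
                      ∧ C.thb j' (atomOf B) = C.th j' (allZero K))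
                    then C.pb (atomOf B) * Fs C.thb (C.killSpec m A) (atomOf B) else 0))
              * ((if sa then C.th (C.itA m) (allZero K) else 1)
                * (if sj then C.th j' (allZero K) else 1))
            + (C.p (basis m) * Fs C.th (C.killSpec m A) (basis m)
              - ∑ B ∈ A.powerset.erase A,
                  (C.pb (atomOf B) * Fs C.thb (C.killSpec m A) (atomOf B)
                    - (if (C.thb (C.itA m) (atomOf B) = C.th (C.itA m) (allZero K)
                        ∧ C.thb j' (atomOf B) = C.th j' (allZero K))
                      then C.pb (atomOf B) * Fs C.thb (C.killSpec m A) (atomOf B) else 0)))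
              * ((if sa then C.th (C.itA m) (basis m) else 1)
                * (if sj then C.th j' (basis m) else 1)) := by
        intro sa sj
        have hnode := nodeEq' C m hm A j' (hj'none A) sa sj
        simp only [hmono] at hnode
        rw [(Finset.add_sum_erase _ _ (Finset.mem_powerset_self A)).symm] at hnode
        rw [Finset.sum_congr rfl (fun B hB => hpoint sa sj B hB)] at hnode
        rw [Finset.sum_add_distrib, ← Finset.sum_mul, ← Finset.sum_mul] at hnode
        linear_combination -hnode
      have eff := hEq false false
      have etf := hEq true false
      have eft := hEq false true
      have ett := hEq true true
      simp only [Bool.false_eq_true, if_false, if_true, mul_one, one_mul] at eff etf eft ett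
      set a := C.pb (atomOf A) * Fs C.thb (C.killSpec m A) (atomOf A) with ha
      set xa := C.thb (C.itA m) (atomOf A) with hxa
      set xj := C.thb j' (atomOf A) with hxj
      set s0a := C.th (C.itA m) (allZero K) with hs0a
      set s1a := C.th (C.itA m) (basis m) with hs1a
      set s0j := C.th j' (allZero K) with hs0j
      set s1j := C.th j' (basis m) with hs1j
      set E0 := C.p (allZero K) * Fs C.th (C.killSpec m A) (allZero K)
          - ∑ B ∈ A.powerset.erase A,
              (if (C.thb (C.itA m) (atomOf B) = s0a ∧ C.thb j' (atomOf B) = s0j)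
                then C.pb (atomOf B) * Fs C.thb (C.killSpec m A) (atomOf B) else 0) with hE0
      set E1 := C.p (basis m) * Fs C.th (C.killSpec m A) (basis m)
          - ∑ B ∈ A.powerset.erase A,
              (C.pb (atomOf B) * Fs C.thb (C.killSpec m A) (atomOf B)
                - (if (C.thb (C.itA m) (atomOf B) = s0a ∧ C.thb j' (atomOf B) = s0j)
                  then C.pb (atomOf B) * Fs C.thb (C.killSpec m A) (atomOf B) else 0)) with hE1
      have hPQ : (E0 * s0a + E1 * s1a) * (E0 * s0j + E1 * s1j)
          = (E0 + E1) * (E0 * (s0a * s0j) + E1 * (s1a * s1j)) := by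
        rw [← etf, ← eft, ← eff, ← ett]
        ring
      have hkey : E0 * E1 * (s0a - s1a) * (s0j - s1j) = 0 := by linear_combination -hPQ
      have hfac : E0 * E1 = 0 := by
        rcases mul_eq_zero.1 hkey with h | h
        · rcases mul_eq_zero.1 h with h | h
          · exact h
          · exact absurd (sub_eq_zero.1 h) hu01a
        · exact absurd (sub_eq_zero.1 h) hu01j
      rcases mul_eq_zero.1 hfac with h | h
      · right
        have ha' : a = E1 := by rw [eff, h]; ring
        constructor
        · exact mul_left_cancel₀ hcA (show a * xa = a * s1a by
            linear_combination etf - s1a * ha' + s0a * h)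
        · exact mul_left_cancel₀ hcA (show a * xj = a * s1j by
            linear_combination eft - s1j * ha' + s0j * h)
      · left
        have ha' : a = E0 := by rw [eff, h]; ring
        constructor
        · exact mul_left_cancel₀ hcA (show a * xa = a * s0a by
            linear_combination etf - s0a * ha' + s1a * h)
        · exact mul_left_cancel₀ hcA (show a * xj = a * s0j by
            linear_combination eft - s0j * ha' + s1j * h)
  -- the bar side is flat in the `itA m` coordinate
  have hflat : ∀ B : Finset (Fin K), B ⊆ C.Dset →
      C.pb (atomOf B) * Fs C.thb (C.killSpec m C.Dset) (atomOf B) ≠ 0 →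
      C.thb (C.itA m) (atomOf B) = C.th (C.itA m) (allZero K) := by
    intro B hB hWB
    rcases claim B hB hWB with h | h
    · exact h.1
    · exfalso
      have hle : C.thb (C.itA m) (atomOf B) ≤ C.thb (C.itA m) (allOne K) :=
        C.le_top C.hR1b _ _
      have hlt : C.thb (C.itA m) (allOne K) < C.th (C.itA m) (allOne K) :=
        ((C.Dset_mem).1 hm).1
      have h1 : C.th (C.itA m) (allOne K) ≤ C.thb (C.itA m) (allOne K) := by
        rw [← hAtop, ← h.1]
        exact hle
      linarith
  -- the two final equations give a contradiction
  have hnf := nodeEq' C m hm C.Dset j' (hj'none C.Dset) false false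
  have hnt := nodeEq' C m hm C.Dset j' (hj'none C.Dset) true false
  simp only [hmono] at hnf hnt
  simp only [Bool.false_eq_true, if_false, if_true, mul_one, one_mul] at hnf hnt
  have hrw : ∑ B ∈ C.Dset.powerset,
      C.pb (atomOf B) * (Fs C.thb (C.killSpec m C.Dset) (atomOf B)
        * C.thb (C.itA m) (atomOf B))
      = (∑ B ∈ C.Dset.powerset,
          C.pb (atomOf B) * Fs C.thb (C.killSpec m C.Dset) (atomOf B))
        * C.th (C.itA m) (allZero K) := by
    rw [Finset.sum_mul]
    refine Finset.sum_congr rfl (fun B hB => ?_)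
    rw [Finset.mem_powerset] at hB
    by_cases hz : C.pb (atomOf B) * Fs C.thb (C.killSpec m C.Dset) (atomOf B) = 0
    · rw [← mul_assoc, hz, zero_mul, zero_mul]
    · rw [hflat B hB hz]
      ring
  rw [hrw, ← hnf] at hnt
  have hK1 : Fs C.th (C.killSpec m C.Dset) (basis m) ≠ 0 :=
    Fs_ne_zero (fun i => theta_res C m (basis m) (Or.inr rfl) i)
  have hzero : C.p (basis m) * Fs C.th (C.killSpec m C.Dset) (basis m)
      * (C.th (C.itA m) (basis m) - C.th (C.itA m) (allZero K)) = 0 := by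
    linear_combination hnt
  have hnz : C.p (basis m) * Fs C.th (C.killSpec m C.Dset) (basis m)
      * (C.th (C.itA m) (basis m) - C.th (C.itA m) (allZero K)) ≠ 0 :=
    mul_ne_zero (mul_ne_zero (ne_of_gt (C.p_pos _)) hK1)
      (sub_ne_zero.2 (Ne.symm hu01a))
  exact hnz hzero

end
end Step2


namespace Step2
open Classical
open scoped Classical
open Finset
noncomputable section
variable {J K : ℕ}

theorem basis_val_eq (C : Ctx J K) (js : Fin J) (hjs : 2 * K ≤ (js : ℕ)) (k : Fin K) :
    C.th js (basis k) = C.thb js (basis k) := by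
  have hD0 := Dset_empty C
  have hAB : C.itA k ≠ C.itB k := by
    intro h
    have h2 := congrArg (fun i : Fin J => (i : ℕ)) h
    simp only [itA_val, itB_val] at h2
    have := k.isLt
    omega
  have hAj : C.itA k ≠ js := by
    intro h
    have h2 := congrArg (fun i : Fin J => (i : ℕ)) h
    simp only [itA_val] at h2
    have := k.isLt
    omega
  have hBj : C.itB k ≠ js := by
    intro h
    have h2 := congrArg (fun i : Fin J => (i : ℕ)) h
    simp only [itB_val] at h2
    have := k.isLt
    omega
  have hmono : ∀ (θ' : Fin J → (Fin K → Bool) → ℝ) (sa sb sj : Bool) (α : Fin K → Bool),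
      Fs θ' (mono3 (C.itA k) (C.itB k) js sa sb sj) α
        = (if sa then θ' (C.itA k) α else 1) * ((if sb then θ' (C.itB k) α else 1)
            * (if sj then θ' js α else 1)) :=
    fun θ' sa sb sj α => Fs_mono3 θ' (C.itA k) (C.itB k) js sa sb sj
      (fun _ _ => hAB) (fun _ _ => hAj) (fun _ _ => hBj) α
  have hEq : ∀ sa sb sj : Bool,
      C.p (allZero K) * (Fs C.th (C.killSpec k C.Dset) (allZero K)
          * ((if sa then C.th (C.itA k) (allZero K) else 1)
            * ((if sb then C.th (C.itB k) (allZero K) else 1)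
              * (if sj then C.th js (allZero K) else 1))))
        + C.p (basis k) * (Fs C.th (C.killSpec k C.Dset) (basis k)
          * ((if sa then C.th (C.itA k) (basis k) else 1)
            * ((if sb then C.th (C.itB k) (basis k) else 1)
              * (if sj then C.th js (basis k) else 1))))
      = C.pb (allZero K) * (Fs C.thb (C.killSpec k C.Dset) (allZero K)
          * ((if sa then C.thb (C.itA k) (allZero K) else 1)
            * ((if sb then C.thb (C.itB k) (allZero K) else 1)
              * (if sj then C.thb js (allZero K) else 1))))
        + C.pb (basis k) * (Fs C.thb (C.killSpec k C.Dset) (basis k)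
          * ((if sa then C.thb (C.itA k) (basis k) else 1)
            * ((if sb then C.thb (C.itB k) (basis k) else 1)
              * (if sj then C.thb js (basis k) else 1)))) := by
    intro sa sb sj
    have h := endEq C k hD0 js hjs sa sb sj
    simp only [hmono] at h
    exact h
  have hfff := hEq false false false
  have htff := hEq true false false
  have hftf := hEq false true false
  have hfft := hEq false false true
  have httf := hEq true true false
  have htft := hEq true false true
  have hftt := hEq false true true
  have httt := hEq true true true
  simp only [Bool.false_eq_true, if_false, if_true, mul_one, one_mul]
    at hfff htff hftf hfft httf htft hftt httt
  -- nonvanishing facts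
  have hW0 : (C.p (allZero K) * Fs C.th (C.killSpec k C.Dset) (allZero K)) ≠ 0 :=
    mul_ne_zero (ne_of_gt (C.p_pos _))
      (Fs_ne_zero (fun i => theta_res C k (allZero K) (Or.inl rfl) i))
  have hW1 : (C.p (basis k) * Fs C.th (C.killSpec k C.Dset) (basis k)) ≠ 0 :=
    mul_ne_zero (ne_of_gt (C.p_pos _))
      (Fs_ne_zero (fun i => theta_res C k (basis k) (Or.inr rfl) i))
  have hAtopEq : C.th (C.itA k) (basis k) = C.th (C.itA k) (allOne K) :=
    C.top_eq C.hR1 (C.QA k) (basis_self k)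
  have hBtopEq : C.th (C.itB k) (basis k) = C.th (C.itB k) (allOne K) :=
    C.top_eq C.hR1 (C.QB k) (basis_self k)
  have ha10 : (C.th (C.itA k) (basis k)) - (C.th (C.itA k) (allZero K)) ≠ 0 := by
    rw [hAtopEq]
    exact sub_ne_zero.2 (ne_of_gt (C.lt_top C.hR2 (C.QA k) rfl))
  have hb10 : (C.th (C.itB k) (basis k)) - (C.th (C.itB k) (allZero K)) ≠ 0 := by
    rw [hBtopEq]
    exact sub_ne_zero.2 (ne_of_gt (C.lt_top C.hR2 (C.QB k) rfl))
  have hD : (C.p (allZero K) * Fs C.th (C.killSpec k C.Dset) (allZero K)) * (C.p (basis k) * Fs C.th (C.killSpec k C.Dset) (basis k)) * ((C.th (C.itA k) (basis k)) - (C.th (C.itA k) (allZero K))) * ((C.th (C.itB k) (basis k)) - (C.th (C.itB k) (allZero K))) ≠ 0 :=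
    mul_ne_zero (mul_ne_zero (mul_ne_zero hW0 hW1) ha10) hb10
  -- determinant identity
  have hDet : (C.p (allZero K) * Fs C.th (C.killSpec k C.Dset) (allZero K)) * (C.p (basis k) * Fs C.th (C.killSpec k C.Dset) (basis k)) * ((C.th (C.itA k) (basis k)) - (C.th (C.itA k) (allZero K))) * ((C.th (C.itB k) (basis k)) - (C.th (C.itB k) (allZero K)))
      = (C.pb (allZero K) * Fs C.thb (C.killSpec k C.Dset) (allZero K)) * (C.pb (basis k) * Fs C.thb (C.killSpec k C.Dset) (basis k)) * ((C.thb (C.itA k) (basis k)) - (C.thb (C.itA k) (allZero K))) * ((C.thb (C.itB k) (basis k)) - (C.thb (C.itB k) (allZero K))) := by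
    linear_combination ((C.pb (allZero K) * Fs C.thb (C.killSpec k C.Dset) (allZero K)) + (C.pb (basis k) * Fs C.thb (C.killSpec k C.Dset) (basis k))) * httf + ((C.p (allZero K) * Fs C.th (C.killSpec k C.Dset) (allZero K))*(C.th (C.itA k) (allZero K))*(C.th (C.itB k) (allZero K)) + (C.p (basis k) * Fs C.th (C.killSpec k C.Dset) (basis k))*(C.th (C.itA k) (basis k))*(C.th (C.itB k) (basis k))) * hfff - ((C.pb (allZero K) * Fs C.thb (C.killSpec k C.Dset) (allZero K))*(C.thb (C.itB k) (allZero K)) + (C.pb (basis k) * Fs C.thb (C.killSpec k C.Dset) (basis k))*(C.thb (C.itB k) (basis k))) * htff - ((C.p (allZero K) * Fs C.th (C.killSpec k C.Dset) (allZero K))*(C.th (C.itA k) (allZero K)) + (C.p (basis k) * Fs C.th (C.killSpec k C.Dset) (basis k))*(C.th (C.itA k) (basis k))) * hftf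
  -- trace identity
  have hTr : (C.p (allZero K) * Fs C.th (C.killSpec k C.Dset) (allZero K)) * (C.p (basis k) * Fs C.th (C.killSpec k C.Dset) (basis k)) * ((C.th (C.itA k) (basis k)) - (C.th (C.itA k) (allZero K))) * ((C.th (C.itB k) (basis k)) - (C.th (C.itB k) (allZero K))) * ((C.th js (allZero K)) + (C.th js (basis k)))
      = (C.pb (allZero K) * Fs C.thb (C.killSpec k C.Dset) (allZero K)) * (C.pb (basis k) * Fs C.thb (C.killSpec k C.Dset) (basis k)) * ((C.thb (C.itA k) (basis k)) - (C.thb (C.itA k) (allZero K))) * ((C.thb (C.itB k) (basis k)) - (C.thb (C.itB k) (allZero K))) * ((C.thb js (allZero K)) + (C.thb js (basis k))) := by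
    linear_combination ((C.pb (allZero K) * Fs C.thb (C.killSpec k C.Dset) (allZero K))*(C.thb js (allZero K)) + (C.pb (basis k) * Fs C.thb (C.killSpec k C.Dset) (basis k))*(C.thb js (basis k))) * httf + ((C.p (allZero K) * Fs C.th (C.killSpec k C.Dset) (allZero K))*(C.th (C.itA k) (allZero K))*(C.th (C.itB k) (allZero K)) + (C.p (basis k) * Fs C.th (C.killSpec k C.Dset) (basis k))*(C.th (C.itA k) (basis k))*(C.th (C.itB k) (basis k))) * hfft + ((C.pb (allZero K) * Fs C.thb (C.killSpec k C.Dset) (allZero K))*(C.thb (C.itA k) (allZero K))*(C.thb (C.itB k) (allZero K))*(C.thb js (allZero K)) + (C.pb (basis k) * Fs C.thb (C.killSpec k C.Dset) (basis k))*(C.thb (C.itA k) (basis k))*(C.thb (C.itB k) (basis k))*(C.thb js (basis k))) * hfff + ((C.p (allZero K) * Fs C.th (C.killSpec k C.Dset) (allZero K)) + (C.p (basis k) * Fs C.th (C.killSpec k C.Dset) (basis k))) * httt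
      - ((C.pb (allZero K) * Fs C.thb (C.killSpec k C.Dset) (allZero K))*(C.thb (C.itB k) (allZero K))*(C.thb js (allZero K)) + (C.pb (basis k) * Fs C.thb (C.killSpec k C.Dset) (basis k))*(C.thb (C.itB k) (basis k))*(C.thb js (basis k))) * htff - ((C.p (allZero K) * Fs C.th (C.killSpec k C.Dset) (allZero K))*(C.th (C.itA k) (allZero K)) + (C.p (basis k) * Fs C.th (C.killSpec k C.Dset) (basis k))*(C.th (C.itA k) (basis k))) * hftt - ((C.pb (allZero K) * Fs C.thb (C.killSpec k C.Dset) (allZero K))*(C.thb (C.itA k) (allZero K))*(C.thb js (allZero K)) + (C.pb (basis k) * Fs C.thb (C.killSpec k C.Dset) (basis k))*(C.thb (C.itA k) (basis k))*(C.thb js (basis k))) * hftf - ((C.p (allZero K) * Fs C.th (C.killSpec k C.Dset) (allZero K))*(C.th (C.itB k) (allZero K)) + (C.p (basis k) * Fs C.th (C.killSpec k C.Dset) (basis k))*(C.th (C.itB k) (basis k))) * htft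
  rw [← hDet] at hTr
  have hsum := mul_left_cancel₀ hD hTr
  have hbot : C.th js (allZero K) = C.thb js (allZero K) := bottom_eq C js hjs
  linarith [hsum, hbot]

end
end Step2


/-- **Step 2.** Under the standing hypotheses, `θ_{j,e_k} = θ̄_{j,e_k}` for every
item `j > 2K` and every `k`. -/
theorem step2_theta_basis_eq
    {J K : ℕ} (hJ : 2 * K ≤ J) (Q : Fin J → Fin K → Bool)
    (θ θb : Fin J → (Fin K → Bool) → ℝ) (p pb : (Fin K → Bool) → ℝ)
    (hθ : ThetaValid θ) (hθb : ThetaValid θb) (hp : PValid p) (hpb : PValid pb)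
    (hR1 : R1 Q θ) (hR1b : R1 Q θb) (hR2 : R2 Q θ) (hR2b : R2 Q θb)
    (hC1 : C1 Q) (hC2 : C2 θ)
    (hT : ∀ r : Fin J → Bool, Tp θ p r = Tp θb pb r) :
    ∀ j : Fin J, 2 * K ≤ (j : ℕ) → ∀ k : Fin K,
      θ j (basis k) = θb j (basis k) := by
  intro j hj k
  exact Step2.basis_val_eq
    ⟨hJ, Q, θ, θb, p, pb, hθ, hθb, hp, hpb, hR1, hR1b, hR2, hR2b, hC1, hC2, hT⟩ j hj k
end
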